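/- arXiv:2511.06931 — 10 statements merged into one kernel-verified Lean document; each statement's English description precedes it below -/
import Mathlib

section
/- If g : [0,∞) → ℝ is a C² solution of g'' + (1/r) g' - α² g - (1/2)(f² + g² - 1) g = 0 on (0,∞) with g'(0) = 0 and g(r) → 0 as r → ∞, where α ≥ 1/√2 and f : [0,∞) → ℝ is any function, then g ≡ 0. -/
open Filter Set Topology

/-- Maximum-principle style auxiliary lemma: if `g` is continuous on `[0,∞)`,
differentiable on `(0,∞)` with continuous derivative `g1`, the function
`x * g1 x` has derivative `r * (c r * g r)` where `c r > 0` whenever `g r ≠ 0`,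
and `g → 0` at infinity, then `g ≤ 0` on `(0,∞)`. -/
lemma aux_main (g g1 c : ℝ → ℝ)
    (hgc : ContinuousOn g (Ici 0))
    (hg1 : ∀ r ∈ Ioi (0:ℝ), HasDerivAt g (g1 r) r)
    (hg1c : ContinuousOn g1 (Ioi 0))
    (hphi : ∀ r ∈ Ioi (0:ℝ), HasDerivAt (fun x => x * g1 x) (r * (c r * g r)) r)
    (hc : ∀ r ∈ Ioi (0:ℝ), g r ≠ 0 → 0 < c r)
    (hlim : Tendsto g atTop (nhds 0)) :
    ∀ r ∈ Ioi (0:ℝ), g r ≤ 0 := by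
  have hgat : ∀ r : ℝ, 0 < r → ContinuousAt g r := fun r hr =>
    hgc.continuousAt (Ici_mem_nhds hr)
  have hg1at : ∀ r : ℝ, 0 < r → ContinuousAt g1 r := fun r hr =>
    hg1c.continuousAt (isOpen_Ioi.mem_nhds hr)
  -- φ = x * g1 x is strictly monotone on intervals where g > 0
  have phimono : ∀ a b : ℝ, 0 < a → (∀ x ∈ Icc a b, 0 < g x) →
      StrictMonoOn (fun x => x * g1 x) (Icc a b) := by
    intro a b ha hgab
    apply strictMonoOn_of_deriv_pos (convex_Icc a b)
    · intro x hx
      have hx0 : 0 < x := lt_of_lt_of_le ha hx.1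
      exact ((hphi x hx0).continuousAt).continuousWithinAt
    · intro x hx
      rw [interior_Icc] at hx
      have hx0 : 0 < x := lt_of_lt_of_le ha hx.1.le
      have hgx : 0 < g x := hgab x ⟨hx.1.le, hx.2.le⟩
      rw [(hphi x hx0).deriv]
      exact mul_pos hx0 (mul_pos (hc x hx0 hgx.ne') hgx)
  have gmono : ∀ a b : ℝ, 0 < a → (∀ x ∈ Ioo a b, 0 < g1 x) →
      StrictMonoOn g (Icc a b) := by
    intro a b ha h1
    apply strictMonoOn_of_deriv_pos (convex_Icc a b)
    · intro x hx
      exact (hgat x (lt_of_lt_of_le ha hx.1)).continuousWithinAt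
    · intro x hx
      rw [interior_Icc] at hx
      have hx0 : 0 < x := lt_of_lt_of_le ha hx.1.le
      rw [(hg1 x hx0).deriv]
      exact h1 x hx
  have ganti : ∀ a b : ℝ, 0 < a → (∀ x ∈ Ioo a b, g1 x < 0) →
      StrictAntiOn g (Icc a b) := by
    intro a b ha h1
    apply strictAntiOn_of_deriv_neg (convex_Icc a b)
    · intro x hx
      exact (hgat x (lt_of_lt_of_le ha hx.1)).continuousWithinAt
    · intro x hx
      rw [interior_Icc] at hx
      have hx0 : 0 < x := lt_of_lt_of_le ha hx.1.le
      rw [(hg1 x hx0).deriv]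
      exact h1 x hx
  -- Step A: at a positive value (for r > 0), the derivative must be negative
  have stepA : ∀ s : ℝ, 0 < s → 0 < g s → g1 s < 0 := by
    intro s hs hgs
    by_contra hA
    push_neg at hA
    have key : ∀ t, s ≤ t → g s ≤ g t := by
      by_contra hk
      push_neg at hk
      obtain ⟨t0, hst0, ht0⟩ := hk
      set B := {t : ℝ | s < t ∧ g t < g s} with hBdef
      have ht0B : t0 ∈ B :=
        ⟨lt_of_le_of_ne hst0 (fun h => by rw [← h] at ht0; exact lt_irrefl _ ht0), ht0⟩
      have hBne : B.Nonempty := ⟨t0, ht0B⟩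
      have hbdd : BddBelow B := ⟨s, fun x hx => hx.1.le⟩
      set u := sInf B with hu
      have hus : s ≤ u := le_csInf hBne fun x hx => hx.1.le
      have hu0 : 0 < u := lt_of_lt_of_le hs hus
      have hIco : ∀ x ∈ Ico s u, g s ≤ g x := by
        rintro x ⟨hx1, hx2⟩
        by_contra hgx
        push_neg at hgx
        rcases eq_or_lt_of_le hx1 with h | hx1'
        · rw [← h] at hgx; exact lt_irrefl _ hgx
        · exact absurd (csInf_le hbdd ⟨hx1', hgx⟩) (not_le.2 hx2)
      have hguge : g s ≤ g u := by
        rcases eq_or_lt_of_le hus with h | hsu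
        · rw [← h]
        · have hucl : u ∈ closure (Ico s u) := by
            rw [closure_Ico hsu.ne]; exact ⟨hus, le_refl u⟩
          have hne : (𝓝[Ico s u] u).NeBot := mem_closure_iff_nhdsWithin_neBot.mp hucl
          exact ge_of_tendsto ((hgat u hu0).continuousWithinAt)
            (eventually_mem_nhdsWithin.mono hIco)
      have hgpos : ∀ x ∈ Icc s u, 0 < g x := by
        intro x hx
        rcases eq_or_lt_of_le hx.2 with h | hlt
        · rw [h]; exact lt_of_lt_of_le hgs hguge
        · exact lt_of_lt_of_le hgs (hIco x ⟨hx.1, hlt⟩)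
      -- g > 0 slightly to the right of u
      have hgu : 0 < g u := hgpos u ⟨hus, le_refl u⟩
      have hmem : g ⁻¹' (Ioi 0) ∈ 𝓝 u :=
        (hgat u hu0).preimage_mem_nhds (isOpen_Ioi.mem_nhds hgu)
      obtain ⟨ε, hε, hball⟩ := Metric.mem_nhds_iff.mp hmem
      set δ := ε / 2 with hδdef
      have hδ0 : 0 < δ := by positivity
      have hposall : ∀ x ∈ Icc s (u + δ), 0 < g x := by
        intro x hx
        rcases le_or_gt x u with h | h
        · exact hgpos x ⟨hx.1, h⟩
        · apply hball
          rw [Metric.mem_ball, Real.dist_eq, abs_sub_lt_iff]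
          constructor
          · have := hx.2; simp only [hδdef] at *; linarith
          · linarith
      have hphim := phimono s (u + δ) hs hposall
      have hg1pos : ∀ x ∈ Ioo u (u + δ), 0 < g1 x := by
        intro x hx
        have hsx : s < x := lt_of_le_of_lt hus hx.1
        have hx0 : 0 < x := lt_trans hs hsx
        have h1 : s * g1 s < x * g1 x :=
          hphim ⟨le_refl s, by linarith⟩ ⟨hsx.le, hx.2.le⟩ hsx
        have h2 : 0 < x * g1 x := lt_of_le_of_lt (mul_nonneg hs.le hA) h1
        by_contra hng
        push_neg at hng
        nlinarith
      have hmono := gmono u (u + δ) hu0 hg1pos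
      obtain ⟨b, hbB, hbu⟩ := exists_lt_of_csInf_lt hBne (show sInf B < u + δ by
        rw [← hu]; linarith)
      have hub : u ≤ b := csInf_le hbdd hbB
      have hgub : g u ≤ g b := by
        rcases eq_or_lt_of_le hub with h | h
        · rw [h]
        · exact (hmono ⟨le_refl u, by linarith⟩ ⟨hub, hbu.le⟩ h).le
      exact absurd hbB.2 (not_lt.2 (le_trans hguge hgub))
    have h0 : g s ≤ 0 :=
      ge_of_tendsto hlim (eventually_atTop.2 ⟨s, fun t ht => key t ht⟩)
    linarith
  -- Main argument
  intro a ha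
  by_contra hga'
  push_neg at hga'
  have hga : 0 < g a := hga'
  have ha0 : 0 < a := ha
  -- Step B: g ≥ g a on (0, a]
  have stepB : ∀ x ∈ Ioc (0:ℝ) a, g a ≤ g x := by
    by_contra hB
    push_neg at hB
    obtain ⟨x0, hx0m, hx0⟩ := hB
    have hx0a : x0 < a :=
      lt_of_le_of_ne hx0m.2 (fun h => by rw [h] at hx0; exact lt_irrefl _ hx0)
    set B := {x : ℝ | 0 < x ∧ x < a ∧ g x < g a} with hBdef
    have hx0B : x0 ∈ B := ⟨hx0m.1, hx0a, hx0⟩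
    have hBne : B.Nonempty := ⟨x0, hx0B⟩
    have hbdd : BddAbove B := ⟨a, fun x hx => hx.2.1.le⟩
    set u := sSup B with hu
    have hua : u ≤ a := csSup_le hBne fun x hx => hx.2.1.le
    have hu0 : 0 < u := lt_of_lt_of_le hx0m.1 (le_csSup hbdd hx0B)
    have hIoc : ∀ y ∈ Ioc u a, g a ≤ g y := by
      rintro y ⟨hy1, hy2⟩
      rcases eq_or_lt_of_le hy2 with h | h
      · rw [h]
      · by_contra hgy
        push_neg at hgy
        exact absurd (le_csSup hbdd ⟨lt_trans hu0 hy1, h, hgy⟩) (not_le.2 hy1)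
    have hguge : g a ≤ g u := by
      rcases eq_or_lt_of_le hua with h | h
      · rw [h]
      · have hucl : u ∈ closure (Ioc u a) := by
          rw [closure_Ioc h.ne]; exact ⟨le_refl u, hua⟩
        have hne : (𝓝[Ioc u a] u).NeBot := mem_closure_iff_nhdsWithin_neBot.mp hucl
        exact ge_of_tendsto ((hgat u hu0).continuousWithinAt)
          (eventually_mem_nhdsWithin.mono hIoc)
    have hg1u : g1 u < 0 := stepA u hu0 (lt_of_lt_of_le hga hguge)
    have hmem : g1 ⁻¹' (Iio 0) ∈ 𝓝 u :=
      (hg1at u hu0).preimage_mem_nhds (isOpen_Iio.mem_nhds hg1u)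
    obtain ⟨ε, hε, hball⟩ := Metric.mem_nhds_iff.mp hmem
    set δ := min (ε / 2) (u / 2) with hδdef
    have hδ0 : 0 < δ := lt_min (by positivity) (by positivity)
    have hδε : δ ≤ ε / 2 := min_le_left _ _
    have hδu2 : δ ≤ u / 2 := min_le_right _ _
    have hδu : 0 < u - δ := by linarith
    have hg1neg : ∀ x ∈ Ioo (u - δ) u, g1 x < 0 := by
      intro x hx
      apply hball
      rw [Metric.mem_ball, Real.dist_eq, abs_sub_lt_iff]
      constructor
      · have := hx.2; linarith
      · have := hx.1; linarith
    have hanti := ganti (u - δ) u hδu hg1neg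
    obtain ⟨b, hbB, hbu⟩ := exists_lt_of_lt_csSup hBne (show u - δ < sSup B by
      rw [← hu]; linarith)
    have hbu' : b ≤ u := le_csSup hbdd hbB
    have hbltu : b < u :=
      lt_of_le_of_ne hbu' (fun h => by
        rw [h] at hbB; exact absurd hguge (not_le.2 hbB.2.2))
    have hgub : g u < g b :=
      hanti ⟨hbu.le, hbu'⟩ ⟨by linarith, le_refl u⟩ hbltu
    exact absurd hbB.2.2 (not_lt.2 (le_trans hguge hgub.le))
  -- g > 0 on (0, a], hence g1 < 0 there
  have hgpos : ∀ x ∈ Ioc (0:ℝ) a, 0 < g x := fun x hx =>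
    lt_of_lt_of_le hga (stepB x hx)
  have hg1a : g1 a < 0 := stepA a ha0 hga
  set K := a * g1 a with hKdef
  have hK0 : K < 0 := mul_neg_of_pos_of_neg ha0 hg1a
  have hphilt : ∀ x ∈ Ioo (0:ℝ) a, g1 x < K / x := by
    intro x hx
    have hphim := phimono x a hx.1 fun y hy =>
      hgpos y ⟨lt_of_lt_of_le hx.1 hy.1, hy.2⟩
    have h1 : x * g1 x < K :=
      hphim ⟨le_refl x, hx.2.le⟩ ⟨hx.2.le, le_refl a⟩ hx.2
    rw [lt_div_iff₀ hx.1]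
    calc g1 x * x = x * g1 x := mul_comm _ _
      _ < K := h1
  -- ψ = g - K log is strictly decreasing on (0,a]
  have hpsianti : StrictAntiOn (fun x => g x - K * Real.log x) (Ioc (0:ℝ) a) := by
    apply strictAntiOn_of_deriv_neg (convex_Ioc 0 a)
    · intro x hx
      exact ((hgat x hx.1).sub
        (continuousAt_const.mul (Real.continuousAt_log hx.1.ne'))).continuousWithinAt
    · intro x hx
      rw [interior_Ioc] at hx
      have hder : HasDerivAt (fun x => g x - K * Real.log x) (g1 x - K * x⁻¹) x :=
        (hg1 x hx.1).sub ((Real.hasDerivAt_log hx.1.ne').const_mul K)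
      rw [hder.deriv]
      have := hphilt x hx
      rw [div_eq_mul_inv] at this
      linarith
  have hineq : ∀ x ∈ Ioo (0:ℝ) a, g a + K * (Real.log x - Real.log a) ≤ g x := by
    intro x hx
    have h2 : g a - K * Real.log a < g x - K * Real.log x :=
      hpsianti ⟨hx.1, hx.2.le⟩ ⟨ha0, le_refl a⟩ hx.2
    rw [mul_sub]
    linarith
  have htop : Tendsto (fun x => g a + K * (Real.log x - Real.log a)) (𝓝[>] (0:ℝ)) atTop := by
    apply tendsto_atTop_add_const_left
    apply Tendsto.const_mul_atBot_of_neg hK0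
    have h1 : Tendsto (fun x => Real.log x - Real.log a) (𝓝[>] (0:ℝ)) atBot := by
      apply tendsto_atBot_add_const_right
      exact Real.tendsto_log_nhdsGT_zero
    exact h1
  have hgtend : Tendsto g (𝓝[>] (0:ℝ)) (𝓝 (g 0)) :=
    (hgc.continuousWithinAt self_mem_Ici).mono Ioi_subset_Ici_self
  have hgtop : Tendsto g (𝓝[>] (0:ℝ)) atTop := by
    apply tendsto_atTop_mono' _ _ htop
    filter_upwards [Ioo_mem_nhdsGT_of_mem (⟨le_refl (0:ℝ), ha0⟩ : (0:ℝ) ∈ Ico (0:ℝ) a)] with x hx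
    exact hineq x hx
  exact not_tendsto_nhds_of_tendsto_atTop hgtop (g 0) hgtend

/-- If `g` is a C² solution of `g'' + (1/r) g' - α² g - (1/2)(f² + g² - 1) g = 0`
on `(0,∞)` with `g'(0) = 0` and `g(r) → 0` as `r → ∞`, where `α ≥ 1/√2`,
then `g ≡ 0` on `[0,∞)`. -/
theorem stmt0 (α : ℝ) (hα : α ≥ 1 / Real.sqrt 2) (f g : ℝ → ℝ)
    (hgC : ContinuousOn g (Ici 0))
    (hg2 : ContDiffOn ℝ 2 g (Ioi 0))
    (hode : ∀ r ∈ Ioi (0:ℝ),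
      deriv (deriv g) r + (1 / r) * deriv g r - α ^ 2 * g r
        - (1 / 2) * ((f r) ^ 2 + (g r) ^ 2 - 1) * g r = 0)
    (hg0 : deriv g 0 = 0)
    (hlim : Tendsto g atTop (nhds 0)) :
    ∀ r ∈ Ici (0:ℝ), g r = 0 := by
  -- α² ≥ 1/2
  have hα2 : (1:ℝ)/2 ≤ α ^ 2 := by
    have hs2 : (0:ℝ) < Real.sqrt 2 := Real.sqrt_pos.2 (by norm_num)
    have hsq : (1 / Real.sqrt 2) ^ 2 = 1 / 2 := by
      rw [div_pow, one_pow, Real.sq_sqrt (by norm_num : (0:ℝ) ≤ 2)]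
    have hnn : (0:ℝ) ≤ 1 / Real.sqrt 2 := by positivity
    calc (1:ℝ)/2 = (1 / Real.sqrt 2) ^ 2 := hsq.symm
      _ ≤ α ^ 2 := pow_le_pow_left₀ hnn hα 2
  set g1 := deriv g with hg1def
  have hdiff : ∀ r ∈ Ioi (0:ℝ), HasDerivAt g (g1 r) r := by
    intro r hr
    exact ((hg2.differentiableOn (by norm_num)).differentiableAt
      (isOpen_Ioi.mem_nhds hr)).hasDerivAt
  have hg1c : ContinuousOn g1 (Ioi 0) :=
    hg2.continuousOn_deriv_of_isOpen isOpen_Ioi (by norm_num)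
  have hg1cd : ContDiffOn ℝ 1 g1 (Ioi 0) :=
    hg2.deriv_of_isOpen isOpen_Ioi (by norm_num)
  have hg1d : ∀ r ∈ Ioi (0:ℝ), HasDerivAt g1 (deriv g1 r) r := by
    intro r hr
    exact ((hg1cd.differentiableOn (by norm_num)).differentiableAt
      (isOpen_Ioi.mem_nhds hr)).hasDerivAt
  set c := fun r : ℝ => α ^ 2 + (1/2) * ((f r) ^ 2 + (g r) ^ 2 - 1) with hcdef
  have hphi : ∀ r ∈ Ioi (0:ℝ), HasDerivAt (fun x => x * g1 x) (r * (c r * g r)) r := by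
    intro r hr
    have hr0 : (0:ℝ) < r := hr
    have hr' : r ≠ 0 := ne_of_gt hr0
    have hmul : HasDerivAt (fun x => x * g1 x) (1 * g1 r + r * deriv g1 r) r :=
      (hasDerivAt_id r).mul (hg1d r hr)
    have ho := hode r hr
    have hd2 : deriv g1 r = α ^ 2 * g r + (1/2) * ((f r) ^ 2 + (g r) ^ 2 - 1) * g r
        - (1/r) * g1 r := by
      rw [hg1def]; linarith
    convert hmul using 1
    rw [hd2, hcdef]
    field_simp
    ring
  have hc : ∀ r ∈ Ioi (0:ℝ), g r ≠ 0 → 0 < c r := by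
    intro r _ hgr
    have h1 : 0 < (g r) ^ 2 := pow_two_pos_of_ne_zero hgr
    have h2 : 0 ≤ (f r) ^ 2 := sq_nonneg _
    rw [hcdef]
    dsimp only
    linarith
  -- apply aux to g : g ≤ 0 on (0,∞)
  have hle : ∀ r ∈ Ioi (0:ℝ), g r ≤ 0 :=
    aux_main g g1 c hgC hdiff hg1c hphi hc hlim
  -- apply aux to -g : g ≥ 0 on (0,∞)
  have hge : ∀ r ∈ Ioi (0:ℝ), -(g r) ≤ 0 := by
    apply aux_main (fun x => -(g x)) (fun x => -(g1 x)) c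
    · exact hgC.neg
    · intro r hr; exact (hdiff r hr).neg
    · exact hg1c.neg
    · intro r hr
      have h := (hphi r hr).neg
      have heq : (fun x => -(x * g1 x)) = (fun x => x * -(g1 x)) := by
        funext x; ring
      rw [show (-fun x => x * g1 x) = (fun x => -(x * g1 x)) from rfl, heq] at h
      refine h.congr_deriv ?_
      ring
    · intro r hr hgr
      exact hc r hr (fun h => hgr (by rw [h, neg_zero]))
    · simpa using hlim.neg
  have hz : ∀ r ∈ Ioi (0:ℝ), g r = 0 := by
    intro r hr
    have h1 := hle r hr
    have h2 := hge r hr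
    linarith
  intro r hr
  rcases eq_or_lt_of_le (mem_Ici.mp hr : (0:ℝ) ≤ r) with h | h
  · -- r = 0 : use continuity
    rw [← h]
    have hcw : Tendsto g (𝓝[>] (0:ℝ)) (𝓝 (g 0)) :=
      (hgC.continuousWithinAt self_mem_Ici).mono Ioi_subset_Ici_self
    have hzero : Tendsto g (𝓝[>] (0:ℝ)) (𝓝 0) := by
      apply Tendsto.congr' _ tendsto_const_nhds
      filter_upwards [self_mem_nhdsWithin] with x hx
      exact (hz x hx).symm
    exact tendsto_nhds_unique hcw hzero
  · exact hz r h
end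

section
/- Let f : [0,∞) → ℝ be continuous, increasing, with f(0) = 0, f(r) → 1 as r → ∞, and f(r) ≤ M₁ r for r ≤ 1. Suppose ã : [0,∞) → ℝ is C² on (0,∞), satisfies ã'' - (1/r) ã' + β² f² (1 - ã) = 0, and 0 < ã(r) < 1 with ã'(r) ≥ 0 for all r > 0. Then ã(r) → 1 as r → ∞. -/
open Filter Set

/-- If `f` is continuous, increasing, `f(0) = 0`, `f(r) → 1` at infinity,
`f(r) ≤ M₁ r` for `r ≤ 1`, and `ã` is a C² solution on `(0,∞)` of
`ã'' - (1/r) ã' + β² f² (1 - ã) = 0` with `0 < ã < 1` and `ã' ≥ 0` on `(0,∞)`,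
then `ã(r) → 1` as `r → ∞`. -/
theorem stmt2 (β M₁ : ℝ) (hβ : β > 0) (hM₁ : M₁ > 0) (f a : ℝ → ℝ)
    (hf : ContinuousOn f (Ici 0)) (hfmono : MonotoneOn f (Ici 0))
    (hf0 : f 0 = 0) (hflim : Tendsto f atTop (nhds 1))
    (hfbd : ∀ r ∈ Icc (0:ℝ) 1, f r ≤ M₁ * r)
    (ha2 : ContDiffOn ℝ 2 a (Ioi 0))
    (hode : ∀ r ∈ Ioi (0:ℝ),
      deriv (deriv a) r - (1 / r) * deriv a r + β ^ 2 * (f r) ^ 2 * (1 - a r) = 0)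
    (hbd : ∀ r ∈ Ioi (0:ℝ), 0 < a r ∧ a r < 1)
    (hmono : ∀ r ∈ Ioi (0:ℝ), 0 ≤ deriv a r) :
    Tendsto a atTop (nhds 1) := by
  have hIci : Ici (1:ℝ) ⊆ Ioi 0 := fun x hx => show (0:ℝ) < x from lt_of_lt_of_le one_pos hx
  have hacont : ContinuousOn a (Ioi 0) := ha2.continuousOn
  have hd'cd : ContDiffOn ℝ 1 (deriv a) (Ioi 0) :=
    ha2.deriv_of_isOpen isOpen_Ioi (by norm_num)
  have hd'diff : ∀ r ∈ Ioi (0:ℝ), DifferentiableAt ℝ (deriv a) r := fun r hr =>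
    ((hd'cd.differentiableOn one_ne_zero) r hr).differentiableAt (isOpen_Ioi.mem_nhds hr)
  -- monotone on [1, ∞)
  have hmonoOn : MonotoneOn a (Ici 1) := by
    apply monotoneOn_of_deriv_nonneg (convex_Ici 1) (hacont.mono hIci)
    · rw [interior_Ici]
      exact (ha2.differentiableOn two_ne_zero).mono (fun x hx => hIci (mem_Ici.mpr (le_of_lt hx)))
    · intro x hx
      rw [interior_Ici] at hx
      exact hmono x (hIci (mem_Ici.mpr hx.le))
  set L := sSup (a '' Ici 1) with hLdef
  have hne : (a '' Ici 1).Nonempty := ⟨a 1, 1, self_mem_Ici, rfl⟩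
  have hbdd : BddAbove (a '' Ici 1) := by
    refine ⟨1, ?_⟩
    rintro y ⟨x, hx, rfl⟩
    exact (hbd x (hIci hx)).2.le
  have hle : ∀ r : ℝ, 1 ≤ r → a r ≤ L := fun r hr =>
    le_csSup hbdd ⟨r, hr, rfl⟩
  have hL1 : L ≤ 1 := csSup_le hne (by rintro y ⟨x, hx, rfl⟩; exact (hbd x (hIci hx)).2.le)
  have haL : Tendsto a atTop (nhds L) := by
    rw [tendsto_order]
    constructor
    · intro c hc
      obtain ⟨y, ⟨x, hx, rfl⟩, hy⟩ := exists_lt_of_lt_csSup hne hc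
      filter_upwards [eventually_ge_atTop x] with r hr
      exact lt_of_lt_of_le hy (hmonoOn hx (le_trans hx hr) hr)
    · intro c hc
      filter_upwards [eventually_ge_atTop 1] with r hr
      exact lt_of_le_of_lt (hle r hr) hc
  -- it suffices to show L = 1; suppose L < 1 and derive a contradiction
  rcases eq_or_lt_of_le hL1 with hL | hL
  · rwa [hL] at haL
  exfalso
  set ε : ℝ := β ^ 2 * (1 / 4) * (1 - L) with hεdef
  have hεpos : 0 < ε := by
    have h1L : 0 < 1 - L := by linarith
    positivity
  -- choose R0 ≥ 1 with f r ≥ 1/2 for r ≥ R0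
  have hev : ∀ᶠ r in atTop, (1:ℝ)/2 < f r := hflim.eventually (eventually_gt_nhds (by norm_num))
  obtain ⟨R0', hR0'⟩ := eventually_atTop.1 hev
  set R0 : ℝ := max R0' 1 with hR0def
  have hR0one : (1:ℝ) ≤ R0 := le_max_right _ _
  have hR0pos : (0:ℝ) < R0 := lt_of_lt_of_le one_pos hR0one
  have hfhalf : ∀ r, R0 ≤ r → (1:ℝ)/2 ≤ f r := fun r hr =>
    (hR0' r (le_trans (le_max_left _ _) hr)).le
  set h : ℝ → ℝ := fun r => deriv a r / r + ε * Real.log r with hhdef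
  have hderivh : ∀ r ∈ Ioi R0, HasDerivAt h
      ((deriv (deriv a) r * r - deriv a r * 1) / r ^ 2 + ε * r⁻¹) r := by
    intro r hr
    have hrpos : 0 < r := lt_trans hR0pos hr
    have h1 : HasDerivAt (fun x => deriv a x / x)
        ((deriv (deriv a) r * r - deriv a r * 1) / r ^ 2) r :=
      ((hd'diff r hrpos).hasDerivAt).div (hasDerivAt_id r) (ne_of_gt hrpos)
    have h2 : HasDerivAt (fun x => ε * Real.log x) (ε * r⁻¹) r :=
      (Real.hasDerivAt_log (ne_of_gt hrpos)).const_mul ε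
    exact h1.add h2
  have hanti : AntitoneOn h (Ici R0) := by
    apply antitoneOn_of_deriv_nonpos (convex_Ici R0)
    · apply ContinuousOn.add
      · exact ((hd'cd.continuousOn.mono (fun x hx => lt_of_lt_of_le hR0pos hx)).div
          continuousOn_id (fun x hx => ne_of_gt (lt_of_lt_of_le hR0pos hx)))
      · exact (Real.continuousOn_log.mono
          (fun x hx => ne_of_gt (lt_of_lt_of_le hR0pos hx))).const_smul ε |>.congr
          (fun x _ => by simp [smul_eq_mul])
    · rw [interior_Ici]
      exact fun x hx => ((hderivh x hx).differentiableAt).differentiableWithinAt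
    · rw [interior_Ici]
      intro r hr
      have hrpos : 0 < r := lt_trans hR0pos hr
      rw [(hderivh r hr).deriv]
      have hodeR := hode r hrpos
      have hfr : (1:ℝ)/2 ≤ f r := hfhalf r (le_of_lt hr)
      have haR : a r ≤ L := hle r (le_trans hR0one hr.le)
      have key : deriv (deriv a) r * r - deriv a r = -(β ^ 2 * (f r) ^ 2 * (1 - a r)) * r := by
        have h1r : (1 / r) * deriv a r * r = deriv a r := by
          field_simp
        nlinarith [hodeR]
      rw [mul_one, key]
      have hquarter : (1:ℝ)/4 ≤ (f r) ^ 2 := by nlinarith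
      have h1a : 1 - L ≤ 1 - a r := by linarith
      have hεle : ε ≤ β ^ 2 * (f r) ^ 2 * (1 - a r) := by
        rw [hεdef]
        have : β ^ 2 * (1/4) * (1 - L) ≤ β ^ 2 * (f r)^2 * (1 - L) := by nlinarith
        nlinarith [sq_nonneg β, sq_nonneg (f r)]
      have : -(β ^ 2 * (f r) ^ 2 * (1 - a r)) * r / r ^ 2 + ε * r⁻¹
          = (ε - β ^ 2 * (f r) ^ 2 * (1 - a r)) / r := by
        field_simp
        ring
      rw [this]
      apply div_nonpos_of_nonpos_of_nonneg (by linarith) hrpos.le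
  -- derive contradiction: h r ≤ h R0 but deriv a r / r ≥ 0 forces ε log r ≤ h R0
  set C : ℝ := deriv a R0 / R0 + ε * Real.log R0 with hCdef
  set R1 : ℝ := max R0 (Real.exp ((C + 1) / ε)) with hR1def
  have hR1ge : R0 ≤ R1 := le_max_left _ _
  have hR1pos : 0 < R1 := lt_of_lt_of_le hR0pos hR1ge
  have hlog : (C + 1) / ε ≤ Real.log R1 := by
    rw [← Real.log_exp ((C + 1) / ε)]
    exact Real.log_le_log (Real.exp_pos _) (le_max_right _ _)
  have hh : deriv a R1 / R1 + ε * Real.log R1 ≤ C := hanti self_mem_Ici (show R1 ∈ Ici R0 from hR1ge) hR1ge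
  have hga : 0 ≤ deriv a R1 / R1 := div_nonneg (hmono R1 hR1pos) hR1pos.le
  have h1 : C + 1 ≤ ε * Real.log R1 := by
    calc C + 1 = ε * ((C + 1) / ε) := by field_simp
    _ ≤ ε * Real.log R1 := mul_le_mul_of_nonneg_left hlog hεpos.le
  clear_value C R1
  linarith
end

section
/- Let f : [0,∞) → ℝ be continuous with f(r) → 1 as r → ∞, and let β > 0 and 0 < ε < 1. Suppose a : [0,∞) → ℝ is a positive C² solution on (0,∞) of a'' - (1/r) a' - β² f² a = 0 with a(r) → 0 as r → ∞. Then a(r) = O(r^{1/2} exp(-β(1-ε) r)) as r → ∞. -/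
open Filter Set Asymptotics

/-- Decay estimate for the gauge profile: if `f → 1` at infinity and `a > 0` is a
C² solution of `a'' - (1/r) a' - β² f² a = 0` on `(0,∞)` with `a → 0` at infinity,
then `a(r) = O(r^{1/2} exp(-β(1-ε) r))` as `r → ∞`. -/
theorem stmt3 (β ε : ℝ) (hβ : β > 0) (hε : ε ∈ Ioo (0:ℝ) 1) (f a : ℝ → ℝ)
    (hf : ContinuousOn f (Ici 0)) (hflim : Tendsto f atTop (nhds 1))
    (ha2 : ContDiffOn ℝ 2 a (Ioi 0))
    (hapos : ∀ r ∈ Ioi (0:ℝ), 0 < a r)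
    (hode : ∀ r ∈ Ioi (0:ℝ),
      deriv (deriv a) r - (1 / r) * deriv a r - β ^ 2 * (f r) ^ 2 * a r = 0)
    (hlim : Tendsto a atTop (nhds 0)) :
    a =O[atTop] fun r => Real.sqrt r * Real.exp (-β * (1 - ε) * r) := by
  obtain ⟨hε0, hε1⟩ := hε
  set μ := β * (1 - ε) with hμdef
  have hμpos : 0 < μ := mul_pos hβ (by linarith)
  have hμβ : μ < β := by nlinarith
  have hgap : μ ^ 2 < β ^ 2 := by nlinarith
  -- differentiability facts
  have hda : DifferentiableOn ℝ a (Ioi 0) := ha2.differentiableOn (by norm_num)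
  have hda' : ContDiffOn ℝ 1 (deriv a) (Ioi 0) :=
    ha2.deriv_of_isOpen isOpen_Ioi (by norm_num)
  have hAat : ∀ r ∈ Ioi (0:ℝ), HasDerivAt a (deriv a r) r := fun r hr =>
    (hda.differentiableAt (isOpen_Ioi.mem_nhds hr)).hasDerivAt
  have hA'at : ∀ r ∈ Ioi (0:ℝ), HasDerivAt (deriv a) (deriv (deriv a) r) r := fun r hr =>
    ((hda'.differentiableOn (by norm_num)).differentiableAt (isOpen_Ioi.mem_nhds hr)).hasDerivAt
  -- choose R ≥ 1 with β² f(r)² - μ² - μ/r ≥ 0 for r ≥ R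
  have h1 : ∀ᶠ r in atTop, μ ^ 2 + (β ^ 2 - μ ^ 2) / 2 ≤ β ^ 2 * f r ^ 2 := by
    have ht : Tendsto (fun r => β ^ 2 * f r ^ 2) atTop (nhds (β ^ 2 * 1 ^ 2)) :=
      ((hflim.pow 2).const_mul _)
    apply ht.eventually (eventually_ge_nhds ?_)
    nlinarith
  have h2 : ∀ᶠ r in atTop, μ / r ≤ (β ^ 2 - μ ^ 2) / 2 := by
    have : Tendsto (fun r : ℝ => μ / r) atTop (nhds 0) :=
      tendsto_const_nhds.div_atTop tendsto_id
    exact this.eventually (eventually_le_nhds (by linarith))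
  obtain ⟨R, hR⟩ := ((h1.and h2).and (eventually_ge_atTop 1)).exists_forall_of_atTop
  have hR1 : (1:ℝ) ≤ R := (hR R le_rfl).2
  have hRpos : (0:ℝ) < R := lt_of_lt_of_le one_pos hR1
  have hcond : ∀ r, R ≤ r → 0 ≤ β ^ 2 * f r ^ 2 - μ ^ 2 - μ / r := by
    intro r hr
    obtain ⟨⟨c1, c2⟩, _⟩ := hR r hr
    linarith
  set w : ℝ → ℝ := fun r => deriv a r + μ * a r with hwdef
  -- Claim: w ≤ 0 on [R, ∞)
  have hwle : ∀ r, R ≤ r → w r ≤ 0 := by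
    by_contra hcon
    push_neg at hcon
    obtain ⟨r₀, hr₀R, hwr₀⟩ := hcon
    have hr₀pos : 0 < r₀ := lt_of_lt_of_le hRpos hr₀R
    -- F r = exp(-(μ r)) * w r / r is monotone on [R, ∞)
    set F : ℝ → ℝ := fun r => Real.exp (-(μ * r)) * w r / r with hFdef
    have hFat : ∀ r, R ≤ r → HasDerivAt F
        (((Real.exp (-(μ * r)) * (-μ) * w r
          + Real.exp (-(μ * r)) * (deriv (deriv a) r + μ * deriv a r)) * r
          - Real.exp (-(μ * r)) * w r * 1) / r ^ 2) r := by
      intro r hr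
      have hrpos : 0 < r := lt_of_lt_of_le hRpos hr
      have hrne : r ≠ 0 := ne_of_gt hrpos
      have he : HasDerivAt (fun r : ℝ => Real.exp (-(μ * r))) (Real.exp (-(μ * r)) * (-μ)) r := by
        have h0 : HasDerivAt (fun r : ℝ => -(μ * r)) (-(μ * 1)) r :=
          ((hasDerivAt_id r).const_mul μ).neg
        simpa using h0.exp
      have hw : HasDerivAt w (deriv (deriv a) r + μ * deriv a r) r :=
        (hA'at r hrpos).add ((hAat r hrpos).const_mul μ)
      exact (he.mul hw).div (hasDerivAt_id r) hrne
    have hFderiv : ∀ r ∈ Ioi R, 0 ≤ deriv F r := by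
      intro r hr
      have hrR : R ≤ r := le_of_lt hr
      have hrpos : 0 < r := lt_of_lt_of_le hRpos hrR
      rw [(hFat r hrR).deriv]
      apply div_nonneg _ (sq_nonneg r)
      have key : deriv (deriv a) r = (1 / r) * deriv a r + β ^ 2 * f r ^ 2 * a r := by
        have := hode r hrpos; linarith
      have expand : (Real.exp (-(μ * r)) * (-μ) * w r
          + Real.exp (-(μ * r)) * (deriv (deriv a) r + μ * deriv a r)) * r
          - Real.exp (-(μ * r)) * w r * 1
          = Real.exp (-(μ * r)) * a r * ((β ^ 2 * f r ^ 2 - μ ^ 2) * r - μ) := by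
        simp only [hwdef, key]
        field_simp
        ring
      rw [expand]
      have hfac : 0 ≤ (β ^ 2 * f r ^ 2 - μ ^ 2) * r - μ := by
        have hc := hcond r hrR
        have : μ / r ≤ β ^ 2 * f r ^ 2 - μ ^ 2 := by linarith
        rw [div_le_iff₀ hrpos] at this
        linarith
      exact mul_nonneg (mul_nonneg (Real.exp_pos _).le (hapos r hrpos).le) hfac
    have hFmono : MonotoneOn F (Ici R) := by
      apply monotoneOn_of_deriv_nonneg (convex_Ici R)
      · intro r hr
        exact (hFat r hr).differentiableAt.continuousAt.continuousWithinAt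
      · intro r hr
        rw [interior_Ici] at hr
        exact (hFat r (le_of_lt hr)).differentiableAt.differentiableWithinAt
      · intro r hr
        rw [interior_Ici] at hr
        exact hFderiv r hr
    set δ := F r₀ with hδdef
    have hδpos : 0 < δ := div_pos (mul_pos (Real.exp_pos _) hwr₀) hr₀pos
    -- for r ≥ r₀, w r ≥ δ r exp(μ r), hence deriv a r ≥ δ r - μ a r (as exp(μr) ≥ 1)
    have hwlow : ∀ r, r₀ ≤ r → δ * r ≤ w r := by
      intro r hr
      have hrpos : 0 < r := lt_of_lt_of_le hr₀pos hr
      have hF : δ ≤ F r := hFmono (mem_Ici.2 hr₀R) (mem_Ici.2 (le_trans hr₀R hr)) hr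
      have hEw : δ * r ≤ Real.exp (-(μ * r)) * w r := by
        rw [hFdef] at hF
        calc δ * r ≤ F r * r := by nlinarith
        _ = Real.exp (-(μ * r)) * w r := div_mul_cancel₀ _ hrpos.ne'
      have hE1 : Real.exp (-(μ * r)) ≤ 1 := by
        apply Real.exp_le_one_iff.2
        nlinarith
      nlinarith [Real.exp_pos (-(μ * r)),
        mul_le_mul_of_nonneg_right hE1 (le_of_lt (lt_of_lt_of_le (by positivity : (0:ℝ) < δ * r) hEw))]
    -- hence eventually deriv a r ≥ 1
    have hd1 : ∀ᶠ r in atTop, 1 ≤ deriv a r := by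
      have hmu : ∀ᶠ r in atTop, μ * a r ≤ 1 := by
        have : Tendsto (fun r => μ * a r) atTop (nhds (μ * 0)) := hlim.const_mul μ
        rw [mul_zero] at this
        exact this.eventually (eventually_le_nhds one_pos)
      filter_upwards [hmu, eventually_ge_atTop r₀, eventually_ge_atTop (2 / δ)] with r hmr hr0 hr2
      have h2le : 2 ≤ δ * r := by
        rw [div_le_iff₀ hδpos] at hr2; linarith
      have := hwlow r hr0
      simp only [hwdef] at this
      linarith
    obtain ⟨r₁, hr₁⟩ := (hd1.and (eventually_ge_atTop (max r₀ 1))).exists_forall_of_atTop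
    have hr₁pos : 0 < r₁ := lt_of_lt_of_le one_pos (le_trans (le_max_right _ _) (hr₁ r₁ le_rfl).2)
    -- a r - r is monotone on [r₁, ∞)
    have hGat : ∀ r, r₁ ≤ r → HasDerivAt (fun r => a r - r) (deriv a r - 1) r := by
      intro r hr
      exact ((hAat r (lt_of_lt_of_le hr₁pos hr)).sub (hasDerivAt_id r))
    have hGmono : MonotoneOn (fun r => a r - r) (Ici r₁) := by
      apply monotoneOn_of_deriv_nonneg (convex_Ici r₁)
      · intro r hr
        exact (hGat r hr).differentiableAt.continuousAt.continuousWithinAt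
      · intro r hr
        rw [interior_Ici] at hr
        exact (hGat r (le_of_lt hr)).differentiableAt.differentiableWithinAt
      · intro r hr
        rw [interior_Ici] at hr
        rw [(hGat r (le_of_lt hr)).deriv]
        have := (hr₁ r (le_of_lt hr)).1
        linarith
    -- contradiction with a → 0
    obtain ⟨r₂, hr₂⟩ := (hlim.eventually (eventually_lt_nhds one_pos)).exists_forall_of_atTop
    set r₃ := max r₂ (r₁ + 1) with hr₃def
    have hr₃1 : r₁ + 1 ≤ r₃ := le_max_right _ _
    have hmono := hGmono (mem_Ici.2 (le_refl r₁)) (mem_Ici.2 (by linarith : r₁ ≤ r₃)) (by linarith)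
    have har₁ : 0 < a r₁ := hapos r₁ hr₁pos
    have har₃ : a r₃ < 1 := hr₂ r₃ (le_max_left _ _)
    simp only at hmono
    linarith
  -- now exp(μ r) * a r is antitone on [R, ∞)
  set g : ℝ → ℝ := fun r => Real.exp (μ * r) * a r with hgdef
  have hgat : ∀ r, R ≤ r → HasDerivAt g (Real.exp (μ * r) * w r) r := by
    intro r hr
    have hrpos : 0 < r := lt_of_lt_of_le hRpos hr
    have he : HasDerivAt (fun r : ℝ => Real.exp (μ * r)) (Real.exp (μ * r) * μ) r := by
      have h0 : HasDerivAt (fun r : ℝ => μ * r) (μ * 1) r := (hasDerivAt_id r).const_mul μ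
      simpa using h0.exp
    have : HasDerivAt g (Real.exp (μ * r) * μ * a r + Real.exp (μ * r) * deriv a r) r :=
      he.mul (hAat r hrpos)
    convert this using 1
    show Real.exp (μ * r) * (deriv a r + μ * a r) = _
    ring
  have hganti : AntitoneOn g (Ici R) := by
    apply antitoneOn_of_deriv_nonpos (convex_Ici R)
    · intro r hr
      exact (hgat r hr).differentiableAt.continuousAt.continuousWithinAt
    · intro r hr
      rw [interior_Ici] at hr
      exact (hgat r (le_of_lt hr)).differentiableAt.differentiableWithinAt
    · intro r hr
      rw [interior_Ici] at hr
      rw [(hgat r (le_of_lt hr)).deriv]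
      exact mul_nonpos_of_nonneg_of_nonpos (Real.exp_pos _).le (hwle r (le_of_lt hr))
  -- conclude
  rw [isBigO_iff]
  refine ⟨Real.exp (μ * R) * a R, ?_⟩
  filter_upwards [eventually_ge_atTop (max R 1)] with r hr
  have hrR : R ≤ r := le_trans (le_max_left _ _) hr
  have hr1 : (1:ℝ) ≤ r := le_trans (le_max_right _ _) hr
  have hrpos : (0:ℝ) < r := lt_of_lt_of_le one_pos hr1
  have hle : Real.exp (μ * r) * a r ≤ Real.exp (μ * R) * a R :=
    hganti (mem_Ici.2 le_rfl) (mem_Ici.2 hrR) hrR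
  have hexp : Real.exp (-β * (1 - ε) * r) = Real.exp (-(μ * r)) := by
    rw [hμdef]; ring_nf
  have hsqrt : (1:ℝ) ≤ Real.sqrt r := by
    rw [show (1:ℝ) = Real.sqrt 1 from (Real.sqrt_one).symm]
    exact Real.sqrt_le_sqrt hr1
  have hane : 0 < a r := hapos r hrpos
  have haR : 0 < a R := hapos R hRpos
  rw [Real.norm_eq_abs, Real.norm_eq_abs, abs_of_pos hane, abs_of_pos (by positivity)]
  rw [hexp]
  have step1 : a r ≤ Real.exp (μ * R) * a R * Real.exp (-(μ * r)) := by
    have hEpos : 0 < Real.exp (μ * r) := Real.exp_pos _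
    have : a r = (Real.exp (μ * r) * a r) * Real.exp (-(μ * r)) := by
      rw [mul_comm (Real.exp (μ * r)) (a r), mul_assoc, ← Real.exp_add]
      simp
    rw [this]
    exact mul_le_mul_of_nonneg_right hle (Real.exp_pos _).le
  calc a r ≤ Real.exp (μ * R) * a R * Real.exp (-(μ * r)) := step1
    _ ≤ Real.exp (μ * R) * a R * (Real.sqrt r * Real.exp (-(μ * r))) := by
        apply mul_le_mul_of_nonneg_left _ (by positivity)
        nlinarith [Real.exp_pos (-(μ * r))]
end

section
/- Let α > 0, 0 < ε < 1, and let f : [0,∞) → ℝ be continuous with f(r) → 1 as r → ∞. Suppose g : [0,∞) → ℝ is a C² solution on (0,∞) of g'' + (1/r) g' - α² g - (1/2)(f² + g² - 1) g = 0 with 0 ≤ g(r) bounded and g(r) → 0 as r → ∞. Then g(r) = O(exp(-α(1-ε) r)) as r → ∞. -/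
open Filter Set Asymptotics Topology

private lemma expAux (K b x : ℝ) :
    HasDerivAt (fun r => K * Real.exp (b * r)) (K * b * Real.exp (b * x)) x := by
  have h1 : HasDerivAt (fun r : ℝ => b * r) b x := by
    simpa using (hasDerivAt_id x).const_mul b
  have h2 := h1.exp
  have h3 := h2.const_mul K
  rw [show K * b * Real.exp (b * x) = K * (Real.exp (b * x) * b) by ring]
  exact h3

/-- Second derivative test contradiction: an interior local max with `deriv deriv > 0`
and global one-sided maximality is impossible. -/
private lemma no_pos_second_deriv_max {w : ℝ → ℝ} {x : ℝ} (hx : 0 < x)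
    (hw : DifferentiableOn ℝ w (Ioi 0)) (hw' : DifferentiableOn ℝ (deriv w) (Ioi 0))
    (hmax : IsLocalMax w x) (hglob : ∀ y, x ≤ y → w y ≤ w x)
    (hpos : 0 < deriv (deriv w) x) : False := by
  have hxmem : (Ioi (0:ℝ)) ∈ 𝓝 x := isOpen_Ioi.mem_nhds hx
  have hd0 : deriv w x = 0 := hmax.deriv_eq_zero
  have hdd : HasDerivAt (deriv w) (deriv (deriv w) x) x :=
    (hw'.differentiableAt hxmem).hasDerivAt
  rw [hasDerivAt_iff_tendsto_slope] at hdd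
  have hslope : ∀ᶠ y in 𝓝[≠] x, 0 < slope (deriv w) x y :=
    hdd.eventually_const_lt hpos
  have hslope' : ∀ᶠ y in 𝓝[>] x, 0 < slope (deriv w) x y :=
    hslope.filter_mono (nhdsWithin_mono x fun y hy => ne_of_gt hy)
  obtain ⟨b, hb, hball⟩ := (nhdsGT_basis x).eventually_iff.mp hslope'
  have hderivpos : ∀ y ∈ Ioo x b, 0 < deriv w y := by
    intro y hy
    have hs := hball hy
    have hyx : 0 < y - x := sub_pos.mpr hy.1
    have : slope (deriv w) x y = (deriv w y - deriv w x) / (y - x) := by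
      simp [slope_def_field]
    rw [this, hd0, sub_zero] at hs
    have := mul_pos hs hyx
    rwa [div_mul_cancel₀ _ (ne_of_gt hyx)] at this
  set m := (x + b) / 2 with hm
  have hxm : x < m := by simp [hm]; linarith
  have hmb : m < b := by simp [hm]; linarith
  have hsub : Icc x m ⊆ Ioi 0 := fun y hy => lt_of_lt_of_le hx hy.1
  have hmono : StrictMonoOn w (Icc x m) := by
    apply strictMonoOn_of_deriv_pos (convex_Icc x m) (hw.continuousOn.mono hsub)
    intro y hy
    rw [interior_Icc] at hy
    exact hderivpos y ⟨hy.1, lt_trans hy.2 hmb⟩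
  have h1 : w x < w m := hmono ⟨le_refl x, le_of_lt hxm⟩ ⟨le_of_lt hxm, le_refl m⟩ hxm
  exact absurd (hglob m (le_of_lt hxm)) (not_le.mpr h1)

/-- Exponential decay for the neutral scalar profile: if `f → 1` at infinity and
`g ≥ 0` is a bounded C² solution on `(0,∞)` of
`g'' + (1/r) g' - α² g - (1/2)(f² + g² - 1) g = 0` with `g → 0` at infinity, then
`g(r) = O(exp(-α(1-ε) r))` as `r → ∞`. -/
theorem stmt4 (α ε : ℝ) (hα : α > 0) (hε : ε ∈ Ioo (0:ℝ) 1) (f g : ℝ → ℝ)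
    (hf : ContinuousOn f (Ici 0)) (hflim : Tendsto f atTop (nhds 1))
    (hg2 : ContDiffOn ℝ 2 g (Ioi 0))
    (hode : ∀ r ∈ Ioi (0:ℝ),
      deriv (deriv g) r + (1 / r) * deriv g r - α ^ 2 * g r
        - (1 / 2) * ((f r) ^ 2 + (g r) ^ 2 - 1) * g r = 0)
    (hgnn : ∀ r ∈ Ici (0:ℝ), 0 ≤ g r)
    (hgbd : ∃ C : ℝ, ∀ r ∈ Ici (0:ℝ), g r ≤ C)
    (hlim : Tendsto g atTop (nhds 0)) :
    g =O[atTop] fun r => Real.exp (-α * (1 - ε) * r) := by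
  obtain ⟨hε0, hε1⟩ := hε
  set β := α * (1 - ε) with hβdef
  have hβ : 0 < β := mul_pos hα (by linarith)
  have hβα : β ^ 2 < α ^ 2 := by
    have : β < α := by nlinarith
    nlinarith
  -- choose r₀
  have hc : Tendsto (fun r => α ^ 2 + (1/2) * ((f r) ^ 2 + (g r) ^ 2 - 1)) atTop
      (𝓝 (α ^ 2)) := by
    have h1 : Tendsto (fun r => (f r) ^ 2) atTop (𝓝 ((1:ℝ) ^ 2)) :=
      ((continuous_pow 2).tendsto (1:ℝ)).comp hflim
    have h2 : Tendsto (fun r => (g r) ^ 2) atTop (𝓝 ((0:ℝ) ^ 2)) :=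
      ((continuous_pow 2).tendsto (0:ℝ)).comp hlim
    have h3 := ((h1.add h2).sub_const 1).const_mul (1/2 : ℝ)
    have h4 := h3.const_add (α ^ 2)
    convert h4 using 2
    norm_num
  have hev : ∀ᶠ r in atTop, β ^ 2 < α ^ 2 + (1/2) * ((f r) ^ 2 + (g r) ^ 2 - 1) :=
    hc.eventually_const_lt hβα
  obtain ⟨a, ha⟩ := eventually_atTop.mp hev
  set r₀ := max a 1 with hr₀def
  have hr₀pos : (0:ℝ) < r₀ := lt_of_lt_of_le zero_lt_one (le_max_right a 1)
  have hcoef : ∀ r, r₀ ≤ r → β ^ 2 ≤ α ^ 2 + (1/2) * ((f r) ^ 2 + (g r) ^ 2 - 1) :=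
    fun r hr => le_of_lt (ha r (le_trans (le_max_left a 1) hr))
  -- comparison function
  set K := g r₀ * Real.exp (β * r₀) with hKdef
  have hK : 0 ≤ K := mul_nonneg (hgnn r₀ (le_of_lt hr₀pos)) (Real.exp_pos _).le
  set σ : ℝ → ℝ := fun r => K * Real.exp (-β * r) with hσdef
  set w : ℝ → ℝ := fun r => g r - σ r with hwdef
  have hσC : ContDiff ℝ 2 σ := by
    exact contDiff_const.mul (Real.contDiff_exp.comp (contDiff_const.mul contDiff_id))
  have hwC : ContDiffOn ℝ 2 w (Ioi 0) := hg2.sub (hσC.contDiffOn)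
  have hwd : DifferentiableOn ℝ w (Ioi 0) := hwC.differentiableOn (by norm_num)
  have hgd : DifferentiableOn ℝ g (Ioi 0) := hg2.differentiableOn (by norm_num)
  have hw'd : DifferentiableOn ℝ (deriv w) (Ioi 0) :=
    (hwC.deriv_of_isOpen (m := 1) isOpen_Ioi (by norm_num)).differentiableOn (by norm_num)
  have hg'd : DifferentiableOn ℝ (deriv g) (Ioi 0) :=
    (hg2.deriv_of_isOpen (m := 1) isOpen_Ioi (by norm_num)).differentiableOn (by norm_num)
  -- derivatives of σ
  have hσ1 : ∀ x, HasDerivAt σ (K * (-β) * Real.exp (-β * x)) x := fun x => expAux K (-β) x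
  have hσ1' : deriv σ = fun x => (K * (-β)) * Real.exp (-β * x) :=
    funext fun x => (hσ1 x).deriv
  have hσ2 : ∀ x, deriv (deriv σ) x = K * β ^ 2 * Real.exp (-β * x) := by
    intro x
    rw [hσ1']
    have := (expAux (K * (-β)) (-β) x).deriv
    rw [this]; ring
  -- w r₀ = 0
  have hwr₀ : w r₀ = 0 := by
    simp only [hwdef, hσdef, hKdef]
    rw [mul_assoc, ← Real.exp_add]
    ring_nf
    simp
  -- w tends to 0
  have hσlim : Tendsto σ atTop (𝓝 0) := by
    have h1 : Tendsto (fun r : ℝ => β * r) atTop atTop :=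
      (tendsto_id.const_mul_atTop hβ)
    have h2 : Tendsto (fun r : ℝ => Real.exp (-(β * r))) atTop (𝓝 0) :=
      Real.tendsto_exp_neg_atTop_nhds_zero.comp h1
    have h3 := h2.const_mul K
    simp only [mul_zero] at h3
    convert h3 using 2 with r
    simp only [hσdef]
    ring_nf
  have hwlim : Tendsto w atTop (𝓝 0) := by
    have := hlim.sub hσlim
    simpa using this
  -- maximum principle: w ≤ 0 on [r₀, ∞)
  have hmaxp : ∀ r, r₀ ≤ r → w r ≤ 0 := by
    by_contra hcon
    push_neg at hcon
    obtain ⟨r₁, hr₁, hwr₁⟩ := hcon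
    have hevw : ∀ᶠ r in atTop, w r < w r₁ := hwlim.eventually (gt_mem_nhds hwr₁)
    obtain ⟨R', hR'⟩ := eventually_atTop.mp hevw
    set R := max R' (r₁ + 1) with hRdef
    have hr₁R : r₁ ≤ R := le_trans (by linarith) (le_max_right R' (r₁ + 1))
    have hr₀R : r₀ ≤ R := le_trans hr₁ hr₁R
    have hIccsub : Icc r₀ R ⊆ Ioi 0 := fun y hy => lt_of_lt_of_le hr₀pos hy.1
    obtain ⟨x, hxmem, hxmax⟩ := isCompact_Icc.exists_isMaxOn (nonempty_Icc.mpr hr₀R)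
      (hwd.continuousOn.mono hIccsub)
    have hwx : w r₁ ≤ w x := hxmax ⟨hr₁, hr₁R⟩
    have hwxpos : 0 < w x := lt_of_lt_of_le hwr₁ hwx
    have hxne0 : r₀ < x := by
      rcases lt_or_eq_of_le hxmem.1 with h | h
      · exact h
      · exfalso; rw [← h] at hwxpos; rw [hwr₀] at hwxpos; exact lt_irrefl 0 hwxpos
    have hxneR : x < R := by
      rcases lt_or_eq_of_le hxmem.2 with h | h
      · exact h
      · exfalso
        have : w R < w r₁ := hR' R (le_max_left _ _)
        rw [← h] at this
        linarith
    have hxpos : 0 < x := lt_trans hr₀pos hxne0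
    have hxmem' : (Ioi (0:ℝ)) ∈ 𝓝 x := isOpen_Ioi.mem_nhds hxpos
    have hloc : IsLocalMax w x := hxmax.isLocalMax (Icc_mem_nhds hxne0 hxneR)
    have hglob : ∀ y, x ≤ y → w y ≤ w x := by
      intro y hy
      rcases le_or_gt y R with h | h
      · exact hxmax ⟨le_trans hxmem.1 hy, h⟩
      · have h1 : w y < w r₁ := hR' y (le_trans (le_max_left _ _) h.le)
        linarith
    -- compute second derivative of w at x
    have hgx : DifferentiableAt ℝ g x := hgd.differentiableAt hxmem'
    have hσx : DifferentiableAt ℝ σ x := (hσ1 x).differentiableAt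
    have hdw : deriv w x = deriv g x - deriv σ x := deriv_sub hgx hσx
    have hdw0 : deriv w x = 0 := hloc.deriv_eq_zero
    have hdg : deriv g x = K * (-β) * Real.exp (-β * x) := by
      have := (hσ1 x).deriv
      rw [hdw0] at hdw
      linarith [hdw, this]
    have hddw : deriv (deriv w) x = deriv (deriv g) x - deriv (deriv σ) x := by
      have heq : deriv w =ᶠ[𝓝 x] fun y => deriv g y - deriv σ y := by
        filter_upwards [hxmem'] with y hy
        exact deriv_sub (hgd.differentiableAt (isOpen_Ioi.mem_nhds hy))
          (hσ1 y).differentiableAt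
      rw [heq.deriv_eq]
      exact deriv_sub (hg'd.differentiableAt hxmem')
        (by rw [hσ1']; exact (expAux (K * (-β)) (-β) x).differentiableAt)
    have hodex := hode x hxpos
    have hddg : deriv (deriv g) x = α ^ 2 * g x
        + (1/2) * ((f x) ^ 2 + (g x) ^ 2 - 1) * g x - (1 / x) * deriv g x := by
      linarith
    have hcx : β ^ 2 ≤ α ^ 2 + (1/2) * ((f x) ^ 2 + (g x) ^ 2 - 1) :=
      hcoef x (le_of_lt hxne0)
    have hgxnn : 0 ≤ g x := hgnn x (le_of_lt hxpos)
    have hexppos : 0 < Real.exp (-β * x) := Real.exp_pos _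
    have hwxval : w x = g x - K * Real.exp (-β * x) := rfl
    have hddwpos : 0 < deriv (deriv w) x := by
      rw [hddw, hddg, hdg, hσ2 x]
      have h2 : β^2 * g x ≤ (α^2 + 1/2 * ((f x)^2 + (g x)^2 - 1)) * g x :=
        mul_le_mul_of_nonneg_right hcx hgxnn
      have h3 : 0 < β^2 * w x := mul_pos (pow_pos hβ 2) hwxpos
      rw [hwxval] at h3
      have h1 : 0 ≤ 1/x * (K * β * Real.exp (-β * x)) := by positivity
      linarith only [h1, h2, h3]
    exact no_pos_second_deriv_max hxpos hwd hw'd hloc hglob hddwpos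
  -- conclude
  rw [isBigO_iff]
  refine ⟨K, ?_⟩
  filter_upwards [eventually_ge_atTop r₀] with r hr
  have hrpos : 0 < r := lt_of_lt_of_le hr₀pos hr
  have h1 : g r ≤ σ r := by
    have := hmaxp r hr
    simp only [hwdef] at this
    linarith
  have h2 : 0 ≤ g r := hgnn r hrpos.le
  rw [Real.norm_eq_abs, Real.norm_eq_abs, abs_of_nonneg h2,
    abs_of_pos (Real.exp_pos _)]
  have : -α * (1 - ε) * r = -β * r := by rw [hβdef]; ring
  rw [this]
  exact h1
end

section
/- Let f : [0,∞) → ℝ be continuous with f(r) → 1 as r → ∞ and r > 0 ⇒ f(r) > 0. Suppose g₁, g₂ : [0,∞) → ℝ are two positive C² solutions on (0,∞) of g'' + (1/r) g' - α² g - (1/2)(f² + g² - 1) g = 0 with g_i'(0) = 0, g_i(∞) = 0, both decaying exponentially at infinity and bounded near 0 with g_i(0) > 0. Then g₁ = g₂ on (0,∞). -/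
open Filter Set

set_option maxHeartbeats 1000000

private lemma aux_inv (u c2 x : ℝ) : u / c2 * x⁻¹ = u / (x * c2) := by
  rw [div_eq_mul_inv, div_eq_mul_inv, mul_inv]; ring

private lemma aux_exp (u v c2 : ℝ) (hu : u ≠ 0) (hc : c2 ≠ 0) :
    u / c2 * (v * c2 / u + 1) = v + u / c2 := by
  field_simp

private lemma key_contra (α : ℝ) (f g₁ g₂ : ℝ → ℝ)
    (h₁ : ContDiffOn ℝ 2 g₁ (Ioi 0)) (h₂ : ContDiffOn ℝ 2 g₂ (Ioi 0))
    (hpos₁ : ∀ r ∈ Ioi (0:ℝ), 0 < g₁ r) (hpos₂ : ∀ r ∈ Ioi (0:ℝ), 0 < g₂ r)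
    (hode₁ : ∀ r ∈ Ioi (0:ℝ),
      deriv (deriv g₁) r + (1 / r) * deriv g₁ r - α ^ 2 * g₁ r
        - (1 / 2) * ((f r) ^ 2 + (g₁ r) ^ 2 - 1) * g₁ r = 0)
    (hode₂ : ∀ r ∈ Ioi (0:ℝ),
      deriv (deriv g₂) r + (1 / r) * deriv g₂ r - α ^ 2 * g₂ r
        - (1 / 2) * ((f r) ^ 2 + (g₂ r) ^ 2 - 1) * g₂ r = 0)
    (hdec₁ : ∃ C > (0:ℝ), ∃ c > (0:ℝ), ∀ r ≥ (1:ℝ), g₁ r ≤ C * Real.exp (-c * r))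
    (hbd₁ : ∃ C : ℝ, ∀ r ∈ Ioc (0:ℝ) 1, g₁ r ≤ C)
    {ρ : ℝ} (hρ : 0 < ρ) (hgt : g₂ ρ < g₁ ρ) : False := by
  -- basic derivative facts
  have hd1 : ∀ r ∈ Ioi (0:ℝ), HasDerivAt g₁ (deriv g₁ r) r := fun r hr =>
    ((h₁.differentiableOn two_ne_zero).differentiableAt (Ioi_mem_nhds hr)).hasDerivAt
  have hd2 : ∀ r ∈ Ioi (0:ℝ), HasDerivAt g₂ (deriv g₂ r) r := fun r hr =>
    ((h₂.differentiableOn two_ne_zero).differentiableAt (Ioi_mem_nhds hr)).hasDerivAt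
  have h₁' : ContDiffOn ℝ 1 (deriv g₁) (Ioi 0) := h₁.deriv_of_isOpen isOpen_Ioi (by norm_num)
  have h₂' : ContDiffOn ℝ 1 (deriv g₂) (Ioi 0) := h₂.deriv_of_isOpen isOpen_Ioi (by norm_num)
  have hd1' : ∀ r ∈ Ioi (0:ℝ), HasDerivAt (deriv g₁) (deriv (deriv g₁) r) r := fun r hr =>
    ((h₁'.differentiableOn one_ne_zero).differentiableAt (Ioi_mem_nhds hr)).hasDerivAt
  have hd2' : ∀ r ∈ Ioi (0:ℝ), HasDerivAt (deriv g₂) (deriv (deriv g₂) r) r := fun r hr =>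
    ((h₂'.differentiableOn one_ne_zero).differentiableAt (Ioi_mem_nhds hr)).hasDerivAt
  set W : ℝ → ℝ := fun t => t * (deriv g₁ t * g₂ t - deriv g₂ t * g₁ t) with hWdef
  set h : ℝ → ℝ := fun t => g₂ t / g₁ t with hhdef
  -- derivative of W
  have hW : ∀ r ∈ Ioi (0:ℝ),
      HasDerivAt W (r / 2 * (g₁ r * g₂ r) * ((g₁ r) ^ 2 - (g₂ r) ^ 2)) r := by
    intro r hr
    have hrne : r ≠ 0 := ne_of_gt hr
    have H3 := (hasDerivAt_id r).mul (((hd1' r hr).mul (hd2 r hr)).sub ((hd2' r hr).mul (hd1 r hr)))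
    refine H3.congr_deriv ?_
    have o₁ := hode₁ r hr; have o₂ := hode₂ r hr
    have e₁ : deriv (deriv g₁) r = -((1/r) * deriv g₁ r) + α ^ 2 * g₁ r
        + (1/2) * ((f r) ^ 2 + (g₁ r) ^ 2 - 1) * g₁ r := by linarith
    have e₂ : deriv (deriv g₂) r = -((1/r) * deriv g₂ r) + α ^ 2 * g₂ r
        + (1/2) * ((f r) ^ 2 + (g₂ r) ^ 2 - 1) * g₂ r := by linarith
    rw [e₁, e₂]; simp only [Pi.sub_apply, Pi.mul_apply, id]; field_simp; ring
  -- derivative of h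
  have hh : ∀ r ∈ Ioi (0:ℝ), HasDerivAt h (-W r / (r * (g₁ r) ^ 2)) r := by
    intro r hr
    have hrne : r ≠ 0 := ne_of_gt hr
    have hg1 : g₁ r ≠ 0 := ne_of_gt (hpos₁ r hr)
    have H := (hd2 r hr).div (hd1 r hr) hg1
    refine H.congr_deriv ?_
    rw [hWdef]; field_simp; ring
  have hg1c : ContinuousOn g₁ (Ioi 0) := fun r hr => (hd1 r hr).continuousAt.continuousWithinAt
  have hg2c : ContinuousOn g₂ (Ioi 0) := fun r hr => (hd2 r hr).continuousAt.continuousWithinAt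
  have hWc : ContinuousOn W (Ioi 0) := fun r hr => (hW r hr).continuousAt.continuousWithinAt
  have hhc : ContinuousOn h (Ioi 0) := fun r hr => (hh r hr).continuousAt.continuousWithinAt
  -- monotonicity of W on intervals where g₂ < g₁
  have Wmono : ∀ a b : ℝ, 0 < a → (∀ s ∈ Ioo a b, g₂ s < g₁ s) →
      ∀ x ∈ Icc a b, ∀ y ∈ Icc a b, x ≤ y → W x ≤ W y := by
    intro a b ha hgs
    have hsub : Icc a b ⊆ Ioi 0 := fun x hx => lt_of_lt_of_le ha hx.1
    have hsub' : Ioo a b ⊆ Ioi 0 := fun x hx => lt_trans ha hx.1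
    have := monotoneOn_of_deriv_nonneg (convex_Icc a b) (hWc.mono hsub)
      (fun x hx => by
        rw [interior_Icc] at hx
        exact ((hW x (hsub' hx)).differentiableAt).differentiableWithinAt)
      (fun x hx => by
        rw [interior_Icc] at hx
        have hx0 : x ∈ Ioi (0:ℝ) := hsub' hx
        rw [(hW x hx0).deriv]
        have h1 := hpos₁ x hx0; have h2 := hpos₂ x hx0; have h3 := hgs x hx
        have hx0' : (0:ℝ) < x := hx0
        exact mul_nonneg (by positivity) (by nlinarith))
    exact fun x hx y hy hxy => this hx hy hxy
  -- h < 1 at ρ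
  have hρ' : ρ ∈ Ioi (0:ℝ) := hρ
  -- forward persistence claim given 0 ≤ W ρ and backward claim given W ρ < 0
  rcases le_or_gt 0 (W ρ) with hWρ | hWρ
  · -- forward case
    have Gfwd : ∀ t, ρ ≤ t → g₂ t < g₁ t := by
      intro t ht
      by_contra hcon
      push_neg at hcon
      -- there is a first crossing r₁ in [ρ, t]
      set S : Set ℝ := Icc ρ t ∩ (fun s => g₁ s - g₂ s) ⁻¹' (Iic 0) with hSdef
      have hsubS : Icc ρ t ⊆ Ioi 0 := fun x hx => lt_of_lt_of_le hρ hx.1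
      have hScl : IsClosed S := by
        apply ContinuousOn.preimage_isClosed_of_isClosed
        · exact (hg1c.sub hg2c).mono hsubS
        · exact isClosed_Icc
        · exact isClosed_Iic
      have hSne : S.Nonempty := ⟨t, ⟨le_of_not_gt fun htρ => absurd ht (not_le_of_gt htρ), le_rfl⟩,
        by simpa using hcon⟩
      have hSbdd : BddBelow S := ⟨ρ, fun x hx => hx.1.1⟩
      set r₁ := sInf S with hr₁def
      have hr₁S : r₁ ∈ S := hScl.csInf_mem hSne hSbdd
      have hr₁pos : 0 < r₁ := lt_of_lt_of_le hρ hr₁S.1.1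
      have hr₁le : g₁ r₁ ≤ g₂ r₁ := by have := hr₁S.2; simp at this; linarith
      have hρr₁ : ρ < r₁ := lt_of_le_of_ne hr₁S.1.1 (fun he => by
        rw [← he] at hr₁le; linarith)
      have hml : ∀ s ∈ Ico ρ r₁, g₂ s < g₁ s := by
        intro s hs
        by_contra hc; push_neg at hc
        have hsS : s ∈ S := ⟨⟨hs.1, le_trans (le_of_lt hs.2) hr₁S.1.2⟩,
          by simp; linarith⟩
        exact absurd (csInf_le hSbdd hsS) (not_le_of_gt hs.2)
      have hWge : ∀ s ∈ Icc ρ r₁, 0 ≤ W s := by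
        intro s hs
        have := Wmono ρ r₁ hρ (fun u hu => hml u ⟨le_of_lt hu.1, hu.2⟩) ρ
          ⟨le_rfl, le_of_lt hρr₁⟩ s hs hs.1
        linarith
      have hsubI : Icc ρ r₁ ⊆ Ioi 0 := fun x hx => lt_of_lt_of_le hρ hx.1
      have hanti := antitoneOn_of_deriv_nonpos (convex_Icc ρ r₁) (hhc.mono hsubI)
        (fun x hx => by
          rw [interior_Icc] at hx
          exact ((hh x (hsubI (Ioo_subset_Icc_self hx))).differentiableAt).differentiableWithinAt)
        (fun x hx => by
          rw [interior_Icc] at hx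
          have hx0 : x ∈ Ioi (0:ℝ) := hsubI (Ioo_subset_Icc_self hx)
          rw [(hh x hx0).deriv]
          have hWx := hWge x (Ioo_subset_Icc_self hx)
          have h1 := hpos₁ x hx0
          have hx0' : (0:ℝ) < x := hx0
          exact div_nonpos_of_nonpos_of_nonneg (by linarith) (by positivity))
      have hfin := hanti ⟨le_rfl, le_of_lt hρr₁⟩ ⟨le_of_lt hρr₁, le_rfl⟩ (le_of_lt hρr₁)
      have hlt : h ρ < 1 := (div_lt_one (hpos₁ ρ hρ')).2 hgt
      have hge : 1 ≤ h r₁ := (one_le_div (hpos₁ r₁ hr₁pos)).2 hr₁le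
      linarith
    -- now the forward contradiction using decay of g₁
    obtain ⟨C, hC, c, hc, hdecC⟩ := hdec₁
    set a := ρ + 1 with hadef
    have ha1 : 1 < a := by linarith
    have ha0 : 0 < a := by linarith
    have haI : a ∈ Ioi (0:ℝ) := ha0
    have hsubA : Icc ρ a ⊆ Ioi 0 := fun x hx => lt_of_lt_of_le hρ hx.1
    have hWsm := strictMonoOn_of_deriv_pos (convex_Icc ρ a) (hWc.mono hsubA)
      (fun x hx => by
        rw [interior_Icc] at hx
        have hx0 : x ∈ Ioi (0:ℝ) := hsubA (Ioo_subset_Icc_self hx)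
        rw [(hW x hx0).deriv]
        have h1 := hpos₁ x hx0; have h2 := hpos₂ x hx0
        have h3 := Gfwd x (le_of_lt hx.1)
        have hx0' : (0:ℝ) < x := hx0
        have hsq : 0 < g₁ x ^ 2 - g₂ x ^ 2 := by nlinarith
        exact mul_pos (by positivity) hsq)
    set w := W a with hwdef
    have hw : 0 < w :=
      lt_of_le_of_lt hWρ (hWsm ⟨le_rfl, by linarith⟩ ⟨by linarith, le_rfl⟩ (by linarith))
    have hg1le : ∀ t, a ≤ t → g₁ t ≤ C := by
      intro t ht
      have h1t : (1:ℝ) ≤ t := le_trans (le_of_lt ha1) ht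
      have hd := hdecC t h1t
      have he : Real.exp (-c * t) ≤ 1 := Real.exp_le_one_iff.2 (by nlinarith)
      nlinarith
    have hWget : ∀ t, a ≤ t → w ≤ W t := fun t ht =>
      Wmono a t ha0 (fun s hs => Gfwd s (by linarith [hs.1])) a ⟨le_rfl, ht⟩ t ⟨ht, le_rfl⟩ ht
    have hha : 0 < h a := div_pos (hpos₂ a haI) (hpos₁ a haI)
    set E := h a * C ^ 2 / w + 1 with hEdef
    have hE : 0 < E := by positivity
    set R := a * Real.exp E with hRdef
    have haR : a < R := lt_mul_of_one_lt_right ha0 (Real.one_lt_exp_iff.2 hE)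
    have hRpos : (0:ℝ) < R := lt_trans ha0 haR
    have hRI : R ∈ Ioi (0:ℝ) := hRpos
    have hsubR : Icc a R ⊆ Ioi 0 := fun x hx => lt_of_lt_of_le ha0 hx.1
    set φ : ℝ → ℝ := fun t => h t + (w / C ^ 2) * Real.log t with hφdef
    have hφd : ∀ x ∈ Ioi (0:ℝ),
        HasDerivAt φ (-W x / (x * (g₁ x) ^ 2) + (w / C ^ 2) * x⁻¹) x := fun x hx =>
      (hh x hx).add ((Real.hasDerivAt_log (ne_of_gt hx)).const_mul (w / C ^ 2))
    have hφc : ContinuousOn φ (Ioi 0) := fun x hx => (hφd x hx).continuousAt.continuousWithinAt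
    have hφanti := antitoneOn_of_deriv_nonpos (convex_Icc a R) (hφc.mono hsubR)
      (fun x hx => by
        rw [interior_Icc] at hx
        exact ((hφd x (hsubR (Ioo_subset_Icc_self hx))).differentiableAt).differentiableWithinAt)
      (fun x hx => by
        rw [interior_Icc] at hx
        have hx0 : x ∈ Ioi (0:ℝ) := hsubR (Ioo_subset_Icc_self hx)
        rw [(hφd x hx0).deriv]
        have hWx := hWget x (le_of_lt hx.1)
        have hg1x := hpos₁ x hx0
        have hgC := hg1le x (le_of_lt hx.1)
        have hx0' : (0:ℝ) < x := hx0
        have hkey : w / (x * C ^ 2) ≤ W x / (x * g₁ x ^ 2) :=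
          div_le_div₀ (le_of_lt (lt_of_lt_of_le hw hWx)) hWx (by positivity)
            (by have hsq : g₁ x ^ 2 ≤ C ^ 2 := by nlinarith
                nlinarith)
        have he1 : w / C ^ 2 * x⁻¹ = w / (x * C ^ 2) := aux_inv w (C ^ 2) x
        have he2 : -W x / (x * g₁ x ^ 2) = -(W x / (x * g₁ x ^ 2)) := neg_div _ _
        rw [he1, he2]; linarith)
    have hfin := hφanti ⟨le_rfl, le_of_lt haR⟩ ⟨le_of_lt haR, le_rfl⟩ (le_of_lt haR)
    have hlogR : Real.log R = Real.log a + E := by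
      rw [hRdef, Real.log_mul (ne_of_gt ha0) (Real.exp_ne_zero _), Real.log_exp]
    have hhR : 0 < h R := div_pos (hpos₂ R hRI) (hpos₁ R hRI)
    have hexp : w / C ^ 2 * E = h a + w / C ^ 2 := by
      rw [hEdef]; exact aux_exp w (h a) (C ^ 2) (ne_of_gt hw) (by positivity)
    have hfin' : h R + (w / C ^ 2) * (Real.log a + E) ≤ h a + (w / C ^ 2) * Real.log a := by
      have := hfin
      simp only [hφdef] at this
      rw [hlogR] at this
      exact this
    have hdist : (w / C ^ 2) * (Real.log a + E)
        = (w / C ^ 2) * Real.log a + (w / C ^ 2) * E := by ring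
    have hwC : 0 < w / C ^ 2 := by positivity
    linarith
  · -- backward case : W ρ < 0
    have Gbwd : ∀ t, 0 < t → t ≤ ρ → g₂ t < g₁ t := by
      intro t ht htρ
      by_contra hcon; push_neg at hcon
      set S : Set ℝ := Icc t ρ ∩ (fun s => g₁ s - g₂ s) ⁻¹' (Iic 0) with hSdef
      have hsubS : Icc t ρ ⊆ Ioi 0 := fun x hx => lt_of_lt_of_le ht hx.1
      have hScl : IsClosed S := ContinuousOn.preimage_isClosed_of_isClosed
        ((hg1c.sub hg2c).mono hsubS) isClosed_Icc isClosed_Iic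
      have hSne : S.Nonempty := ⟨t, ⟨le_rfl, htρ⟩, by simpa using hcon⟩
      have hSbdd : BddAbove S := ⟨ρ, fun x hx => hx.1.2⟩
      set r₁ := sSup S with hr₁def
      have hr₁S : r₁ ∈ S := hScl.csSup_mem hSne hSbdd
      have hr₁pos : 0 < r₁ := lt_of_lt_of_le ht hr₁S.1.1
      have hr₁le : g₁ r₁ ≤ g₂ r₁ := by have := hr₁S.2; simp at this; linarith
      have hr₁ρ : r₁ < ρ := lt_of_le_of_ne hr₁S.1.2 (fun he => by
        rw [he] at hr₁le; linarith)
      have hml : ∀ s ∈ Ioc r₁ ρ, g₂ s < g₁ s := by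
        intro s hs
        by_contra hc; push_neg at hc
        have hsS : s ∈ S := ⟨⟨le_trans hr₁S.1.1 (le_of_lt hs.1), hs.2⟩, by simp; linarith⟩
        exact absurd (le_csSup hSbdd hsS) (not_le_of_gt hs.1)
      have hWle : ∀ s ∈ Icc r₁ ρ, W s ≤ W ρ := fun s hs =>
        Wmono r₁ ρ hr₁pos (fun u hu => hml u ⟨hu.1, le_of_lt hu.2⟩) s hs ρ
          ⟨hr₁S.1.2, le_rfl⟩ hs.2
      have hsubI : Icc r₁ ρ ⊆ Ioi 0 := fun x hx => lt_of_lt_of_le hr₁pos hx.1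
      have hmono := monotoneOn_of_deriv_nonneg (convex_Icc r₁ ρ) (hhc.mono hsubI)
        (fun x hx => by
          rw [interior_Icc] at hx
          exact ((hh x (hsubI (Ioo_subset_Icc_self hx))).differentiableAt).differentiableWithinAt)
        (fun x hx => by
          rw [interior_Icc] at hx
          have hx0 : x ∈ Ioi (0:ℝ) := hsubI (Ioo_subset_Icc_self hx)
          rw [(hh x hx0).deriv]
          have hWx := hWle x (Ioo_subset_Icc_self hx)
          have h1 := hpos₁ x hx0
          have hx0' : (0:ℝ) < x := hx0
          exact div_nonneg (by linarith) (by positivity))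
      have hfin := hmono ⟨le_rfl, le_of_lt hr₁ρ⟩ ⟨le_of_lt hr₁ρ, le_rfl⟩ (le_of_lt hr₁ρ)
      have hlt : h ρ < 1 := (div_lt_one (hpos₁ ρ hρ')).2 hgt
      have hge : 1 ≤ h r₁ := (one_le_div (hpos₁ r₁ hr₁pos)).2 hr₁le
      linarith
    -- backward contradiction using boundedness of g₁ near 0
    obtain ⟨C₀, hbd⟩ := hbd₁
    set B := max C₀ 1 with hBdef
    have hB1 : (1:ℝ) ≤ B := le_max_right _ _
    have hB0 : (0:ℝ) < B := lt_of_lt_of_le one_pos hB1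
    have hg1le : ∀ t, 0 < t → t ≤ 1 → g₁ t ≤ B := fun t ht ht1 =>
      le_trans (hbd t ⟨ht, ht1⟩) (le_max_left _ _)
    set w := -W ρ with hwdef
    have hw : 0 < w := by rw [hwdef]; linarith
    have hWle : ∀ t, 0 < t → t ≤ ρ → W t ≤ W ρ := fun t ht htρ =>
      Wmono t ρ ht (fun s hs => Gbwd s (lt_trans ht hs.1) (le_of_lt hs.2)) t
        ⟨le_rfl, htρ⟩ ρ ⟨htρ, le_rfl⟩ htρ
    set a := min ρ 1 with hadef
    have ha0 : 0 < a := lt_min hρ one_pos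
    have haρ : a ≤ ρ := min_le_left _ _
    have ha1 : a ≤ 1 := min_le_right _ _
    have haI : a ∈ Ioi (0:ℝ) := ha0
    have hha : 0 < h a := div_pos (hpos₂ a haI) (hpos₁ a haI)
    set E := h a * B ^ 2 / w + 1 with hEdef
    have hE : 0 < E := by positivity
    set R := a * Real.exp (-E) with hRdef
    have hR0 : (0:ℝ) < R := mul_pos ha0 (Real.exp_pos _)
    have hRI : R ∈ Ioi (0:ℝ) := hR0
    have hRa : R < a := by
      have hlt1 : Real.exp (-E) < 1 := Real.exp_lt_one_iff.2 (by linarith)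
      calc R = a * Real.exp (-E) := rfl
        _ < a * 1 := by exact mul_lt_mul_of_pos_left hlt1 ha0
        _ = a := mul_one a
    have hsubR : Icc R a ⊆ Ioi 0 := fun x hx => lt_of_lt_of_le hR0 hx.1
    set φ : ℝ → ℝ := fun t => h t - (w / B ^ 2) * Real.log t with hφdef
    have hφd : ∀ x ∈ Ioi (0:ℝ),
        HasDerivAt φ (-W x / (x * (g₁ x) ^ 2) - (w / B ^ 2) * x⁻¹) x := fun x hx =>
      (hh x hx).sub ((Real.hasDerivAt_log (ne_of_gt hx)).const_mul (w / B ^ 2))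
    have hφc : ContinuousOn φ (Ioi 0) := fun x hx => (hφd x hx).continuousAt.continuousWithinAt
    have hφmono := monotoneOn_of_deriv_nonneg (convex_Icc R a) (hφc.mono hsubR)
      (fun x hx => by
        rw [interior_Icc] at hx
        exact ((hφd x (hsubR (Ioo_subset_Icc_self hx))).differentiableAt).differentiableWithinAt)
      (fun x hx => by
        rw [interior_Icc] at hx
        have hx0 : x ∈ Ioi (0:ℝ) := hsubR (Ioo_subset_Icc_self hx)
        rw [(hφd x hx0).deriv]
        have hx0' : (0:ℝ) < x := hx0
        have hWx := hWle x hx0' (le_trans (le_of_lt hx.2) haρ)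
        have hg1x := hpos₁ x hx0
        have hgB := hg1le x hx0' (le_trans (le_of_lt hx.2) ha1)
        have hkey : w / (x * B ^ 2) ≤ -W x / (x * g₁ x ^ 2) :=
          div_le_div₀ (by linarith) (by rw [hwdef]; linarith) (by positivity)
            (by have hsq : g₁ x ^ 2 ≤ B ^ 2 := by nlinarith
                nlinarith)
        have he1 : w / B ^ 2 * x⁻¹ = w / (x * B ^ 2) := aux_inv w (B ^ 2) x
        rw [he1]; linarith)
    have hfin := hφmono ⟨le_rfl, le_of_lt hRa⟩ ⟨le_of_lt hRa, le_rfl⟩ (le_of_lt hRa)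
    have hlogR : Real.log R = Real.log a + (-E) := by
      rw [hRdef, Real.log_mul (ne_of_gt ha0) (Real.exp_ne_zero _), Real.log_exp]
    have hhR : 0 < h R := div_pos (hpos₂ R hRI) (hpos₁ R hRI)
    have hexp : w / B ^ 2 * E = h a + w / B ^ 2 := by
      rw [hEdef]; exact aux_exp w (h a) (B ^ 2) (ne_of_gt hw) (by positivity)
    have hfin' : h R - (w / B ^ 2) * (Real.log a + (-E)) ≤ h a - (w / B ^ 2) * Real.log a := by
      have := hfin
      simp only [hφdef] at this
      rw [hlogR] at this
      exact this
    have hdist : (w / B ^ 2) * (Real.log a + (-E))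
        = (w / B ^ 2) * Real.log a - (w / B ^ 2) * E := by ring
    have hwB : 0 < w / B ^ 2 := by positivity
    linarith

/-- Uniqueness for the neutral scalar profile: two positive C² solutions on `(0,∞)`
of `g'' + (1/r) g' - α² g - (1/2)(f² + g² - 1) g = 0` with `g'(0) = 0`, `g(∞) = 0`,
exponential decay at infinity, boundedness near `0` and `g(0) > 0` coincide. -/
theorem stmt5 (α : ℝ) (hα : α > 0) (f g₁ g₂ : ℝ → ℝ)
    (hf : ContinuousOn f (Ici 0)) (hflim : Tendsto f atTop (nhds 1))
    (hfpos : ∀ r > (0:ℝ), 0 < f r)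
    (h₁ : ContDiffOn ℝ 2 g₁ (Ioi 0)) (h₂ : ContDiffOn ℝ 2 g₂ (Ioi 0))
    (hpos₁ : ∀ r ∈ Ioi (0:ℝ), 0 < g₁ r) (hpos₂ : ∀ r ∈ Ioi (0:ℝ), 0 < g₂ r)
    (hode₁ : ∀ r ∈ Ioi (0:ℝ),
      deriv (deriv g₁) r + (1 / r) * deriv g₁ r - α ^ 2 * g₁ r
        - (1 / 2) * ((f r) ^ 2 + (g₁ r) ^ 2 - 1) * g₁ r = 0)
    (hode₂ : ∀ r ∈ Ioi (0:ℝ),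
      deriv (deriv g₂) r + (1 / r) * deriv g₂ r - α ^ 2 * g₂ r
        - (1 / 2) * ((f r) ^ 2 + (g₂ r) ^ 2 - 1) * g₂ r = 0)
    (hd₁ : deriv g₁ 0 = 0) (hd₂ : deriv g₂ 0 = 0)
    (hlim₁ : Tendsto g₁ atTop (nhds 0)) (hlim₂ : Tendsto g₂ atTop (nhds 0))
    (hdec₁ : ∃ C > (0:ℝ), ∃ c > (0:ℝ), ∀ r ≥ (1:ℝ), g₁ r ≤ C * Real.exp (-c * r))
    (hdec₂ : ∃ C > (0:ℝ), ∃ c > (0:ℝ), ∀ r ≥ (1:ℝ), g₂ r ≤ C * Real.exp (-c * r))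
    (hbd₁ : ∃ C : ℝ, ∀ r ∈ Ioc (0:ℝ) 1, g₁ r ≤ C)
    (hbd₂ : ∃ C : ℝ, ∀ r ∈ Ioc (0:ℝ) 1, g₂ r ≤ C)
    (h0₁ : 0 < g₁ 0) (h0₂ : 0 < g₂ 0) :
    ∀ r ∈ Ioi (0:ℝ), g₁ r = g₂ r := by
  intro r hr
  by_contra hne
  rcases lt_or_gt_of_ne hne with hlt | hgt
  · exact key_contra α f g₂ g₁ h₂ h₁ hpos₂ hpos₁ hode₂ hode₁ hdec₂ hbd₂ hr hlt
  · exact key_contra α f g₁ g₂ h₁ h₂ hpos₁ hpos₂ hode₁ hode₂ hdec₁ hbd₁ hr hgt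
end

section
/- Let a, g : [0,∞) → ℝ be continuous with 0 < a(r) < 1 for r > 0 and g bounded. Suppose f₁, f₂ : [0,∞) → ℝ are two positive C² solutions on (0,∞) of f'' + (1/r) f' - (a²/r²) f - (1/2)(f² + g² - 1) f = 0 with f_i(0) = 0, f_i(∞) = 1, f_i(r) = O(r) near 0, and 1 - f_i decaying exponentially at infinity. Then f₁ = f₂ on (0,∞). -/
open Filter Set
open Filter Set

lemma regAux (f : ℝ → ℝ) (h : ContDiffOn ℝ 2 f (Ioi 0)) {r : ℝ} (hr : r ∈ Ioi (0:ℝ)) :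
    HasDerivAt f (deriv f r) r ∧ HasDerivAt (deriv f) (deriv (deriv f) r) r := by
  have h1 : DifferentiableOn ℝ f (Ioi 0) := h.differentiableOn (by norm_num)
  have h2 : ContDiffOn ℝ 1 (deriv f) (Ioi 0) := h.deriv_of_isOpen isOpen_Ioi (by norm_num)
  have h3 : DifferentiableOn ℝ (deriv f) (Ioi 0) := h2.differentiableOn (by norm_num)
  exact ⟨(h1.differentiableAt (isOpen_Ioi.mem_nhds hr)).hasDerivAt,
    (h3.differentiableAt (isOpen_Ioi.mem_nhds hr)).hasDerivAt⟩

lemma WAux (a g f₁ f₂ : ℝ → ℝ)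
    (h₁ : ContDiffOn ℝ 2 f₁ (Ioi 0)) (h₂ : ContDiffOn ℝ 2 f₂ (Ioi 0))
    (hode₁ : ∀ r ∈ Ioi (0:ℝ),
      deriv (deriv f₁) r + (1 / r) * deriv f₁ r - ((a r) ^ 2 / r ^ 2) * f₁ r
        - (1 / 2) * ((f₁ r) ^ 2 + (g r) ^ 2 - 1) * f₁ r = 0)
    (hode₂ : ∀ r ∈ Ioi (0:ℝ),
      deriv (deriv f₂) r + (1 / r) * deriv f₂ r - ((a r) ^ 2 / r ^ 2) * f₂ r
        - (1 / 2) * ((f₂ r) ^ 2 + (g r) ^ 2 - 1) * f₂ r = 0)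
    {r : ℝ} (hr : r ∈ Ioi (0:ℝ)) :
    HasDerivAt (fun s => s * (deriv f₁ s * f₂ s - deriv f₂ s * f₁ s))
      (r / 2 * ((f₁ r) ^ 2 - (f₂ r) ^ 2) * (f₁ r * f₂ r)) r := by
  have hr0 : r ≠ 0 := ne_of_gt hr
  obtain ⟨hd₁, hdd₁⟩ := regAux f₁ h₁ hr
  obtain ⟨hd₂, hdd₂⟩ := regAux f₂ h₂ hr
  have H : HasDerivAt (fun s => s * (deriv f₁ s * f₂ s - deriv f₂ s * f₁ s))
      (1 * (deriv f₁ r * f₂ r - deriv f₂ r * f₁ r) +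
        r * ((deriv (deriv f₁) r * f₂ r + deriv f₁ r * deriv f₂ r) -
             (deriv (deriv f₂) r * f₁ r + deriv f₂ r * deriv f₁ r))) r :=
    (hasDerivAt_id r).mul ((hdd₁.mul hd₂).sub (hdd₂.mul hd₁))
  convert H using 1
  have e₁ := hode₁ r hr
  have e₂ := hode₂ r hr
  have E₁ : deriv (deriv f₁) r = ((a r) ^ 2 / r ^ 2) * f₁ r
      + (1 / 2) * ((f₁ r) ^ 2 + (g r) ^ 2 - 1) * f₁ r - (1 / r) * deriv f₁ r := by linarith
  have E₂ : deriv (deriv f₂) r = ((a r) ^ 2 / r ^ 2) * f₂ r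
      + (1 / 2) * ((f₂ r) ^ 2 + (g r) ^ 2 - 1) * f₂ r - (1 / r) * deriv f₂ r := by linarith
  rw [E₁, E₂]
  field_simp
  ring
open Filter Set

lemma derivRight {f : ℝ → ℝ} {x l b : ℝ} (hf : HasDerivAt f l x) (hxb : x < b)
    (h0 : f x = 0) (hpos : ∀ y ∈ Ioo x b, 0 ≤ f y) : 0 ≤ l := by
  have h := hasDerivAt_iff_tendsto_slope.1 hf
  have hmono : nhdsWithin x (Ioi x) ≤ nhdsWithin x {x}ᶜ :=
    nhdsWithin_mono x (fun y hy => ne_of_gt hy)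
  refine ge_of_tendsto (h.mono_left hmono) ?_
  filter_upwards [Ioo_mem_nhdsGT_of_mem (⟨le_rfl, hxb⟩ : x ∈ Ico x b)] with y hy
  rw [slope_def_field, h0, sub_zero]
  exact div_nonneg (hpos y hy) (by linarith [hy.1])

lemma derivLeft {f : ℝ → ℝ} {x l a : ℝ} (hf : HasDerivAt f l x) (hax : a < x)
    (h0 : f x = 0) (hpos : ∀ y ∈ Ioo a x, 0 ≤ f y) : l ≤ 0 := by
  have h := hasDerivAt_iff_tendsto_slope.1 hf
  have hmono : nhdsWithin x (Iio x) ≤ nhdsWithin x {x}ᶜ :=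
    nhdsWithin_mono x (fun y hy => ne_of_lt hy)
  refine le_of_tendsto (h.mono_left hmono) ?_
  filter_upwards [Ioo_mem_nhdsLT_of_mem (⟨hax, le_rfl⟩ : x ∈ Ioc a x)] with y hy
  rw [slope_def_field, h0, sub_zero]
  exact div_nonpos_of_nonneg_of_nonpos (hpos y hy) (by linarith [hy.2])

lemma closureLe {f : ℝ → ℝ} {s : Set ℝ} {x : ℝ} (hc : ContinuousAt f x)
    (hx : x ∈ closure s) (hs : ∀ y ∈ s, f y ≤ 0) : f x ≤ 0 := by
  by_contra h
  push_neg at h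
  have hmem : f ⁻¹' (Ioi 0) ∈ nhds x := hc.preimage_mem_nhds (Ioi_mem_nhds h)
  obtain ⟨y, hy1, hy2⟩ := mem_closure_iff_nhds.1 hx _ hmem
  exact absurd (hs y hy2) (not_le.2 hy1)

lemma blowZero (f₁ f₂ : ℝ → ℝ) {C δ μ : ℝ} (hC : 0 < C) (hδ : 0 < δ) (hδ1 : δ ≤ 1) (hμ : 0 < μ)
    (hd₁ : ∀ r ∈ Ioi (0:ℝ), HasDerivAt f₁ (deriv f₁ r) r)
    (hd₂ : ∀ r ∈ Ioi (0:ℝ), HasDerivAt f₂ (deriv f₂ r) r)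
    (hpos₁ : ∀ r ∈ Ioi (0:ℝ), 0 < f₁ r) (hpos₂ : ∀ r ∈ Ioi (0:ℝ), 0 < f₂ r)
    (hO₁ : ∀ r ∈ Ioc (0:ℝ) 1, f₁ r ≤ C * r)
    (hW : ∀ r ∈ Ioc (0:ℝ) δ, r * (deriv f₁ r * f₂ r - deriv f₂ r * f₁ r) ≤ -μ) :
    False := by
  set k : ℝ := μ / (2 * C ^ 2) with hk
  have hkpos : 0 < k := by positivity
  set G : ℝ → ℝ := fun r => f₂ r / f₁ r + k * (r ^ 2)⁻¹ with hG
  have hGd : ∀ r ∈ Ioi (0:ℝ), HasDerivAt G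
      ((deriv f₂ r * f₁ r - f₂ r * deriv f₁ r) / (f₁ r) ^ 2
        + k * (-((2:ℕ) * r ^ (2-1)) / ((r ^ 2) ^ 2))) r := by
    intro r hr
    exact ((hd₂ r hr).div (hd₁ r hr) (ne_of_gt (hpos₁ r hr))).add
      (((hasDerivAt_pow 2 r).inv (pow_ne_zero 2 (ne_of_gt hr))).const_mul k)
  have hderiv : ∀ r ∈ Ioc (0:ℝ) δ, 0 ≤ deriv G r := by
    intro r hr
    have hr0 : (0:ℝ) < r := hr.1
    rw [(hGd r hr0).deriv]
    set u : ℝ := deriv f₂ r * f₁ r - f₂ r * deriv f₁ r with hu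
    have hru : μ ≤ r * u := by
      have h1 := hW r hr
      have h2 : r * u = -(r * (deriv f₁ r * f₂ r - deriv f₂ r * f₁ r)) := by rw [hu]; ring
      linarith
    have hf1p : 0 < f₁ r := hpos₁ r hr0
    have hf1C : f₁ r ≤ C * r := hO₁ r ⟨hr0, hr.2.trans hδ1⟩
    have hA : μ / (C ^ 2 * r ^ 3) ≤ u / (f₁ r) ^ 2 := by
      rw [div_le_div_iff₀ (by positivity) (by positivity)]
      have h5 : f₁ r ^ 2 ≤ (C * r) ^ 2 := by nlinarith
      have h6 : μ * (C * r) ^ 2 ≤ (r * u) * (C ^ 2 * r ^ 2) := by nlinarith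
      nlinarith
    have hB : k * (-((2:ℕ) * r ^ (2-1)) / ((r ^ 2) ^ 2)) = -(μ / (C ^ 2 * r ^ 3)) := by
      rw [hk]; push_cast; field_simp
    rw [hB]; linarith
  have key : ∀ x ∈ Ioo (0:ℝ) δ, k * x⁻¹ ≤ G δ := by
    intro x hx
    have hmono : MonotoneOn G (Icc x δ) := by
      refine monotoneOn_of_deriv_nonneg (convex_Icc x δ) ?_ ?_ ?_
      · intro r hr
        exact (hGd r (lt_of_lt_of_le hx.1 hr.1)).continuousAt.continuousWithinAt
      · intro r hr
        rw [interior_Icc] at hr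
        exact (hGd r (hx.1.trans hr.1)).differentiableAt.differentiableWithinAt
      · intro r hr
        rw [interior_Icc] at hr
        exact hderiv r ⟨hx.1.trans hr.1, le_of_lt hr.2⟩
    have h1 : G x ≤ G δ := hmono ⟨le_rfl, le_of_lt hx.2⟩ ⟨le_of_lt hx.2, le_rfl⟩ (le_of_lt hx.2)
    have h2 : 0 < f₂ x / f₁ x := div_pos (hpos₂ x hx.1) (hpos₁ x hx.1)
    have h3 : x⁻¹ ≤ (x ^ 2)⁻¹ := by
      apply inv_anti₀ (pow_pos hx.1 2)
      nlinarith [hx.1, hx.2.le.trans hδ1]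
    have h4 : k * x⁻¹ ≤ k * (x ^ 2)⁻¹ := by
      exact mul_le_mul_of_nonneg_left h3 (le_of_lt hkpos)
    have h5 : k * (x ^ 2)⁻¹ ≤ G x := by
      simp only [hG]; linarith
    exact h4.trans (h5.trans h1)
  have h1 : ∀ᶠ x in nhdsWithin (0:ℝ) (Ioi 0), G δ / k < x⁻¹ :=
    tendsto_inv_nhdsGT_zero.eventually (eventually_gt_atTop _)
  have h2 : Ioo (0:ℝ) δ ∈ nhdsWithin (0:ℝ) (Ioi 0) :=
    Ioo_mem_nhdsGT_of_mem ⟨le_rfl, hδ⟩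
  obtain ⟨x, hx1, hx2⟩ := (h1.and (eventually_of_mem h2 (fun y hy => hy))).exists
  have h7 := key x hx2
  rw [div_lt_iff₀ hkpos] at hx1
  nlinarith [h7, hx1]

lemma blowTop (f₁ f₂ : ℝ → ℝ) {ε R₀ : ℝ} (hε : 0 < ε) (hR₀ : 0 < R₀)
    (hd₁ : ∀ r ∈ Ioi (0:ℝ), HasDerivAt f₁ (deriv f₁ r) r)
    (hd₂ : ∀ r ∈ Ioi (0:ℝ), HasDerivAt f₂ (deriv f₂ r) r)
    (hpos₂ : ∀ r ∈ Ioi (0:ℝ), 0 < f₂ r)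
    (hlim₁ : Tendsto f₁ atTop (nhds 1)) (hlim₂ : Tendsto f₂ atTop (nhds 1))
    (hW : ∀ r ≥ R₀, ε ≤ r * (deriv f₁ r * f₂ r - deriv f₂ r * f₁ r))
    (hb : ∀ r ≥ R₀, f₂ r ≤ 2) : False := by
  set c : ℝ := ε / 4 with hc
  set G : ℝ → ℝ := fun r => f₁ r / f₂ r - c * Real.log r with hG
  have hGd : ∀ r ∈ Ioi (0:ℝ), HasDerivAt G
      ((deriv f₁ r * f₂ r - f₁ r * deriv f₂ r) / (f₂ r) ^ 2 - c * r⁻¹) r := by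
    intro r hr
    exact ((hd₁ r hr).div (hd₂ r hr) (ne_of_gt (hpos₂ r hr))).sub
      ((Real.hasDerivAt_log (ne_of_gt hr)).const_mul c)
  have hderiv : ∀ r ≥ R₀, 0 ≤ deriv G r := by
    intro r hr
    have hr0 : (0:ℝ) < r := lt_of_lt_of_le hR₀ hr
    rw [(hGd r hr0).deriv]
    set u : ℝ := deriv f₁ r * f₂ r - f₁ r * deriv f₂ r with hu
    have hru : ε ≤ r * u := by
      have h1 := hW r hr
      have : r * (deriv f₁ r * f₂ r - deriv f₂ r * f₁ r) = r * u := by rw [hu]; ring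
      linarith
    have hf2p : 0 < f₂ r := hpos₂ r hr0
    have hf2b : f₂ r ≤ 2 := hb r hr
    have hA : ε / (4 * r) ≤ u / (f₂ r) ^ 2 := by
      rw [div_le_div_iff₀ (by positivity) (by positivity)]
      have hsq : f₂ r ^ 2 ≤ 4 := by nlinarith
      nlinarith [mul_le_mul_of_nonneg_left hsq (le_of_lt hε)]
    have hB : c * r⁻¹ = ε / (4 * r) := by rw [hc]; field_simp
    rw [hB]; linarith
  have hmono : ∀ R ≥ R₀, G R₀ ≤ G R := by
    intro R hR
    have : MonotoneOn G (Icc R₀ R) := by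
      refine monotoneOn_of_deriv_nonneg (convex_Icc R₀ R) ?_ ?_ ?_
      · intro r hr
        exact (hGd r (lt_of_lt_of_le hR₀ hr.1)).continuousAt.continuousWithinAt
      · intro r hr
        rw [interior_Icc] at hr
        exact (hGd r (hR₀.trans hr.1)).differentiableAt.differentiableWithinAt
      · intro r hr
        rw [interior_Icc] at hr
        exact hderiv r (le_of_lt hr.1)
    exact this ⟨le_rfl, hR⟩ ⟨hR, le_rfl⟩ hR
  have hratio : Tendsto (fun r => f₁ r / f₂ r) atTop (nhds 1) := by
    have := hlim₁.div hlim₂ one_ne_zero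
    rwa [div_one] at this
  have h1 : ∀ᶠ R in atTop, f₁ R / f₂ R ≤ 2 := by
    filter_upwards [hratio.eventually (eventually_le_nhds (by norm_num : (1:ℝ) < 2))] with R hR
    exact hR
  have h2 : ∀ᶠ R in atTop, 2 - G R₀ < c * Real.log R := by
    have hlog : Tendsto (fun R => c * Real.log R) atTop atTop :=
      Real.tendsto_log_atTop.const_mul_atTop (by positivity)
    exact hlog.eventually (eventually_gt_atTop _)
  obtain ⟨R, ⟨hR1, hR2⟩, hR3⟩ := ((h1.and h2).and (eventually_ge_atTop R₀)).exists
  have h4 : G R ≤ 2 - c * Real.log R := by simp only [hG]; linarith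
  linarith [hmono R hR3]

lemma keyLe (f₁ f₂ : ℝ → ℝ) {C : ℝ} (hC : 0 < C)
    (hd₁ : ∀ r ∈ Ioi (0:ℝ), HasDerivAt f₁ (deriv f₁ r) r)
    (hd₂ : ∀ r ∈ Ioi (0:ℝ), HasDerivAt f₂ (deriv f₂ r) r)
    (hpos₁ : ∀ r ∈ Ioi (0:ℝ), 0 < f₁ r) (hpos₂ : ∀ r ∈ Ioi (0:ℝ), 0 < f₂ r)
    (hO₁ : ∀ r ∈ Ioc (0:ℝ) 1, f₁ r ≤ C * r)
    (hlim₁ : Tendsto f₁ atTop (nhds 1)) (hlim₂ : Tendsto f₂ atTop (nhds 1))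
    (hW : ∀ r ∈ Ioi (0:ℝ),
      HasDerivAt (fun s => s * (deriv f₁ s * f₂ s - deriv f₂ s * f₁ s))
        (r / 2 * ((f₁ r) ^ 2 - (f₂ r) ^ 2) * (f₁ r * f₂ r)) r) :
    ∀ r ∈ Ioi (0:ℝ), f₁ r ≤ f₂ r := by
  by_contra hcon
  push_neg at hcon
  obtain ⟨r₀, hr₀, hlt⟩ := hcon
  have hr₀pos : (0:ℝ) < r₀ := hr₀
  set W : ℝ → ℝ := fun s => s * (deriv f₁ s * f₂ s - deriv f₂ s * f₁ s) with hWdef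
  set d : ℝ → ℝ := fun s => f₁ s - f₂ s with hddef
  have hdc : ∀ r ∈ Ioi (0:ℝ), ContinuousAt d r := fun r hr =>
    ((hd₁ r hr).continuousAt).sub ((hd₂ r hr).continuousAt)
  have smono : ∀ s t : ℝ, 0 < s → s < t → (∀ x ∈ Ioo s t, f₂ x < f₁ x) → W s < W t := by
    intro s t hs hst hmid
    have hsm : StrictMonoOn W (Icc s t) := by
      refine strictMonoOn_of_deriv_pos (convex_Icc s t) ?_ ?_
      · intro r hr
        exact ((hW r (mem_Ioi.mpr (lt_of_lt_of_le hs hr.1))).continuousAt).continuousWithinAt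
      · intro x hx
        rw [interior_Icc] at hx
        have hx0' : (0:ℝ) < x := hs.trans hx.1
        have hx0 : x ∈ Ioi (0:ℝ) := mem_Ioi.mpr hx0'
        rw [(hW x hx0).deriv]
        have h1 := hpos₂ x hx0
        have h2 := hpos₁ x hx0
        have h3 := hmid x hx
        apply mul_pos (mul_pos (by positivity) (by nlinarith)) (mul_pos h2 h1)
    exact hsm ⟨le_rfl, hst.le⟩ ⟨hst.le, le_rfl⟩ hst
  set S : Set ℝ := {r | r ∈ Ioo (0:ℝ) r₀ ∧ f₁ r ≤ f₂ r} with hSdef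
  have hSbdd : BddAbove (insert (0:ℝ) S) := by
    refine ⟨r₀, ?_⟩
    rintro x (rfl | hx)
    · exact hr₀pos.le
    · exact hx.1.2.le
  have hSne : (insert (0:ℝ) S).Nonempty := ⟨0, mem_insert _ _⟩
  set α : ℝ := sSup (insert (0:ℝ) S) with hαdef
  have hα0 : 0 ≤ α := le_csSup hSbdd (mem_insert _ _)
  have hcl : α ∈ insert (0:ℝ) (closure S) := by
    have h1 := csSup_mem_closure hSne hSbdd
    rwa [insert_eq, closure_union, closure_singleton, ← insert_eq] at h1
  have hclle : ∀ x : ℝ, 0 < x → x ∈ closure S → d x ≤ 0 := by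
    intro x hx hxc
    exact closureLe (hdc x (mem_Ioi.mpr hx)) hxc
      (fun y hy => by simp only [hddef]; linarith [hy.2])
  have hαlt : α < r₀ := by
    rcases lt_or_eq_of_le (csSup_le hSne (by rintro x (rfl | hx); exacts [hr₀pos.le, hx.1.2.le]) : α ≤ r₀) with h | h
    · exact h
    · exfalso
      rcases hcl with h0 | hc
      · exact absurd (h.symm.trans h0) (ne_of_gt hr₀pos)
      · have hc' : r₀ ∈ closure S := h ▸ hc
        have := hclle r₀ hr₀pos hc'
        simp only [hddef] at this; linarith
  have hαmid : ∀ r, α < r → r ≤ r₀ → f₂ r < f₁ r := by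
    intro r h1 h2
    by_contra h3
    push_neg at h3
    rcases lt_or_eq_of_le h2 with h4 | h4
    · have : r ∈ S := ⟨⟨lt_of_le_of_lt hα0 h1, h4⟩, h3⟩
      exact absurd (le_csSup hSbdd (mem_insert_of_mem _ this)) (not_le.2 h1)
    · rw [h4] at h3; linarith
  have claimA : ∃ s, α < s ∧ s ≤ r₀ ∧ 0 < W s ∧ 0 < s := by
    rcases lt_or_eq_of_le hα0 with hα | hα
    · have hαI : α ∈ Ioi (0:ℝ) := mem_Ioi.mpr hα
      have hdα : d α = 0 := by
        have hle : d α ≤ 0 := by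
          rcases hcl with h0 | hc
          · exact absurd h0 (ne_of_gt hα)
          · exact hclle α hα hc
        have hge : 0 ≤ d α := by
          have ht : Tendsto d (nhdsWithin α (Ioi α)) (nhds (d α)) :=
            ((hdc α hαI).continuousWithinAt)
          refine ge_of_tendsto ht ?_
          filter_upwards [Ioo_mem_nhdsGT_of_mem (⟨le_rfl, hαlt⟩ : α ∈ Ico α r₀)] with y hy
          have := hαmid y hy.1 hy.2.le
          simp only [hddef]; linarith
        linarith
      have hf₂α : f₂ α = f₁ α := by simp only [hddef] at hdα; linarith
      have hdd : HasDerivAt d (deriv f₁ α - deriv f₂ α) α := (hd₁ α hαI).sub (hd₂ α hαI)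
      have hd'pos : 0 ≤ deriv f₁ α - deriv f₂ α := by
        refine derivRight hdd hαlt hdα ?_
        intro y hy
        have := hαmid y hy.1 hy.2.le
        simp only [hddef]; linarith
      have hWα : 0 ≤ W α := by
        have heq : W α = α * (f₁ α * (deriv f₁ α - deriv f₂ α)) := by
          simp only [hWdef, hf₂α]; ring
        rw [heq]
        exact mul_nonneg hα.le (mul_nonneg (hpos₁ α hαI).le hd'pos)
      refine ⟨r₀, hαlt, le_rfl, ?_, hr₀pos⟩
      have := smono α r₀ hα hαlt (fun x hx => hαmid x hx.1 hx.2.le)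
      linarith
    · by_cases hneg : ∃ δ, (0 < δ ∧ δ ≤ r₀) ∧ W δ < 0
      · exfalso
        obtain ⟨δ, ⟨hδ0, hδr₀⟩, hWδ⟩ := hneg
        have hδ'0 : 0 < min δ 1 := lt_min hδ0 one_pos
        have hμ : 0 < -W δ := by linarith
        refine blowZero f₁ f₂ hC hδ'0 (min_le_right _ _) hμ hd₁ hd₂ hpos₁ hpos₂ hO₁ ?_
        intro r hr
        have hrδ : r ≤ δ := hr.2.trans (min_le_left _ _)
        have hWr : W r ≤ W δ := by
          rcases lt_or_eq_of_le hrδ with h | h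
          · have := smono r δ hr.1 h (fun x hx => by
              refine hαmid x ?_ (hx.2.le.trans hδr₀)
              rw [← hα]; exact hr.1.trans hx.1)
            linarith
          · rw [h]
        show W r ≤ -(-W δ)
        linarith
      · push_neg at hneg
        refine ⟨r₀, by rw [← hα]; exact hr₀pos, le_rfl, ?_, hr₀pos⟩
        have h1 : 0 ≤ W (r₀ / 2) := hneg (r₀ / 2) ⟨by linarith, by linarith⟩
        have h2 := smono (r₀ / 2) r₀ (by linarith) (by linarith) (fun x hx => by
          refine hαmid x ?_ hx.2.le
          rw [← hα]; linarith [hx.1])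
        linarith
  obtain ⟨s, hαs, hsr₀, hWs, hspos⟩ := claimA
  set T : Set ℝ := {r | r₀ < r ∧ f₁ r ≤ f₂ r} with hTdef
  by_cases hT : T.Nonempty
  · have hTbdd : BddBelow T := ⟨r₀, fun x hx => hx.1.le⟩
    set β : ℝ := sInf T with hβdef
    have hβge : r₀ ≤ β := le_csInf hT (fun x hx => hx.1.le)
    have hβcl : β ∈ closure T := csInf_mem_closure hT hTbdd
    have hTle : ∀ y ∈ T, d y ≤ 0 := fun y hy => by simp only [hddef]; linarith [hy.2]
    have hβgt : r₀ < β := by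
      rcases lt_or_eq_of_le hβge with h | h
      · exact h
      · exfalso
        have hc' : r₀ ∈ closure T := h ▸ hβcl
        have := closureLe (hdc r₀ hr₀) hc' hTle
        simp only [hddef] at this; linarith
    have hβpos : (0:ℝ) < β := hr₀pos.trans hβgt
    have hβI : β ∈ Ioi (0:ℝ) := mem_Ioi.mpr hβpos
    have hsβ : s < β := lt_of_le_of_lt hsr₀ hβgt
    have hmidβ : ∀ r, s < r → r < β → f₂ r < f₁ r := by
      intro r h1 h2
      rcases le_or_gt r r₀ with h3 | h3
      · exact hαmid r (hαs.trans h1) h3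
      · by_contra h4
        push_neg at h4
        have : r ∈ T := ⟨h3, h4⟩
        exact absurd (csInf_le hTbdd this) (not_le.2 h2)
    have hdβ : d β = 0 := by
      have hle : d β ≤ 0 := closureLe (hdc β hβI) hβcl hTle
      have hge : 0 ≤ d β := by
        have ht : Tendsto d (nhdsWithin β (Iio β)) (nhds (d β)) :=
          ((hdc β hβI).continuousWithinAt)
        refine ge_of_tendsto ht ?_
        filter_upwards [Ioo_mem_nhdsLT_of_mem (⟨hsβ, le_rfl⟩ : β ∈ Ioc s β)] with y hy
        have := hmidβ y hy.1 hy.2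
        simp only [hddef]; linarith
      linarith
    have hf₂β : f₂ β = f₁ β := by simp only [hddef] at hdβ; linarith
    have hdd : HasDerivAt d (deriv f₁ β - deriv f₂ β) β := (hd₁ β hβI).sub (hd₂ β hβI)
    have hd'neg : deriv f₁ β - deriv f₂ β ≤ 0 := by
      refine derivLeft hdd hsβ hdβ ?_
      intro y hy
      have := hmidβ y hy.1 hy.2
      simp only [hddef]; linarith
    have hWβ : W β ≤ 0 := by
      have heq : W β = β * (f₁ β * (deriv f₁ β - deriv f₂ β)) := by
        simp only [hWdef, hf₂β]; ring
      rw [heq]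
      exact mul_nonpos_of_nonneg_of_nonpos hβpos.le
        (mul_nonpos_of_nonneg_of_nonpos (hpos₁ β hβI).le hd'neg)
    have := smono s β hspos hsβ (fun x hx => hmidβ x hx.1 hx.2)
    linarith
  · have hTe : ∀ r, r₀ < r → f₂ r < f₁ r := by
      intro r h
      by_contra h2
      push_neg at h2
      exact hT ⟨r, h, h2⟩
    have hmid : ∀ r, s < r → f₂ r < f₁ r := by
      intro r h1
      rcases le_or_gt r r₀ with h3 | h3
      · exact hαmid r (hαs.trans h1) h3
      · exact hTe r h3
    obtain ⟨T₂, hT₂⟩ := eventually_atTop.1 (hlim₂.eventually (eventually_le_nhds (by norm_num : (1:ℝ) < 2)))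
    have hR₀pos : (0:ℝ) < max (s + 1) T₂ := lt_of_lt_of_le (by linarith) (le_max_left _ _)
    refine blowTop f₁ f₂ hWs hR₀pos hd₁ hd₂ hpos₂ hlim₁ hlim₂ ?_ ?_
    · intro r hr
      have hsr : s < r := by
        have := le_trans (le_max_left (s+1) T₂) hr
        linarith
      have := smono s r hspos hsr (fun x hx => hmid x hx.1)
      show (W s : ℝ) ≤ W r
      linarith
    · intro r hr
      exact hT₂ r (le_trans (le_max_right _ _) hr)


/-- Uniqueness of the Higgs profile: two positive C² solutions on `(0,∞)` of
`f'' + (1/r) f' - (a²/r²) f - (1/2)(f² + g² - 1) f = 0` with `f(0) = 0`,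
`f(∞) = 1`, `f(r) = O(r)` near `0` and `1 - f` decaying exponentially at
infinity, coincide. -/
theorem stmt6 (a g f₁ f₂ : ℝ → ℝ)
    (ha : ContinuousOn a (Ici 0)) (hg : ContinuousOn g (Ici 0))
    (habd : ∀ r > (0:ℝ), 0 < a r ∧ a r < 1)
    (hgbd : ∃ C : ℝ, ∀ r ∈ Ici (0:ℝ), |g r| ≤ C)
    (h₁ : ContDiffOn ℝ 2 f₁ (Ioi 0)) (h₂ : ContDiffOn ℝ 2 f₂ (Ioi 0))
    (hpos₁ : ∀ r ∈ Ioi (0:ℝ), 0 < f₁ r) (hpos₂ : ∀ r ∈ Ioi (0:ℝ), 0 < f₂ r)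
    (hode₁ : ∀ r ∈ Ioi (0:ℝ),
      deriv (deriv f₁) r + (1 / r) * deriv f₁ r - ((a r) ^ 2 / r ^ 2) * f₁ r
        - (1 / 2) * ((f₁ r) ^ 2 + (g r) ^ 2 - 1) * f₁ r = 0)
    (hode₂ : ∀ r ∈ Ioi (0:ℝ),
      deriv (deriv f₂) r + (1 / r) * deriv f₂ r - ((a r) ^ 2 / r ^ 2) * f₂ r
        - (1 / 2) * ((f₂ r) ^ 2 + (g r) ^ 2 - 1) * f₂ r = 0)
    (h0₁ : f₁ 0 = 0) (h0₂ : f₂ 0 = 0)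
    (hlim₁ : Tendsto f₁ atTop (nhds 1)) (hlim₂ : Tendsto f₂ atTop (nhds 1))
    (hO₁ : ∃ C > (0:ℝ), ∀ r ∈ Ioc (0:ℝ) 1, f₁ r ≤ C * r)
    (hO₂ : ∃ C > (0:ℝ), ∀ r ∈ Ioc (0:ℝ) 1, f₂ r ≤ C * r)
    (hdec₁ : ∃ C > (0:ℝ), ∃ c > (0:ℝ), ∀ r ≥ (1:ℝ), |1 - f₁ r| ≤ C * Real.exp (-c * r))
    (hdec₂ : ∃ C > (0:ℝ), ∃ c > (0:ℝ), ∀ r ≥ (1:ℝ), |1 - f₂ r| ≤ C * Real.exp (-c * r)) :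
    ∀ r ∈ Ioi (0:ℝ), f₁ r = f₂ r := by
  have hd₁ : ∀ r ∈ Ioi (0:ℝ), HasDerivAt f₁ (deriv f₁ r) r := fun r hr => (regAux f₁ h₁ hr).1
  have hd₂ : ∀ r ∈ Ioi (0:ℝ), HasDerivAt f₂ (deriv f₂ r) r := fun r hr => (regAux f₂ h₂ hr).1
  obtain ⟨C₁, hC₁, hO₁'⟩ := hO₁
  obtain ⟨C₂, hC₂, hO₂'⟩ := hO₂
  have hle₁ : ∀ r ∈ Ioi (0:ℝ), f₁ r ≤ f₂ r :=
    keyLe f₁ f₂ hC₁ hd₁ hd₂ hpos₁ hpos₂ hO₁' hlim₁ hlim₂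
      (fun r hr => WAux a g f₁ f₂ h₁ h₂ hode₁ hode₂ hr)
  have hle₂ : ∀ r ∈ Ioi (0:ℝ), f₂ r ≤ f₁ r :=
    keyLe f₂ f₁ hC₂ hd₂ hd₁ hpos₂ hpos₁ hO₂' hlim₂ hlim₁
      (fun r hr => WAux a g f₂ f₁ h₂ h₁ hode₂ hode₁ hr)
  exact fun r hr => le_antisymm (hle₁ r hr) (hle₂ r hr)
end

section
/- Let f : [0,∞) → ℝ be continuous with f(0) = 0, f increasing, f(r) ≤ M₁ r for r ≤ 1, and let B > 0, β > 0. Then the integral equation ã(r) = B r² + (β²/2) ∫₀^r s (r²/s² - 1) f(s)² (ã(s) - 1) ds has a unique continuous solution ã on [0, δ] for δ = min{1, B^{-1/2}, M_*^{-1/2}} with M_* = B + (3β²/8) M₁², and this solution satisfies |ã(r) - B r²| ≤ (3β²/8) M₁² r⁴ for r ∈ [0, δ]. -/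
open Filter Set intervalIntegral MeasureTheory Function Topology NNReal

noncomputable def qf (f : ℝ → ℝ) : ℝ → ℝ := fun s => if s = 0 then 0 else f s ^ 2 / s

lemma qf_abs_le {f : ℝ → ℝ} {M₁ δ : ℝ}
    (hnn : ∀ s ∈ Icc (0:ℝ) δ, 0 ≤ f s) (hle : ∀ s ∈ Icc (0:ℝ) δ, f s ≤ M₁ * s) :
    ∀ s ∈ Icc (0:ℝ) δ, |qf f s| ≤ M₁ ^ 2 * s := by
  intro s hs
  rcases eq_or_lt_of_le hs.1 with h0 | h0
  · simp [qf, ← h0]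
  · have hs0 : s ≠ 0 := ne_of_gt h0
    have h1 : 0 ≤ f s := hnn s hs
    have h2 : f s ≤ M₁ * s := hle s hs
    rw [qf]
    simp only [if_neg hs0]
    rw [abs_of_nonneg (by positivity), div_le_iff₀ h0]
    nlinarith [mul_le_mul h2 h2 h1 (h1.trans h2)]

lemma qf_cont {f : ℝ → ℝ} {M₁ δ : ℝ} (hf : ContinuousOn f (Ici 0))
    (habs : ∀ s ∈ Icc (0:ℝ) δ, |qf f s| ≤ M₁ ^ 2 * s) :
    ContinuousOn (qf f) (Icc 0 δ) := by
  intro s hs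
  rcases eq_or_lt_of_le hs.1 with h0 | h0
  · have hs0 : s = 0 := h0.symm
    subst hs0
    have hq0 : qf f 0 = 0 := by simp [qf]
    unfold ContinuousWithinAt
    rw [hq0]
    apply squeeze_zero_norm'
    · exact eventually_mem_nhdsWithin.mono (fun x hx => by simpa using habs x hx)
    · have h := (continuous_const.mul continuous_id).tendsto (0:ℝ)
        (f := fun x : ℝ => M₁ ^ 2 * x)
      simpa using h.mono_left nhdsWithin_le_nhds
  · have hs0 : s ≠ 0 := ne_of_gt h0
    have hcw : ContinuousWithinAt (fun x => f x ^ 2 / x) (Icc 0 δ) s := by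
      have h1 : ContinuousWithinAt f (Icc 0 δ) s :=
        (hf s hs.1).mono (fun x hx => hx.1)
      exact (h1.pow 2).div continuousWithinAt_id hs0
    have hev : (qf f) =ᶠ[𝓝[Icc 0 δ] s] (fun x => f x ^ 2 / x) := by
      filter_upwards [eventually_nhdsWithin_of_eventually_nhds (eventually_ne_nhds hs0)] with x hx
      simp [qf, hx]
    exact hcw.congr_of_eventuallyEq hev (by simp [qf, hs0])

lemma kernel_eq {f w : ℝ → ℝ} {δ : ℝ} (hq : ContinuousOn (qf f) (Icc 0 δ))
    (hf : ContinuousOn f (Ici 0)) (hw : ContinuousOn w (Icc 0 δ)) {r : ℝ}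
    (hr : r ∈ Icc (0:ℝ) δ) :
    (∫ s in (0:ℝ)..r, s * (r ^ 2 / s ^ 2 - 1) * f s ^ 2 * w s)
      = r ^ 2 * (∫ s in (0:ℝ)..r, qf f s * w s)
        - ∫ s in (0:ℝ)..r, s * f s ^ 2 * w s := by
  have hsub : Icc (0:ℝ) r ⊆ Icc 0 δ := Icc_subset_Icc le_rfl hr.2
  have huicc : uIcc (0:ℝ) r = Icc 0 r := uIcc_of_le hr.1
  have h1 : IntervalIntegrable (fun s => qf f s * w s) volume 0 r := by
    apply ContinuousOn.intervalIntegrable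
    rw [huicc]
    exact (hq.mono hsub).mul (hw.mono hsub)
  have h2 : IntervalIntegrable (fun s => s * f s ^ 2 * w s) volume 0 r := by
    apply ContinuousOn.intervalIntegrable
    rw [huicc]
    exact ((continuousOn_id.mul ((hf.mono Icc_subset_Ici_self).pow 2)).mul (hw.mono hsub))
  have key : (∫ s in (0:ℝ)..r, s * (r ^ 2 / s ^ 2 - 1) * f s ^ 2 * w s)
      = ∫ s in (0:ℝ)..r, (r ^ 2 * (qf f s * w s) - s * f s ^ 2 * w s) := by
    apply intervalIntegral.integral_congr_ae
    refine MeasureTheory.ae_of_all _ (fun s hs => ?_)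
    rw [uIoc_of_le hr.1] at hs
    have hs0 : s ≠ 0 := ne_of_gt hs.1
    simp only [qf, if_neg hs0]
    field_simp
  rw [key, intervalIntegral.integral_sub (h1.const_mul _) h2,
    intervalIntegral.integral_const_mul]

lemma kernel_bound {f w : ℝ → ℝ} {M₁ C δ : ℝ} (hC : 0 ≤ C)
    (hq : ContinuousOn (qf f) (Icc 0 δ)) (hf : ContinuousOn f (Ici 0))
    (hw : ContinuousOn w (Icc 0 δ))
    (hnn : ∀ s ∈ Icc (0:ℝ) δ, 0 ≤ f s) (hle : ∀ s ∈ Icc (0:ℝ) δ, f s ≤ M₁ * s)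
    (hwb : ∀ s ∈ Icc (0:ℝ) δ, |w s| ≤ C) {r : ℝ} (hr : r ∈ Icc (0:ℝ) δ) :
    |r ^ 2 * (∫ s in (0:ℝ)..r, qf f s * w s) - ∫ s in (0:ℝ)..r, s * f s ^ 2 * w s|
      ≤ M₁ ^ 2 * C * r ^ 4 / 4 := by
  have hsub : Icc (0:ℝ) r ⊆ Icc 0 δ := Icc_subset_Icc le_rfl hr.2
  have huicc : uIcc (0:ℝ) r = Icc 0 r := uIcc_of_le hr.1
  have h1 : IntervalIntegrable (fun s => qf f s * w s) volume 0 r := by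
    apply ContinuousOn.intervalIntegrable
    rw [huicc]
    exact (hq.mono hsub).mul (hw.mono hsub)
  have h2 : IntervalIntegrable (fun s => s * f s ^ 2 * w s) volume 0 r := by
    apply ContinuousOn.intervalIntegrable
    rw [huicc]
    exact ((continuousOn_id.mul ((hf.mono Icc_subset_Ici_self).pow 2)).mul (hw.mono hsub))
  have hF : IntervalIntegrable (fun s => r ^ 2 * (qf f s * w s) - s * f s ^ 2 * w s)
      volume 0 r := (h1.const_mul _).sub h2
  rw [← intervalIntegral.integral_const_mul,
    ← intervalIntegral.integral_sub (h1.const_mul _) h2]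
  calc |∫ s in (0:ℝ)..r, (r ^ 2 * (qf f s * w s) - s * f s ^ 2 * w s)|
      ≤ ∫ s in (0:ℝ)..r, |r ^ 2 * (qf f s * w s) - s * f s ^ 2 * w s| :=
        intervalIntegral.abs_integral_le_integral_abs hr.1
    _ ≤ ∫ s in (0:ℝ)..r, M₁ ^ 2 * C * (r ^ 2 * s - s ^ 3) := by
        apply intervalIntegral.integral_mono_on hr.1 hF.abs
        · exact (Continuous.intervalIntegrable (by continuity) _ _)
        intro s hs
        rcases eq_or_lt_of_le hs.1 with h0 | h0
        · have hs0 : s = 0 := h0.symm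
          subst hs0
          simp [qf]
        · have hs0 : s ≠ 0 := ne_of_gt h0
          have hsδ : s ∈ Icc (0:ℝ) δ := hsub hs
          have hf1 : 0 ≤ f s := hnn s hsδ
          have hf2 : f s ≤ M₁ * s := hle s hsδ
          have hw1 : |w s| ≤ C := hwb s hsδ
          have hkey : r ^ 2 * (qf f s * w s) - s * f s ^ 2 * w s
              = (f s ^ 2 * (r ^ 2 / s - s)) * w s := by
            simp only [qf, if_neg hs0]
            field_simp
          rw [hkey, abs_mul]
          have hrs : 0 ≤ r ^ 2 / s - s := by
            rw [sub_nonneg, le_div_iff₀ h0]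
            nlinarith [hs.2, hs.1]
          have hb1 : |f s ^ 2 * (r ^ 2 / s - s)| ≤ M₁ ^ 2 * s ^ 2 * (r ^ 2 / s - s) := by
            rw [abs_of_nonneg (by positivity)]
            have hfs : f s ^ 2 ≤ M₁ ^ 2 * s ^ 2 := by nlinarith
            nlinarith [mul_le_mul_of_nonneg_right hfs hrs]
          calc |f s ^ 2 * (r ^ 2 / s - s)| * |w s|
              ≤ (M₁ ^ 2 * s ^ 2 * (r ^ 2 / s - s)) * C :=
                mul_le_mul hb1 hw1 (abs_nonneg _) (by positivity)
            _ = M₁ ^ 2 * C * (r ^ 2 * s - s ^ 3) := by field_simp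
    _ = M₁ ^ 2 * C * r ^ 4 / 4 := by
        have e1 : (∫ x in (0:ℝ)..r, (r ^ 2 * x - x ^ 3)) = r ^ 4 / 4 := by
          rw [intervalIntegral.integral_sub (f := fun x : ℝ => r ^ 2 * x) (g := fun x : ℝ => x ^ 3) ((continuous_const.mul continuous_id').intervalIntegrable _ _)
              ((continuous_pow 3).intervalIntegrable _ _),
            intervalIntegral.integral_const_mul, integral_id, integral_pow]
          ring
        rw [intervalIntegral.integral_const_mul, e1]; ring

set_option maxHeartbeats 1000000 in
/-- Local existence and uniqueness near `r = 0` for the integral equation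
`ã(r) = B r² + (β²/2) ∫₀^r s (r²/s² - 1) f(s)² (ã(s) - 1) ds` on `[0, δ]` with
`δ = min{1, B^{-1/2}, M_*^{-1/2}}`, `M_* = B + (3β²/8) M₁²`, together with the
estimate `|ã(r) - B r²| ≤ (3β²/8) M₁² r⁴`. -/
theorem stmt7 (β B M₁ : ℝ) (hβ : β > 0) (hB : B > 0) (hM₁ : M₁ > 0)
    (f : ℝ → ℝ) (hf : ContinuousOn f (Ici 0)) (hfmono : MonotoneOn f (Ici 0))
    (hf0 : f 0 = 0) (hfbd : ∀ r ∈ Icc (0:ℝ) 1, f r ≤ M₁ * r) :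
    ∃ δ : ℝ, δ = min 1 (min (Real.sqrt B)⁻¹ (Real.sqrt (B + 3 * β ^ 2 / 8 * M₁ ^ 2))⁻¹) ∧
      ∃ a : ℝ → ℝ, ContinuousOn a (Icc 0 δ) ∧
        (∀ r ∈ Icc (0:ℝ) δ,
          a r = B * r ^ 2 + β ^ 2 / 2 *
            ∫ s in (0:ℝ)..r, s * (r ^ 2 / s ^ 2 - 1) * (f s) ^ 2 * (a s - 1)) ∧
        (∀ r ∈ Icc (0:ℝ) δ, |a r - B * r ^ 2| ≤ 3 * β ^ 2 / 8 * M₁ ^ 2 * r ^ 4) ∧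
        (∀ b : ℝ → ℝ, ContinuousOn b (Icc 0 δ) →
          (∀ r ∈ Icc (0:ℝ) δ,
            b r = B * r ^ 2 + β ^ 2 / 2 *
              ∫ s in (0:ℝ)..r, s * (r ^ 2 / s ^ 2 - 1) * (f s) ^ 2 * (b s - 1)) →
          EqOn a b (Icc 0 δ)) := by
  classical
  set M : ℝ := B + 3 * β ^ 2 / 8 * M₁ ^ 2 with hMdef
  have hM0 : 0 < M := by positivity
  set δ : ℝ := min 1 (min (Real.sqrt B)⁻¹ (Real.sqrt M)⁻¹) with hδdef
  have hδ1 : δ ≤ 1 := min_le_left _ _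
  have hδ0 : 0 < δ := by
    have h1 : 0 < Real.sqrt B := Real.sqrt_pos.mpr hB
    have h2 : 0 < Real.sqrt M := Real.sqrt_pos.mpr hM0
    exact lt_min one_pos (lt_min (by positivity) (by positivity))
  have hδ0' : (0:ℝ) ≤ δ := hδ0.le
  have hδM : M * δ ^ 2 ≤ 1 := by
    have h1 : δ ≤ (Real.sqrt M)⁻¹ := le_trans (min_le_right _ _) (min_le_right _ _)
    have h3 : δ ^ 2 ≤ ((Real.sqrt M)⁻¹) ^ 2 := pow_le_pow_left₀ hδ0' h1 2
    have h4 : ((Real.sqrt M)⁻¹) ^ 2 = M⁻¹ := by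
      rw [inv_pow, Real.sq_sqrt hM0.le]
    rw [h4] at h3
    calc M * δ ^ 2 ≤ M * M⁻¹ := mul_le_mul_of_nonneg_left h3 hM0.le
      _ = 1 := mul_inv_cancel₀ hM0.ne'
  have hδ42 : δ ^ 4 ≤ δ ^ 2 := pow_le_pow_of_le_one hδ0' hδ1 (by norm_num)
  have hnn : ∀ s ∈ Icc (0:ℝ) δ, 0 ≤ f s := by
    intro s hs
    have := hfmono (self_mem_Ici) (mem_Ici.mpr hs.1) hs.1
    rwa [hf0] at this
  have hle : ∀ s ∈ Icc (0:ℝ) δ, f s ≤ M₁ * s :=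
    fun s hs => hfbd s ⟨hs.1, hs.2.trans hδ1⟩
  have habs := qf_abs_le hnn hle
  have hq : ContinuousOn (qf f) (Icc 0 δ) := qf_cont hf habs
  -- the function space
  haveI : Nonempty (Icc (0:ℝ) δ) := ⟨⟨0, le_refl 0, hδ0'⟩⟩
  let E : C(Icc (0:ℝ) δ, ℝ) → ℝ → ℝ := fun u => IccExtend hδ0' u
  have hEc : ∀ u, Continuous (E u) := fun u => u.continuous.Icc_extend'
  have hEmem : ∀ u (s : ℝ) (hs : s ∈ Icc (0:ℝ) δ), E u s = u ⟨s, hs⟩ :=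
    fun u s hs => IccExtend_of_mem hδ0' u hs
  have hEb : ∀ (u v : C(Icc (0:ℝ) δ, ℝ)) (s : ℝ), s ∈ Icc (0:ℝ) δ →
      |E u s - E v s| ≤ dist u v := by
    intro u v s hs
    rw [hEmem u s hs, hEmem v s hs, ← Real.dist_eq]
    exact ContinuousMap.dist_apply_le_dist _
  have hwc : ∀ u, ContinuousOn (fun s => E u s - 1) (Icc (0:ℝ) δ) :=
    fun u => ((hEc u).sub continuous_const).continuousOn
  have hIc : ∀ (g : ℝ → ℝ), ContinuousOn g (Icc 0 δ) →
      ContinuousOn (fun r => ∫ s in (0:ℝ)..r, g s) (Icc (0:ℝ) δ) := by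
    intro g hg
    have hint : IntervalIntegrable g volume 0 δ :=
      ContinuousOn.intervalIntegrable (by rwa [uIcc_of_le hδ0'])
    have h := intervalIntegral.continuousOn_primitive_interval' hint left_mem_uIcc
    rwa [uIcc_of_le hδ0'] at h
  have hTc : ∀ u : C(Icc (0:ℝ) δ, ℝ), ContinuousOn (fun r : ℝ =>
      B * r ^ 2 + β ^ 2 / 2 * (r ^ 2 * (∫ s in (0:ℝ)..r, qf f s * (E u s - 1))
        - ∫ s in (0:ℝ)..r, s * f s ^ 2 * (E u s - 1))) (Icc (0:ℝ) δ) := by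
    intro u
    have hg1 : ContinuousOn (fun s => qf f s * (E u s - 1)) (Icc (0:ℝ) δ) := hq.mul (hwc u)
    have hg2 : ContinuousOn (fun s => s * f s ^ 2 * (E u s - 1)) (Icc (0:ℝ) δ) :=
      (continuousOn_id.mul ((hf.mono Icc_subset_Ici_self).pow 2)).mul (hwc u)
    apply ContinuousOn.add
    · exact continuousOn_const.mul (continuous_pow 2).continuousOn
    · exact continuousOn_const.mul
        ((((continuous_pow 2).continuousOn).mul (hIc _ hg1)).sub (hIc _ hg2))
  let T : C(Icc (0:ℝ) δ, ℝ) → C(Icc (0:ℝ) δ, ℝ) := fun u =>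
    ⟨(Icc (0:ℝ) δ).restrict (fun r : ℝ =>
      B * r ^ 2 + β ^ 2 / 2 * (r ^ 2 * (∫ s in (0:ℝ)..r, qf f s * (E u s - 1))
        - ∫ s in (0:ℝ)..r, s * f s ^ 2 * (E u s - 1))), (hTc u).restrict⟩
  have hT_apply : ∀ u (x : Icc (0:ℝ) δ), T u x =
      B * (x:ℝ) ^ 2 + β ^ 2 / 2 * ((x:ℝ) ^ 2 * (∫ s in (0:ℝ)..(x:ℝ), qf f s * (E u s - 1))
        - ∫ s in (0:ℝ)..(x:ℝ), s * f s ^ 2 * (E u s - 1)) := fun u x => rfl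
  have hII : ∀ (g : ℝ → ℝ), ContinuousOn g (Icc 0 δ) → ∀ {r : ℝ}, r ∈ Icc (0:ℝ) δ →
      IntervalIntegrable g volume 0 r := by
    intro g hg r hr
    apply ContinuousOn.intervalIntegrable
    rw [uIcc_of_le hr.1]
    exact hg.mono (Icc_subset_Icc le_rfl hr.2)
  -- contraction estimate
  have hcontract : ∀ u v, dist (T u) (T v) ≤ 1 / 3 * dist u v := by
    intro u v
    have hd0 : (0:ℝ) ≤ dist u v := dist_nonneg
    rw [ContinuousMap.dist_le (by positivity)]
    rintro ⟨r, hr⟩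
    rw [Real.dist_eq, hT_apply, hT_apply]
    have e1 : (∫ s in (0:ℝ)..r, qf f s * (E u s - 1)) - ∫ s in (0:ℝ)..r, qf f s * (E v s - 1)
        = ∫ s in (0:ℝ)..r, qf f s * (E u s - E v s) := by
      rw [← intervalIntegral.integral_sub
        (hII (fun s => qf f s * (E u s - 1)) (hq.mul (hwc u)) hr)
        (hII (fun s => qf f s * (E v s - 1)) (hq.mul (hwc v)) hr)]
      apply intervalIntegral.integral_congr
      intro s _
      ring
    have e2 : (∫ s in (0:ℝ)..r, s * f s ^ 2 * (E u s - 1))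
        - ∫ s in (0:ℝ)..r, s * f s ^ 2 * (E v s - 1)
        = ∫ s in (0:ℝ)..r, s * f s ^ 2 * (E u s - E v s) := by
      rw [← intervalIntegral.integral_sub
        (hII (fun s => s * f s ^ 2 * (E u s - 1))
          ((continuousOn_id.mul ((hf.mono Icc_subset_Ici_self).pow 2)).mul (hwc u)) hr)
        (hII (fun s => s * f s ^ 2 * (E v s - 1))
          ((continuousOn_id.mul ((hf.mono Icc_subset_Ici_self).pow 2)).mul (hwc v)) hr)]
      apply intervalIntegral.integral_congr
      intro s _
      ring
    have heq : B * r ^ 2 + β ^ 2 / 2 * (r ^ 2 * (∫ s in (0:ℝ)..r, qf f s * (E u s - 1))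
          - ∫ s in (0:ℝ)..r, s * f s ^ 2 * (E u s - 1))
        - (B * r ^ 2 + β ^ 2 / 2 * (r ^ 2 * (∫ s in (0:ℝ)..r, qf f s * (E v s - 1))
          - ∫ s in (0:ℝ)..r, s * f s ^ 2 * (E v s - 1)))
        = β ^ 2 / 2 * (r ^ 2 * (∫ s in (0:ℝ)..r, qf f s * (E u s - E v s))
          - ∫ s in (0:ℝ)..r, s * f s ^ 2 * (E u s - E v s)) := by
      rw [← e1, ← e2]
      ring
    rw [heq, abs_mul, abs_of_nonneg (show (0:ℝ) ≤ β ^ 2 / 2 by positivity)]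
    have hwdiff : ContinuousOn (fun s => E u s - E v s) (Icc (0:ℝ) δ) :=
      ((hEc u).sub (hEc v)).continuousOn
    have hb := kernel_bound hd0 hq hf hwdiff hnn hle (fun s hs => hEb u v s hs) hr
    have hr4 : r ^ 4 ≤ δ ^ 4 := pow_le_pow_left₀ hr.1 hr.2 4
    have k1 : β ^ 2 * M₁ ^ 2 * r ^ 4 ≤ β ^ 2 * M₁ ^ 2 * δ ^ 2 :=
      mul_le_mul_of_nonneg_left (hr4.trans hδ42) (by positivity)
    have k2 : 3 * β ^ 2 / 8 * M₁ ^ 2 * δ ^ 2 ≤ 1 := by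
      have hM' : (B + 3 * β ^ 2 / 8 * M₁ ^ 2) * δ ^ 2 ≤ 1 := by rw [← hMdef]; exact hδM
      nlinarith [mul_nonneg hB.le (sq_nonneg δ)]
    have k3 : β ^ 2 * M₁ ^ 2 * r ^ 4 ≤ 8 / 3 := by nlinarith
    calc β ^ 2 / 2 * |r ^ 2 * (∫ s in (0:ℝ)..r, qf f s * (E u s - E v s))
          - ∫ s in (0:ℝ)..r, s * f s ^ 2 * (E u s - E v s)|
        ≤ β ^ 2 / 2 * (M₁ ^ 2 * dist u v * r ^ 4 / 4) := by
          exact mul_le_mul_of_nonneg_left hb (by positivity)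
      _ = β ^ 2 * M₁ ^ 2 * r ^ 4 * dist u v / 8 := by ring
      _ ≤ 8 / 3 * dist u v / 8 := by
          have h8 := mul_le_mul_of_nonneg_right k3 hd0
          linarith
      _ ≤ 1 / 3 * dist u v := by linarith
  have hCW : ContractingWith (1/3 : ℝ≥0) T := by
    refine ⟨by rw [← NNReal.coe_lt_coe]; norm_num, LipschitzWith.of_dist_le_mul fun u v => ?_⟩
    calc dist (T u) (T v) ≤ 1 / 3 * dist u v := hcontract u v
      _ = ((1/3 : ℝ≥0) : ℝ) * dist u v := by norm_num
  set ustar := ContractingWith.fixedPoint T hCW with hustar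
  have hfix : T ustar = ustar := hCW.fixedPoint_isFixedPt
  have hTeq : ∀ u (r : ℝ) (hr : r ∈ Icc (0:ℝ) δ), T u ⟨r, hr⟩ =
      B * r ^ 2 + β ^ 2 / 2 *
        ∫ s in (0:ℝ)..r, s * (r ^ 2 / s ^ 2 - 1) * f s ^ 2 * (E u s - 1) := by
    intro u r hr
    rw [hT_apply, kernel_eq hq hf (hwc u) hr]
  -- the invariant set
  set S : Set C(Icc (0:ℝ) δ, ℝ) := {u | ∀ x : Icc (0:ℝ) δ,
    |u x - B * (x:ℝ) ^ 2| ≤ 3 * β ^ 2 / 8 * M₁ ^ 2 * (x:ℝ) ^ 4} with hSdef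
  have hS_closed : IsClosed S := by
    have hrw : S = ⋂ x : Icc (0:ℝ) δ, {u : C(Icc (0:ℝ) δ, ℝ) |
        |u x - B * (x:ℝ) ^ 2| ≤ 3 * β ^ 2 / 8 * M₁ ^ 2 * (x:ℝ) ^ 4} := by
      ext u
      simp [hSdef, Set.mem_iInter]
    rw [hrw]
    exact isClosed_iInter fun x => isClosed_le
      (((continuous_eval_const x).sub continuous_const).abs) continuous_const
  have hTS : ∀ u ∈ S, T u ∈ S := by
    intro u hu
    rintro ⟨r, hr⟩
    rw [hT_apply]
    have hEbnd : ∀ s ∈ Icc (0:ℝ) δ, |E u s - 1| ≤ 2 := by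
      intro s hs
      rw [hEmem u s hs]
      have h1 : |u ⟨s, hs⟩ - B * s ^ 2| ≤ 3 * β ^ 2 / 8 * M₁ ^ 2 * s ^ 4 := hu ⟨s, hs⟩
      have hs1 : s ≤ 1 := hs.2.trans hδ1
      have hs4 : s ^ 4 ≤ s ^ 2 := pow_le_pow_of_le_one hs.1 hs1 (by norm_num)
      have hsd : s ^ 2 ≤ δ ^ 2 := pow_le_pow_left₀ hs.1 hs.2 2
      have h2 : |u ⟨s, hs⟩| ≤ 1 := by
        calc |u ⟨s, hs⟩| = |B * s ^ 2 + (u ⟨s, hs⟩ - B * s ^ 2)| := by ring_nf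
          _ ≤ |B * s ^ 2| + |u ⟨s, hs⟩ - B * s ^ 2| := abs_add_le _ _
          _ ≤ B * s ^ 2 + 3 * β ^ 2 / 8 * M₁ ^ 2 * s ^ 4 := by
              rw [abs_of_nonneg (by positivity)]
              linarith
          _ ≤ M * s ^ 2 := by
              rw [hMdef]
              nlinarith [mul_le_mul_of_nonneg_left hs4
                (show (0:ℝ) ≤ 3 * β ^ 2 / 8 * M₁ ^ 2 by positivity)]
          _ ≤ 1 := by
              have := mul_le_mul_of_nonneg_left hsd hM0.le
              linarith
      calc |u ⟨s, hs⟩ - 1| ≤ |u ⟨s, hs⟩| + 1 := by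
            simpa [sub_eq_add_neg] using abs_add_le (u ⟨s, hs⟩) (-1)
        _ ≤ 2 := by linarith
    have hb := kernel_bound (by norm_num : (0:ℝ) ≤ 2) hq hf (hwc u) hnn hle hEbnd hr
    have hrr : B * r ^ 2 + β ^ 2 / 2 * (r ^ 2 * (∫ s in (0:ℝ)..r, qf f s * (E u s - 1))
          - ∫ s in (0:ℝ)..r, s * f s ^ 2 * (E u s - 1)) - B * r ^ 2
        = β ^ 2 / 2 * (r ^ 2 * (∫ s in (0:ℝ)..r, qf f s * (E u s - 1))
          - ∫ s in (0:ℝ)..r, s * f s ^ 2 * (E u s - 1)) := by ring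
    rw [show ((⟨r, hr⟩ : Icc (0:ℝ) δ) : ℝ) = r from rfl, hrr, abs_mul,
      abs_of_nonneg (show (0:ℝ) ≤ β ^ 2 / 2 by positivity)]
    calc β ^ 2 / 2 * |r ^ 2 * (∫ s in (0:ℝ)..r, qf f s * (E u s - 1))
          - ∫ s in (0:ℝ)..r, s * f s ^ 2 * (E u s - 1)|
        ≤ β ^ 2 / 2 * (M₁ ^ 2 * 2 * r ^ 4 / 4) := mul_le_mul_of_nonneg_left hb (by positivity)
      _ ≤ 3 * β ^ 2 / 8 * M₁ ^ 2 * r ^ 4 := by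
          nlinarith [mul_nonneg (mul_nonneg (sq_nonneg β) (sq_nonneg M₁)) (pow_nonneg hr.1 4)]
  let u₀ : C(Icc (0:ℝ) δ, ℝ) :=
    ⟨fun x => B * (x:ℝ) ^ 2, continuous_const.mul (continuous_subtype_val.pow 2)⟩
  have hu₀ : u₀ ∈ S := by
    intro x
    simp [u₀]
    positivity
  have hiter : ∀ n, T^[n] u₀ ∈ S := by
    intro n
    induction n with
    | zero => exact hu₀
    | succ n ih =>
        rw [Function.iterate_succ_apply']
        exact hTS _ ih
  have hmemS : ustar ∈ S :=
    hS_closed.mem_of_tendsto (hCW.tendsto_iterate_fixedPoint u₀)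
      (Filter.Eventually.of_forall hiter)
  -- conclusion
  refine ⟨δ, rfl, E ustar, (hEc ustar).continuousOn, ?_, ?_, ?_⟩
  · intro r hr
    have h1 : E ustar r = T ustar ⟨r, hr⟩ := by
      rw [hfix]
      exact hEmem ustar r hr
    rw [h1, hTeq ustar r hr]
  · intro r hr
    have h := hmemS ⟨r, hr⟩
    rw [hEmem ustar r hr]
    exact h
  · intro b hbc hbeq r hr
    have hb_restrict : Continuous ((Icc (0:ℝ) δ).restrict b) := hbc.restrict
    let ub : C(Icc (0:ℝ) δ, ℝ) := ⟨(Icc (0:ℝ) δ).restrict b, hb_restrict⟩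
    have hub : Function.IsFixedPt T ub := by
      apply ContinuousMap.ext
      rintro ⟨t, ht⟩
      have hEub : ∀ s (hs : s ∈ Icc (0:ℝ) δ), E ub s = b s := fun s hs => hEmem ub s hs
      show T ub ⟨t, ht⟩ = ub ⟨t, ht⟩
      rw [hTeq ub t ht]
      have hcong : (∫ s in (0:ℝ)..t, s * (t ^ 2 / s ^ 2 - 1) * f s ^ 2 * (E ub s - 1))
          = ∫ s in (0:ℝ)..t, s * (t ^ 2 / s ^ 2 - 1) * f s ^ 2 * (b s - 1) := by
        apply intervalIntegral.integral_congr
        intro s hs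
        rw [uIcc_of_le ht.1] at hs
        simp only
        rw [hEub s (Icc_subset_Icc le_rfl ht.2 hs)]
      rw [hcong, ← hbeq t ht]
      rfl
    have hubeq : ub = ustar := hCW.fixedPoint_unique hub
    calc E ustar r = ustar ⟨r, hr⟩ := hEmem ustar r hr
      _ = ub ⟨r, hr⟩ := by rw [hubeq]
      _ = b r := rfl
end

section
/- Let α ∈ (0, 1/√2), λ ≥ √(1 - 2α²), and let f : [0,∞) → ℝ be continuous with 0 ≤ f ≤ 1. If g is the solution of g'' + (1/r) g' - α² g - (1/2)(f² + g² - 1) g = 0 with g(0) = λ, g'(0) = 0 on its maximal interval of existence, then g(r) ≥ √(1 - 2α²) and g'(r) ≥ 0 throughout; in particular g cannot satisfy g(∞) = 0. -/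
set_option maxHeartbeats 1000000

open Filter Set

/-- If `a * u'(a) ≥ c > 0` for all small `a`, then `u` blows up logarithmically at `0`,
contradicting boundedness. -/
lemma log_blowup_aux (u : ℝ → ℝ)
    (hu : ∀ s ∈ Ioi (0:ℝ), HasDerivAt u (deriv u s) s)
    (hucont : ContinuousOn (deriv u) (Ioi 0))
    (B c δ : ℝ) (hδ : 0 < δ) (hc : 0 < c)
    (hB : ∀ s ∈ Ioc (0:ℝ) δ, |u s| ≤ B)
    (hlow : ∀ a ∈ Ioc (0:ℝ) δ, c ≤ a * deriv u a) : False := by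
  have hB0 : 0 ≤ B := (abs_nonneg _).trans (hB δ ⟨hδ, le_rfl⟩)
  set t : ℝ := 2 * B / c + 1 with ht
  have htpos : 0 < t := by positivity
  set a : ℝ := δ * Real.exp (-t) with ha
  have ha0 : 0 < a := by positivity
  have haδ : a < δ := by
    have he : Real.exp (-t) < 1 := Real.exp_lt_one_iff.mpr (by linarith)
    calc a = δ * Real.exp (-t) := rfl
    _ < δ * 1 := by nlinarith [Real.exp_pos (-t)]
    _ = δ := mul_one δ
  have hsub : Icc a δ ⊆ Ioi (0:ℝ) := fun x hx => lt_of_lt_of_le ha0 hx.1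
  have huicc : uIcc a δ = Icc a δ := uIcc_of_le haδ.le
  have hftc : ∫ s in a..δ, deriv u s = u δ - u a :=
    intervalIntegral.integral_eq_sub_of_hasDerivAt
      (fun x hx => hu x (hsub (huicc ▸ hx)))
      ((hucont.mono (huicc ▸ hsub : uIcc a δ ⊆ Ioi 0)).intervalIntegrable)
  have hmono : (∫ s in a..δ, c * (1/s)) ≤ ∫ s in a..δ, deriv u s := by
    apply intervalIntegral.integral_mono_on haδ.le
    · exact (((continuousOn_const).mul
        ((continuousOn_const.div continuousOn_id) (fun x hx => ne_of_gt (hsub (huicc ▸ hx))))).intervalIntegrable)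
    · exact (hucont.mono (huicc ▸ hsub : uIcc a δ ⊆ Ioi 0)).intervalIntegrable
    · intro x hx
      have hx0 : 0 < x := lt_of_lt_of_le ha0 hx.1
      have h1 := hlow x ⟨hx0, hx.2⟩
      rw [mul_one_div, div_le_iff₀ hx0]
      exact h1.trans_eq (mul_comm _ _)
  have hint : (∫ s in a..δ, c * (1/s)) = c * Real.log (δ / a) := by
    rw [intervalIntegral.integral_const_mul, integral_one_div]
    intro h0
    exact absurd (huicc ▸ h0 : (0:ℝ) ∈ Icc a δ) (fun hh => absurd hh.1 (not_le.mpr ha0))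
  have hlog : Real.log (δ / a) = t := by
    have hda : δ / a = Real.exp t := by
      rw [ha, Real.exp_neg]
      field_simp
    rw [hda, Real.log_exp]
  have h1 : u δ - u a ≤ 2 * B := by
    have e1 := abs_le.mp (hB δ ⟨hδ, le_rfl⟩)
    have e2 := abs_le.mp (hB a ⟨ha0, haδ.le⟩)
    linarith [e1.2, e2.1]
  have hct : c * t = 2 * B + c := by
    rw [ht]; field_simp
  rw [hint, hlog, hct] at hmono
  rw [hftc] at hmono
  linarith

/-- Shooting from above the equilibrium: if `α ∈ (0, 1/√2)`, `λ ≥ √(1-2α²)`,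
`0 ≤ f ≤ 1`, and `g` solves `g'' + (1/r) g' - α² g - (1/2)(f² + g² - 1) g = 0`
with `g(0) = λ`, `g'(0) = 0`, then `g ≥ √(1-2α²)` and `g' ≥ 0` throughout, and
`g` cannot tend to `0` at infinity. -/
theorem stmt8 (α lam : ℝ) (hα : α ∈ Ioo (0:ℝ) (1 / Real.sqrt 2))
    (hlam : lam ≥ Real.sqrt (1 - 2 * α ^ 2)) (f g : ℝ → ℝ)
    (hf : ContinuousOn f (Ici 0)) (hfbd : ∀ r ∈ Ici (0:ℝ), 0 ≤ f r ∧ f r ≤ 1)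
    (hgC : ContinuousOn g (Ici 0)) (hg2 : ContDiffOn ℝ 2 g (Ioi 0))
    (hode : ∀ r ∈ Ioi (0:ℝ),
      deriv (deriv g) r + (1 / r) * deriv g r - α ^ 2 * g r
        - (1 / 2) * ((f r) ^ 2 + (g r) ^ 2 - 1) * g r = 0)
    (hg0 : g 0 = lam) (hg0' : deriv g 0 = 0) :
    (∀ r ∈ Ioi (0:ℝ), Real.sqrt (1 - 2 * α ^ 2) ≤ g r ∧ 0 ≤ deriv g r) ∧
      ¬ Tendsto g atTop (nhds 0) := by
  obtain ⟨hα0, hα2⟩ := hα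
  have hα12 : α ^ 2 < 1/2 := by
    have sqrt2pos : (0:ℝ) < Real.sqrt 2 := Real.sqrt_pos.mpr two_pos
    have h1 : α * Real.sqrt 2 < 1 := by rw [lt_div_iff₀ sqrt2pos] at hα2; exact hα2
    nlinarith [Real.sq_sqrt (le_of_lt (two_pos : (0:ℝ) < 2)), mul_pos hα0 sqrt2pos]
  set μ := Real.sqrt (1 - 2 * α ^ 2) with hμdef
  have hμpos : 0 < μ := Real.sqrt_pos.mpr (by linarith)
  have hμsq : μ ^ 2 = 1 - 2 * α ^ 2 := Real.sq_sqrt (by linarith)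
  set G : ℝ → ℝ := fun s => (α^2 + ((f s)^2 + (g s)^2 - 1)/2) * g s with hGdef
  have hGc : ContinuousOn G (Ici 0) := by
    apply ContinuousOn.mul _ hgC
    exact continuousOn_const.add ((((hf.pow 2).add (hgC.pow 2)).sub continuousOn_const).div_const 2)
  have hsGc : ContinuousOn (fun s => s * G s) (Ici 0) := continuousOn_id.mul hGc
  set H : ℝ → ℝ := fun s => s * deriv g s with hHdef
  -- differentiability facts
  have hgders : ∀ r ∈ Ioi (0:ℝ), HasDerivAt g (deriv g r) r := fun r hr =>
    ((hg2.differentiableOn two_ne_zero r hr).differentiableAt (isOpen_Ioi.mem_nhds hr)).hasDerivAt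
  have hdg1 : ContDiffOn ℝ 1 (deriv g) (Ioi 0) := hg2.deriv_of_isOpen isOpen_Ioi (by norm_num)
  have hdgc : ContinuousOn (deriv g) (Ioi 0) := hdg1.continuousOn
  have hdgders : ∀ r ∈ Ioi (0:ℝ), HasDerivAt (deriv g) (deriv (deriv g) r) r := fun r hr =>
    ((hdg1.differentiableOn one_ne_zero r hr).differentiableAt (isOpen_Ioi.mem_nhds hr)).hasDerivAt
  -- H' = r * G r
  have hHd : ∀ r ∈ Ioi (0:ℝ), HasDerivAt H (r * G r) r := by
    intro r hr
    have hr0 : (0:ℝ) < r := hr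
    have hr' : r ≠ 0 := ne_of_gt hr0
    have Hd := (hasDerivAt_id r).mul (hdgders r hr)
    have heq : r * G r = 1 * deriv g r + r * deriv (deriv g) r := by
      have h2 := hode r hr
      have h3 : deriv (deriv g) r
          = α^2 * g r + (1/2)*((f r)^2 + (g r)^2 - 1) * g r - (1/r) * deriv g r := by
        linarith
      rw [hGdef, h3]
      field_simp
      ring
    rw [heq]
    exact Hd
  -- interval integrability of s * G s on subsets of [0, ∞)
  have hInt : ∀ a b : ℝ, 0 ≤ a → a ≤ b →
      IntervalIntegrable (fun s => s * G s) MeasureTheory.volume a b := by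
    intro a b ha hab
    exact (hsGc.mono (by rw [uIcc_of_le hab]; exact fun x hx => ha.trans hx.1)).intervalIntegrable
  -- FTC for H
  have hftcH : ∀ a r : ℝ, 0 < a → a ≤ r → H r - H a = ∫ s in a..r, s * G s := by
    intro a r ha har
    have hsub : uIcc a r ⊆ Ioi (0:ℝ) := by
      rw [uIcc_of_le har]; exact fun x hx => lt_of_lt_of_le ha hx.1
    rw [intervalIntegral.integral_eq_sub_of_hasDerivAt (fun x hx => hHd x (hsub hx))
      (hInt a r ha.le har)]
  -- FTC for g
  have hftcg : ∀ a r : ℝ, 0 < a → a ≤ r → g r - g a = ∫ s in a..r, deriv g s := by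
    intro a r ha har
    have hsub : uIcc a r ⊆ Ioi (0:ℝ) := by
      rw [uIcc_of_le har]; exact fun x hx => lt_of_lt_of_le ha hx.1
    rw [intervalIntegral.integral_eq_sub_of_hasDerivAt (fun x hx => hgders x (hsub hx))
      ((hdgc.mono hsub).intervalIntegrable)]
  -- the limit of H at 0⁺ is 0
  obtain ⟨C, hC⟩ := (isCompact_Icc (a := (0:ℝ)) (b := 1)).exists_bound_of_continuousOn
    (hsGc.mono (fun x hx => hx.1))
  set cc : ℝ := H 1 - ∫ s in (0:ℝ)..1, s * G s with hccdef
  have hhval : ∀ a ∈ Ioc (0:ℝ) 1, H a = cc + ∫ s in (0:ℝ)..a, s * G s := by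
    intro a ha
    have e1 := hftcH a 1 ha.1 ha.2
    have e2 : (∫ s in (0:ℝ)..a, s*G s) + (∫ s in a..1, s*G s) = ∫ s in (0:ℝ)..1, s*G s :=
      intervalIntegral.integral_add_adjacent_intervals (hInt 0 a le_rfl ha.1.le)
        (hInt a 1 ha.1.le ha.2)
    rw [hccdef]; linarith
  have htend0 : Tendsto (fun a => ∫ s in (0:ℝ)..a, s * G s) (nhdsWithin 0 (Ioi 0)) (nhds 0) := by
    rw [tendsto_zero_iff_abs_tendsto_zero]
    have habs : ∀ᶠ a in nhdsWithin (0:ℝ) (Ioi 0), |∫ s in (0:ℝ)..a, s * G s| ≤ C * a := by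
      filter_upwards [Ioc_mem_nhdsGT_of_mem (show (0:ℝ) ∈ Ico 0 1 by constructor <;> norm_num)]
        with a ha
      have hb := intervalIntegral.norm_integral_le_of_norm_le_const (C := C) (f := fun s => s * G s)
        (a := 0) (b := a) (fun x hx => by
          rw [uIoc_of_le ha.1.le] at hx
          exact hC x ⟨hx.1.le, hx.2.trans ha.2⟩)
      rw [Real.norm_eq_abs] at hb
      calc |∫ s in (0:ℝ)..a, s * G s| ≤ C * |a - 0| := hb
      _ = C * a := by rw [sub_zero, abs_of_pos ha.1]
    have htendCa : Tendsto (fun a : ℝ => C * a) (nhdsWithin 0 (Ioi 0)) (nhds 0) := by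
      have h2 : Tendsto (fun a : ℝ => C * a) (nhds 0) (nhds (C * 0)) :=
        (continuous_const.mul continuous_id).tendsto 0
      rw [mul_zero] at h2
      exact h2.mono_left nhdsWithin_le_nhds
    exact squeeze_zero' (Eventually.of_forall (fun a => abs_nonneg _)) habs htendCa
  have hHtendc : Tendsto H (nhdsWithin 0 (Ioi 0)) (nhds cc) := by
    have h1 : Tendsto (fun a => cc + ∫ s in (0:ℝ)..a, s * G s)
        (nhdsWithin 0 (Ioi 0)) (nhds (cc + 0)) := tendsto_const_nhds.add htend0
    rw [add_zero] at h1
    apply h1.congr'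
    filter_upwards [Ioc_mem_nhdsGT_of_mem (show (0:ℝ) ∈ Ico 0 1 by constructor <;> norm_num)]
      with a ha
    exact (hhval a ha).symm
  -- bound for |g| near 0
  obtain ⟨B, hBB⟩ := (isCompact_Icc (a := (0:ℝ)) (b := 1)).exists_bound_of_continuousOn
    (hgC.mono (fun x hx => hx.1))
  simp only [Real.norm_eq_abs] at hBB
  have hcc0 : cc = 0 := by
    by_contra hne
    rcases lt_or_gt_of_ne hne with hneg | hpos
    · -- cc < 0: apply log_blowup_aux to -g
      have hev : ∀ᶠ a in nhdsWithin 0 (Ioi 0), H a < cc/2 :=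
        hHtendc.eventually (eventually_lt_nhds (by linarith))
      obtain ⟨δ', hδ'mem, hsubδ⟩ := mem_nhdsGT_iff_exists_Ioc_subset.mp hev
      set δ := min δ' 1 with hδdef
      have hδpos : 0 < δ := lt_min hδ'mem zero_lt_one
      apply log_blowup_aux (fun x => -g x) ?_ ?_ B (-cc/2) δ hδpos (by linarith) ?_ ?_
      · intro s hs
        have : deriv (fun x => -g x) s = -deriv g s := deriv.neg
        rw [this]
        exact (hgders s hs).neg
      · apply ContinuousOn.congr hdgc.neg
        intro x _
        exact deriv.neg
      · intro s hs
        rw [abs_neg]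
        exact hBB s ⟨hs.1.le, hs.2.trans (min_le_right _ _)⟩
      · intro a ha
        have h1 : H a < cc/2 := hsubδ ⟨ha.1, ha.2.trans (min_le_left _ _)⟩
        have h2 : a * deriv g a < cc/2 := h1
        have h3 : deriv (fun x => -g x) a = -deriv g a := deriv.neg
        rw [h3, mul_neg]
        linarith
    · -- cc > 0: apply log_blowup_aux to g
      have hev : ∀ᶠ a in nhdsWithin 0 (Ioi 0), cc/2 < H a :=
        hHtendc.eventually (eventually_gt_nhds (by linarith))
      obtain ⟨δ', hδ'mem, hsubδ⟩ := mem_nhdsGT_iff_exists_Ioc_subset.mp hev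
      set δ := min δ' 1 with hδdef
      have hδpos : 0 < δ := lt_min hδ'mem zero_lt_one
      apply log_blowup_aux g hgders hdgc B (cc/2) δ hδpos (by linarith) ?_ ?_
      · intro s hs
        exact hBB s ⟨hs.1.le, hs.2.trans (min_le_right _ _)⟩
      · intro a ha
        have h1 : cc/2 < H a := hsubδ ⟨ha.1, ha.2.trans (min_le_left _ _)⟩
        have h2 : cc/2 < a * deriv g a := h1
        linarith
  have hlim : Tendsto H (nhdsWithin 0 (Ioi 0)) (nhds 0) := hcc0 ▸ hHtendc
  -- G is nonneg wherever g ≥ μ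
  have keyG : ∀ s, μ ≤ g s → 0 ≤ G s := by
    intro s hgs
    have hg0' : 0 < g s := lt_of_lt_of_le hμpos hgs
    have hΦ : 0 ≤ α^2 + ((f s)^2 + (g s)^2 - 1)/2 := by
      nlinarith [sq_nonneg (f s), mul_self_le_mul_self hμpos.le hgs]
    exact mul_nonneg hΦ hg0'.le
  -- main claim: g stays above μ
  have key : ∀ r ∈ Ioi (0:ℝ), μ ≤ g r := by
    by_contra hcon
    push_neg at hcon
    obtain ⟨r1, hr1, hr1lt⟩ := hcon
    set S : Set ℝ := {s | 0 < s ∧ g s < μ} with hSdef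
    have hSne : S.Nonempty := ⟨r1, hr1, hr1lt⟩
    have hSbdd : BddBelow S := ⟨0, fun x hx => hx.1.le⟩
    set t0 := sInf S with ht0def
    have ht00 : 0 ≤ t0 := le_csInf hSne (fun x hx => hx.1.le)
    have hbelow : ∀ s, 0 < s → s < t0 → μ ≤ g s := by
      intro s hs hst
      by_contra hlt
      push_neg at hlt
      exact absurd (csInf_le hSbdd ⟨hs, hlt⟩) (not_le.mpr hst)
    have hgt0le : g t0 ≤ μ := by
      by_contra hgt
      push_neg at hgt
      have hcts : ContinuousWithinAt g (Ici 0) t0 := hgC t0 ht00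
      have hev : ∀ᶠ x in nhdsWithin t0 (Ici 0), μ < g x :=
        hcts.eventually (eventually_gt_nhds hgt)
      obtain ⟨ε, hε, hball⟩ := Metric.mem_nhdsWithin_iff.mp hev
      obtain ⟨s, hsS, hslt⟩ := Real.lt_sInf_add_pos hSne hε
      have hst0 : t0 ≤ s := csInf_le hSbdd hsS
      have hsball : s ∈ Metric.ball t0 ε := by
        rw [Metric.mem_ball, Real.dist_eq, abs_of_nonneg (by linarith)]
        linarith
      have := hball ⟨hsball, hsS.1.le⟩
      exact absurd hsS.2 (not_lt.mpr (le_of_lt this))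
    have hgt0ge : μ ≤ g t0 := by
      rcases eq_or_lt_of_le ht00 with h0 | h0
      · rw [← h0, hg0]; exact hlam
      · have hclne : (nhdsWithin t0 (Ioo 0 t0)).NeBot := by
          apply mem_closure_iff_nhdsWithin_neBot.mp
          rw [closure_Ioo (ne_of_lt h0)]
          exact ⟨ht00, le_rfl⟩
        have htt : Tendsto g (nhdsWithin t0 (Ioo 0 t0)) (nhds (g t0)) :=
          (hgC t0 ht00).mono_left (nhdsWithin_mono _ (fun x hx => hx.1.le))
        exact ge_of_tendsto htt
          (eventually_mem_nhdsWithin.mono (fun x hx => hbelow x hx.1 hx.2))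
    have hgt0 : g t0 = μ := le_antisymm hgt0le hgt0ge
    -- H t0 ≥ 0 when t0 > 0
    have hHt0 : 0 < t0 → 0 ≤ H t0 := by
      intro ht0pos
      have hmono : ∀ a ∈ Ioc (0:ℝ) t0, H a ≤ H t0 := by
        intro a ha
        have heq := hftcH a t0 ha.1 ha.2
        have hnn : 0 ≤ ∫ s in a..t0, s * G s := by
          apply intervalIntegral.integral_nonneg ha.2
          intro x hx
          have hx0 : 0 < x := lt_of_lt_of_le ha.1 hx.1
          have hgx : μ ≤ g x := by
            rcases lt_or_eq_of_le hx.2 with hlt | heqx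
            · exact hbelow x hx0 hlt
            · rw [heqx]; exact hgt0ge
          exact mul_nonneg hx0.le (keyG x hgx)
        linarith
      exact le_of_tendsto hlim
        (eventually_of_mem (Ioc_mem_nhdsGT_of_mem ⟨le_rfl, ht0pos⟩) hmono)
    -- window around t0
    have hev2 : g ⁻¹' Metric.ball μ (μ/2) ∈ nhdsWithin t0 (Ici 0) := by
      apply hgC t0 ht00
      rw [hgt0]
      exact Metric.ball_mem_nhds _ (by positivity)
    obtain ⟨ε, hεpos, hball⟩ := Metric.mem_nhdsWithin_iff.mp hev2
    set δ : ℝ := min (ε/2) (1/(2*μ)) with hδdef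
    have hδpos : 0 < δ := lt_min (by linarith) (by positivity)
    have hδε : δ < ε := lt_of_le_of_lt (min_le_left _ _) (by linarith)
    have hKδ : μ^2 * δ^2 ≤ 1/4 := by
      have h1 : δ ≤ 1/(2*μ) := min_le_right _ _
      have h2 : μ * δ ≤ 1/2 := by
        rw [le_div_iff₀ (by positivity : (0:ℝ) < 2*μ)] at h1
        nlinarith
      have h3 : (0:ℝ) ≤ (1/2 - μ*δ) * (1/2 + μ*δ) :=
        mul_nonneg (by linarith) (by positivity)
      nlinarith [h3]
    set W := Icc t0 (t0 + δ) with hWdef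
    have hWg : ∀ x ∈ W, μ/2 < g x ∧ g x < 3*μ/2 := by
      intro x hx
      have hx0 : 0 ≤ x := le_trans ht00 hx.1
      have hxball : x ∈ Metric.ball t0 ε := by
        rw [Metric.mem_ball, Real.dist_eq, abs_of_nonneg (by linarith [hx.1])]
        linarith [hx.2]
      have hgx := hball ⟨hxball, hx0⟩
      simp only [mem_preimage, Metric.mem_ball, Real.dist_eq] at hgx
      obtain ⟨e1, e2⟩ := abs_sub_lt_iff.mp hgx
      constructor <;> linarith
    have hWne : W.Nonempty := ⟨t0, le_rfl, by linarith⟩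
    obtain ⟨ξ, hξW, hξmax⟩ := isCompact_Icc.exists_isMaxOn hWne
      (((continuous_id.max continuous_const).comp_continuousOn
        (continuousOn_const.sub hgC)).mono (fun x hx => le_trans ht00 hx.1))
    set M := max (μ - g ξ) 0 with hMdef
    have hM0 : 0 ≤ M := le_max_right _ _
    have hwle : ∀ x ∈ W, max (μ - g x) 0 ≤ M := fun x hx => isMaxOn_iff.mp hξmax x hx
    -- lower bound for G on the window
    have hGlb : ∀ x ∈ W, -(μ^2 * M) ≤ G x := by
      intro x hx
      obtain ⟨hgx1, hgx2⟩ := hWg x hx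
      have hgxpos : 0 < g x := lt_trans (by positivity) hgx1
      rcases le_or_gt μ (g x) with hc | hc
      · exact le_trans (neg_nonpos.mpr (by positivity)) (keyG x hc)
      · have hwx : μ - g x ≤ M := le_trans (le_max_left _ _) (hwle x hx)
        have e1 : G x = ((g x)^2 - μ^2)/2 * g x + (f x)^2/2 * g x := by
          rw [hGdef]
          have : (1:ℝ) = μ^2 + 2*α^2 := by linarith [hμsq]
          nlinarith [this]
        have e2 : 0 ≤ (f x)^2/2 * g x := by positivity
        have e3 : -(μ^2 * M) ≤ ((g x)^2 - μ^2)/2 * g x := by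
          have p1 : μ^2 * (μ - g x) ≤ μ^2 * M :=
            mul_le_mul_of_nonneg_left hwx (sq_nonneg μ)
          have p2 : (g x + μ) * g x ≤ 2 * μ^2 := by nlinarith
          have p3 : (μ - g x) * ((g x + μ) * g x) ≤ (μ - g x) * (2 * μ^2) :=
            mul_le_mul_of_nonneg_left p2 (by linarith)
          nlinarith [p1, p3]
        linarith
    -- lower bound for H on the window
    have hha : ∀ r, t0 < r → r ≤ t0 + δ → ∀ a, 0 < a → t0 ≤ a → a ≤ r →
        H a - (μ^2*M) * (r * (r - t0)) ≤ H r := by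
      intro r hrl hrr a ha0 hat0 har
      have hr0 : 0 < r := lt_of_le_of_lt ht00 hrl
      have heq := hftcH a r ha0 har
      have hintlb : (-(μ^2*M) * r) * (r - a) ≤ ∫ s in a..r, s * G s := by
        have hmono := intervalIntegral.integral_mono_on (f := fun _ => -(μ^2*M) * r)
          (g := fun s => s * G s) har intervalIntegrable_const (hInt a r ha0.le har) ?_
        · simp only [intervalIntegral.integral_const, smul_eq_mul] at hmono
          linarith [hmono]
        · intro x hx
          show -(μ^2*M) * r ≤ x * G x
          have hx0 : 0 < x := lt_of_lt_of_le ha0 hx.1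
          have hxW : x ∈ W := ⟨le_trans hat0 hx.1, le_trans hx.2 hrr⟩
          have hG1 := hGlb x hxW
          have p1 : x * (-(μ^2*M)) ≤ x * G x := mul_le_mul_of_nonneg_left hG1 hx0.le
          have p2 : μ^2*M * x ≤ μ^2*M * r :=
            mul_le_mul_of_nonneg_left hx.2 (mul_nonneg (sq_nonneg μ) hM0)
          have : -(μ^2*M) * r ≤ x * (-(μ^2*M)) := by linarith
          linarith [p1, this]
      have hKr : 0 ≤ (μ^2*M) * r := by positivity
      nlinarith [mul_le_mul_of_nonneg_left hat0 hKr]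
    have hhlow : ∀ r, t0 < r → r ≤ t0 + δ → -(μ^2*M) * (r * (r - t0)) ≤ H r := by
      intro r hrl hrr
      rcases eq_or_lt_of_le ht00 with h0 | h0
      · have hr0 : (0:ℝ) < r := by rw [h0]; exact hrl
        have hev : ∀ᶠ a in nhdsWithin 0 (Ioi 0), H a ≤ H r + (μ^2*M) * (r * (r - t0)) := by
          apply eventually_of_mem (Ioc_mem_nhdsGT_of_mem (show (0:ℝ) ∈ Ico 0 r from ⟨le_rfl, hr0⟩))
          intro a ha
          have := hha r hrl hrr a ha.1 (by rw [← h0]; exact ha.1.le) ha.2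
          linarith
        have := le_of_tendsto hlim hev
        linarith
      · have h1 := hha r hrl hrr t0 h0 le_rfl hrl.le
        have h2 := hHt0 h0
        linarith
    -- lower bound for deriv g on the window
    have hdglow : ∀ r, t0 < r → r ≤ t0 + δ → -(μ^2*M*δ) ≤ deriv g r := by
      intro r hrl hrr
      have hr0 : 0 < r := lt_of_le_of_lt ht00 hrl
      have h1 := hhlow r hrl hrr
      have h2 : H r = r * deriv g r := rfl
      have hfinal : r * (-(μ^2*M*δ)) ≤ r * deriv g r := by
        have hrt : r - t0 ≤ δ := by linarith
        nlinarith [mul_le_mul_of_nonneg_left hrt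
          (mul_nonneg (mul_nonneg (sq_nonneg μ) hM0) hr0.le)]
      exact le_of_mul_le_mul_left hfinal hr0
    -- lower bound for g on the window
    have hglow : ∀ r, t0 < r → r ≤ t0 + δ → μ - μ^2*M*δ^2 ≤ g r := by
      intro r hrl hrr
      have hstep : ∀ a, t0 < a → a ≤ r → g a - μ^2*M*δ^2 ≤ g r := by
        intro a hal har
        have ha0 : 0 < a := lt_of_le_of_lt ht00 hal
        have heq := hftcg a r ha0 har
        have hsub : uIcc a r ⊆ Ioi (0:ℝ) := by
          rw [uIcc_of_le har]; exact fun x hx => lt_of_lt_of_le ha0 hx.1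
        have hlb : (-(μ^2*M*δ)) * (r - a) ≤ ∫ s in a..r, deriv g s := by
          have hmono := intervalIntegral.integral_mono_on (μ := MeasureTheory.volume)
            (f := fun _ => -(μ^2*M*δ))
            (g := deriv g) har intervalIntegrable_const
            ((hdgc.mono hsub).intervalIntegrable)
            (fun x hx => hdglow x (lt_of_lt_of_le hal hx.1) (le_trans hx.2 hrr))
          simp only [intervalIntegral.integral_const, smul_eq_mul] at hmono
          linarith [hmono]
        have hra : r - a ≤ δ := by linarith
        nlinarith [mul_le_mul_of_nonneg_left hra
          (mul_nonneg (mul_nonneg (sq_nonneg μ) hM0) hδpos.le)]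
      have hclne : (nhdsWithin t0 (Ioc t0 r)).NeBot := by
        apply mem_closure_iff_nhdsWithin_neBot.mp
        rw [closure_Ioc (ne_of_lt hrl)]
        exact ⟨le_rfl, hrl.le⟩
      have htt : Tendsto g (nhdsWithin t0 (Ioc t0 r)) (nhds μ) := by
        rw [← hgt0]
        exact (hgC t0 ht00).mono_left
          (nhdsWithin_mono _ (fun x hx => le_trans ht00 hx.1.le))
      have := le_of_tendsto htt (eventually_mem_nhdsWithin.mono
        (fun a ha => (by linarith [hstep a ha.1 ha.2] : g a ≤ g r + μ^2*M*δ^2)))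
      linarith
    -- conclude M = 0
    have hMle : M ≤ M/2 := by
      rcases eq_or_lt_of_le hξW.1 with hξ0 | hξpos
      · have hMz : M = 0 := by
          rw [hMdef, ← hξ0, hgt0]
          simp
        rw [hMz]; norm_num
      · have h1 := hglow ξ hξpos hξW.2
        have h3 : μ^2*M*δ^2 ≤ M/2 := by nlinarith [hKδ, hM0]
        rw [hMdef]
        apply max_le (by linarith) (by linarith)
    have hM00 : M = 0 := by linarith
    have hgW : ∀ x ∈ W, μ ≤ g x := by
      intro x hx
      have h1 := hwle x hx
      rw [hM00] at h1
      have h2 := le_trans (le_max_left (μ - g x) 0) h1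
      linarith
    obtain ⟨s, hsS, hslt⟩ := Real.lt_sInf_add_pos hSne hδpos
    have hst0 : t0 ≤ s := csInf_le hSbdd hsS
    have : μ ≤ g s := hgW s ⟨hst0, by linarith [hslt]⟩
    exact absurd hsS.2 (not_lt.mpr this)
  -- deriv g ≥ 0 everywhere
  have hderiv : ∀ r ∈ Ioi (0:ℝ), 0 ≤ deriv g r := by
    intro r hr
    have hr0 : (0:ℝ) < r := hr
    have hmono : ∀ a ∈ Ioc (0:ℝ) r, H a ≤ H r := by
      intro a ha
      have heq := hftcH a r ha.1 ha.2
      have hnn : 0 ≤ ∫ s in a..r, s * G s := by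
        apply intervalIntegral.integral_nonneg ha.2
        intro x hx
        have hx0 : 0 < x := lt_of_lt_of_le ha.1 hx.1
        exact mul_nonneg hx0.le (keyG x (key x hx0))
      linarith
    have h0r : 0 ≤ H r := le_of_tendsto hlim
      (eventually_of_mem (Ioc_mem_nhdsGT_of_mem (show (0:ℝ) ∈ Ico 0 r from ⟨le_rfl, hr0⟩)) hmono)
    have h2 : r * 0 ≤ r * deriv g r := by
      rw [mul_zero]; exact h0r
    exact le_of_mul_le_mul_left h2 hr0
  refine ⟨fun r hr => ⟨key r hr, hderiv r hr⟩, ?_⟩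
  intro hT
  have h1 : ∀ᶠ r in atTop, g r < μ := hT.eventually (eventually_lt_nhds hμpos)
  obtain ⟨r, hrlt, hr1⟩ := (h1.and (eventually_ge_atTop 1)).exists
  exact absurd (key r (by linarith : (0:ℝ) < r)) (not_le.mpr hrlt)
end

section
/- Let a, g : [0,∞) → ℝ be continuous with a(r) → 0 and g(r) → 0 as r → ∞. Suppose f̃ : [0,∞) → ℝ is C² on (0,∞), satisfies f̃'' + (1/r) f̃' - (a²/r²) f̃ - (1/2)(f̃² + g² - 1) f̃ = 0, and 0 < f̃(r) < 1 with f̃'(r) ≥ 0 for all r > 0. Then f̃(r) → 1 as r → ∞. -/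
open Filter Set

set_option maxHeartbeats 2000000 in
/-- If `a → 0` and `g → 0` at infinity and `f̃` is a C² solution on `(0,∞)` of
`f̃'' + (1/r) f̃' - (a²/r²) f̃ - (1/2)(f̃² + g² - 1) f̃ = 0` with `0 < f̃ < 1`
and `f̃' ≥ 0` on `(0,∞)`, then `f̃(r) → 1` as `r → ∞`. -/
theorem stmt12 (a g F : ℝ → ℝ)
    (ha : ContinuousOn a (Ici 0)) (hg : ContinuousOn g (Ici 0))
    (halim : Tendsto a atTop (nhds 0)) (hglim : Tendsto g atTop (nhds 0))
    (hF2 : ContDiffOn ℝ 2 F (Ioi 0))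
    (hode : ∀ r ∈ Ioi (0:ℝ),
      deriv (deriv F) r + (1 / r) * deriv F r - ((a r) ^ 2 / r ^ 2) * F r
        - (1 / 2) * ((F r) ^ 2 + (g r) ^ 2 - 1) * F r = 0)
    (hbd : ∀ r ∈ Ioi (0:ℝ), 0 < F r ∧ F r < 1)
    (hmono : ∀ r ∈ Ioi (0:ℝ), 0 ≤ deriv F r) :
    Tendsto F atTop (nhds 1) := by
  have hsplit := (contDiffOn_succ_iff_deriv_of_isOpen (n := 1) isOpen_Ioi).mp
    (by norm_num at hF2 ⊢; exact hF2)
  have hdF : DifferentiableOn ℝ F (Ioi 0) := hsplit.1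
  have hdF' : ContDiffOn ℝ 1 (deriv F) (Ioi 0) := hsplit.2.2
  have hF'c : ContinuousOn (deriv F) (Ioi 0) := hdF'.continuousOn
  have hdF'' : DifferentiableOn ℝ (deriv F) (Ioi 0) := hdF'.differentiableOn one_ne_zero
  -- F monotone on Ioi 0
  have hm' : MonotoneOn F (Ioi 0) :=
    monotoneOn_of_deriv_nonneg (convex_Ioi 0) hF2.continuousOn
      (by rw [interior_Ioi]; exact hdF) (by rw [interior_Ioi]; exact hmono)
  -- the limit l
  set l : ℝ := sSup (F '' Ioi 0) with hl
  have hne : (F '' Ioi 0).Nonempty := ⟨F 1, ⟨1, by norm_num, rfl⟩⟩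
  have hbdd : BddAbove (F '' Ioi 0) := ⟨1, by rintro y ⟨x, hx, rfl⟩; exact (hbd x hx).2.le⟩
  have hle : ∀ r ∈ Ioi (0:ℝ), F r ≤ l := fun r hr => le_csSup hbdd ⟨r, hr, rfl⟩
  have hl1 : l ≤ 1 := csSup_le hne (by rintro y ⟨x, hx, rfl⟩; exact (hbd x hx).2.le)
  have hl0 : 0 < l := lt_of_lt_of_le (hbd 1 (by norm_num)).1 (hle 1 (by norm_num))
  -- F tends to l
  have htend : Tendsto F atTop (nhds l) := by
    rw [Metric.tendsto_atTop]
    intro ε hε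
    obtain ⟨y, ⟨x, hx, rfl⟩, hy⟩ := exists_lt_of_lt_csSup hne (by linarith : l - ε < l)
    refine ⟨max x 1, fun r hr => ?_⟩
    have hx1 : (0:ℝ) < r := lt_of_lt_of_le one_pos (le_trans (le_max_right x 1) hr)
    have h1 : F x ≤ F r := hm' hx hx1 (le_trans (le_max_left x 1) hr)
    have h2 : F r ≤ l := hle r hx1
    rw [Real.dist_eq, abs_lt]
    constructor <;> linarith
  have hnear : ∀ m, m < l → ∀ᶠ r in atTop, m ≤ F r := by
    intro m hm
    obtain ⟨y, ⟨x, hx, rfl⟩, hy⟩ := exists_lt_of_lt_csSup hne hm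
    filter_upwards [eventually_ge_atTop (max x 1)] with r hr
    have hx1 : (0:ℝ) < r := lt_of_lt_of_le one_pos (le_trans (le_max_right x 1) hr)
    have := hm' hx hx1 (le_trans (le_max_left x 1) hr)
    linarith
  clear_value l
  clear hne hbdd hl
  -- it suffices to show l = 1
  suffices hl : l = 1 by rwa [hl] at htend
  by_contra hne1
  have hllt : l < 1 := lt_of_le_of_ne hl1 hne1
  set c : ℝ := (1 - l ^ 2) * l / 4 with hc
  have hcpos : 0 < c := by
    have : 0 < 1 - l ^ 2 := by nlinarith
    rw [hc]; positivity
  -- eventual bounds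
  have hev1 : ∀ᶠ r in atTop, a r ^ 2 ≤ c / 4 := by
    have := (halim.pow 2).eventually (eventually_le_nhds (by norm_num; linarith : (0:ℝ)^2 < c/4))
    simpa using this
  have hev2 : ∀ᶠ r in atTop, g r ^ 2 ≤ c / 2 := by
    have := (hglim.pow 2).eventually (eventually_le_nhds (by norm_num; linarith : (0:ℝ)^2 < c/2))
    simpa using this
  have hev3 : ∀ᶠ r in atTop, l / 2 ≤ F r := hnear (l / 2) (by linarith)
  clear_value c
  obtain ⟨R, hR⟩ := ((hev1.and (hev2.and hev3)).and (eventually_ge_atTop (1:ℝ))).exists_forall_of_atTop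
  have hR1 : (1:ℝ) ≤ R := (hR R le_rfl).2
  have hR0 : (0:ℝ) < R := lt_of_lt_of_le one_pos hR1
  -- key estimate: F'' ≤ -c/2 on Ioi R
  have hkey : ∀ r ∈ Ioi R, deriv (deriv F) r ≤ -(c / 2) := by
    intro r hr
    have hrR : R ≤ r := le_of_lt hr
    have hr0 : (0:ℝ) < r := lt_of_lt_of_le hR0 hrR
    have hr1 : (1:ℝ) ≤ r := le_trans hR1 hrR
    obtain ⟨⟨ha2, hg2, hF2'⟩, -⟩ := hR r hrR
    have heq := hode r hr0
    have hFpos := (hbd r hr0).1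
    have hFlt := (hbd r hr0).2
    have hFle : F r ≤ l := hle r hr0
    have hD1 : 0 ≤ deriv F r := hmono r hr0
    -- bound the a² term
    have hb1 : a r ^ 2 / r ^ 2 * F r ≤ c / 4 := by
      have h1 : a r ^ 2 / r ^ 2 ≤ a r ^ 2 :=
        div_le_self (sq_nonneg _) (by nlinarith)
      have h2 : 0 ≤ a r ^ 2 / r ^ 2 := by positivity
      nlinarith
    -- bound the nonlinear term
    have hb2 : (1 / 2) * ((F r) ^ 2 + (g r) ^ 2 - 1) * F r ≤ -c + c / 4 := by
      have e1 : F r ^ 2 - 1 ≤ l ^ 2 - 1 := by nlinarith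
      have e2 : (F r ^ 2 - 1) * F r ≤ (l ^ 2 - 1) * F r :=
        mul_le_mul_of_nonneg_right e1 hFpos.le
      have e3 : (l ^ 2 - 1) * F r ≤ (l ^ 2 - 1) * (l / 2) :=
        mul_le_mul_of_nonpos_left hF2' (by nlinarith)
      have h1 : (F r ^ 2 - 1) * F r ≤ (l ^ 2 - 1) * (l / 2) := le_trans e2 e3
      have e4 : 1 / 2 * g r ^ 2 * F r ≤ c / 4 := by nlinarith [sq_nonneg (g r)]
      have e5 : (1 / 2) * ((F r) ^ 2 + (g r) ^ 2 - 1) * F r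
          = 1 / 2 * ((F r ^ 2 - 1) * F r) + 1 / 2 * g r ^ 2 * F r := by ring
      have e6 : 1 / 2 * ((l ^ 2 - 1) * (l / 2)) = -c := by rw [hc]; ring
      linarith
    have hb3 : 0 ≤ (1 / r) * deriv F r :=
      mul_nonneg (by positivity) hD1
    linarith
  -- the auxiliary function h is antitone on Ici R
  set H : ℝ → ℝ := fun x => deriv F x + c / 2 * x with hH
  have hIci : Ici R ⊆ Ioi (0:ℝ) := fun x hx => lt_of_lt_of_le hR0 hx
  have hHc : ContinuousOn H (Ici R) :=
    ((hF'c.mono hIci).add (continuous_const.mul continuous_id).continuousOn)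
  have hHdiff : ∀ x ∈ Ioi R, DifferentiableAt ℝ H x := by
    intro x hx
    have hx0 : x ∈ Ioi (0:ℝ) := lt_of_lt_of_le hR0 (le_of_lt hx)
    have h1 : DifferentiableAt ℝ (deriv F) x :=
      (hdF'' x hx0).differentiableAt (isOpen_Ioi.mem_nhds hx0)
    exact h1.add (by fun_prop)
  have hHd : ∀ x ∈ Ioi R, deriv H x ≤ 0 := by
    intro x hx
    have hx0 : x ∈ Ioi (0:ℝ) := lt_of_lt_of_le hR0 (le_of_lt hx)
    have h1 : DifferentiableAt ℝ (deriv F) x :=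
      (hdF'' x hx0).differentiableAt (isOpen_Ioi.mem_nhds hx0)
    have : deriv H x = deriv (deriv F) x + c / 2 := by
      rw [hH, deriv_fun_add h1 (by fun_prop), deriv_const_mul _ (differentiableAt_fun_id), deriv_id'']
      ring
    rw [this]
    have := hkey x hx
    linarith
  have hanti : AntitoneOn H (Ici R) :=
    antitoneOn_of_deriv_nonpos (convex_Ici R) hHc
      (by rw [interior_Ici]; exact fun x hx => (hHdiff x hx).differentiableWithinAt)
      (by rw [interior_Ici]; exact hHd)
  -- derive contradiction
  set T : ℝ := R + (2 / c) * (deriv F R + 1) with hT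
  have hTR : R ≤ T := by
    have h1 : 0 ≤ deriv F R := hmono R hR0
    have h2 : 0 ≤ (2 / c) * (deriv F R + 1) := by positivity
    rw [hT]; linarith
  have hHle : deriv F T + c / 2 * T ≤ deriv F R + c / 2 * R :=
    hanti (self_mem_Ici) hTR hTR
  have hT0 : (0:ℝ) < T := lt_of_lt_of_le hR0 hTR
  have hDT : 0 ≤ deriv F T := hmono T hT0
  have hcne : c ≠ 0 := ne_of_gt hcpos
  have hexp : c / 2 * T = c / 2 * R + (deriv F R + 1) := by
    rw [hT]; field_simp
  linarith
end

section
/- Let a, g : [0,∞) → ℝ be continuous with 0 < a(r) < 1 for r > 0, a(r) = O(r^{1/2} e^{-β(1-ε)r}) and g(r) = O(e^{-α(1-ε)r}) as r → ∞ for all ε ∈ (0,1). Suppose f : [0,∞) → ℝ is C² on (0,∞), 0 < f < 1, f solves f'' + (1/r) f' - (a²/r²) f - (1/2)(f² + g² - 1) f = 0 and f(r) → 1 as r → ∞. Then for every ε ∈ (0,1), 1 - f(r) = O(exp(-γ(1-ε) r)) as r → ∞, where γ = min{1, 2α, 2β}. -/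
open Filter Set Asymptotics

lemma maxprin (w : ℝ → ℝ) (k R : ℝ) (hk : 0 < k)
    (hc : ContinuousOn w (Ici R))
    (hd2 : ∀ r ∈ Ioi R, HasDerivAt (deriv w) (deriv (deriv w) r) r)
    (hL : ∀ r ∈ Ioi R, 0 ≤ deriv (deriv w) r + (1/r) * deriv w r - k^2 * w r)
    (hwR : w R ≤ 0) (hlim : Tendsto w atTop (nhds 0)) :
    ∀ r ∈ Ici R, w r ≤ 0 := by
  by_contra h
  push_neg at h
  obtain ⟨r₀, hr₀R, hr₀⟩ := h
  set s := w r₀ with hs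
  have hev : ∀ᶠ r in atTop, w r < s := hlim.eventually (eventually_lt_nhds hr₀)
  obtain ⟨M₀, hM⟩ := eventually_atTop.1 hev
  set M := max M₀ r₀ with hMdef
  have hr₀M : r₀ ≤ M := le_max_right _ _
  have hRM : R ≤ M := le_trans hr₀R hr₀M
  obtain ⟨x, hxmem, hxmax⟩ := (isCompact_Icc (a := R) (b := M)).exists_isMaxOn
    (nonempty_Icc.2 hRM) (hc.mono (fun y hy => hy.1))
  have hxs : s ≤ w x := hxmax ⟨hr₀R, hr₀M⟩
  have hxpos : 0 < w x := lt_of_lt_of_le hr₀ hxs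
  have hglob : ∀ r ∈ Ici R, w r ≤ w x := by
    intro r hr
    by_cases hrM : r ≤ M
    · exact hxmax ⟨hr, hrM⟩
    · push_neg at hrM
      exact le_trans (le_of_lt (hM r (le_trans (le_max_left _ _) hrM.le))) hxs
  have hxR : R < x := by
    rcases eq_or_lt_of_le hxmem.1 with h | h
    · exfalso; rw [← h] at hxpos; linarith
    · exact h
  have hloc : IsLocalMax w x := by
    filter_upwards [Ioi_mem_nhds hxR] with y hy
    exact hglob y (mem_Ici.2 (le_of_lt hy))
  have hd0 : deriv w x = 0 := hloc.deriv_eq_zero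
  have hww : 0 < deriv (deriv w) x := by
    have h1 := hL x hxR
    rw [hd0] at h1
    have hkx : 0 < k^2 * w x := by positivity
    linarith
  have hslope := (hasDerivAt_iff_tendsto_slope.1 (hd2 x hxR))
  have hpos : ∀ᶠ y in nhdsWithin x (Ioi x), 0 < deriv w y := by
    have h1 : ∀ᶠ y in nhdsWithin x (Ioi x), 0 < slope (deriv w) x y := by
      apply (hslope.mono_left (nhdsWithin_mono x (by
        intro y hy; exact ne_of_gt hy))).eventually (eventually_gt_nhds hww)
    filter_upwards [h1, self_mem_nhdsWithin] with y hy hy'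
    rw [slope_def_field, hd0, sub_zero] at hy
    have hyx : 0 < y - x := sub_pos.2 hy'
    have := mul_pos hy hyx
    rw [div_mul_cancel₀] at this
    · linarith
    · exact ne_of_gt hyx
  obtain ⟨δ, hδ, hδpos⟩ := (nhdsGT_basis x).eventually_iff.1 hpos
  set y := min δ (x + 1) with hy
  have hxy : x < y := lt_min hδ (by linarith)
  have hmono : StrictMonoOn w (Icc x y) := by
    apply strictMonoOn_of_deriv_pos (convex_Icc x y)
    · apply hc.mono
      intro z hz; exact le_trans hxR.le hz.1
    · intro z hz
      rw [interior_Icc] at hz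
      exact hδpos ⟨hz.1, lt_of_lt_of_le hz.2 (min_le_left _ _)⟩
  have h1 : w x < w y := hmono (left_mem_Icc.2 hxy.le) (right_mem_Icc.2 hxy.le) hxy
  have h2 := hglob y (le_trans hxR.le hxy.le)
  linarith

lemma boundA (β γ c ε Ca r : ℝ) (hr1 : 1 ≤ r)
    (hε0 : 0 < ε) (hε1 : ε < 1) (hγβ : γ ≤ 2 * β)
    (hc : c = γ * (1 - ε / 2)) (a : ℝ → ℝ)
    (hb : ‖a r‖ ≤ Ca * ‖Real.sqrt r * Real.exp (-β * (1 - ε/2) * r)‖) :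
    a r ^ 2 / r ^ 2 ≤ Ca ^ 2 * Real.exp (-c * r) := by
  have hr0 : (0:ℝ) < r := by linarith
  have hb' : |a r| ≤ Ca * (Real.sqrt r * Real.exp (-β * (1 - ε/2) * r)) := by
    rwa [Real.norm_eq_abs, Real.norm_eq_abs,
      abs_of_nonneg (show (0:ℝ) ≤ Real.sqrt r * Real.exp (-β * (1 - ε/2) * r) by positivity)] at hb
  have hss : Real.sqrt r * Real.sqrt r = r := Real.mul_self_sqrt hr0.le
  have hexp2 : Real.exp (-β * (1 - ε/2) * r) * Real.exp (-β * (1 - ε/2) * r)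
      = Real.exp (-(2 * β * (1 - ε/2)) * r) := by
    rw [← Real.exp_add]; ring_nf
  have hsq : a r ^ 2 ≤ Ca ^ 2 * (r * Real.exp (-(2 * β * (1 - ε/2)) * r)) := by
    calc a r ^ 2 = |a r| * |a r| := by rw [← abs_mul, abs_mul_self]; ring
      _ ≤ (Ca * (Real.sqrt r * Real.exp (-β * (1 - ε/2) * r)))
            * (Ca * (Real.sqrt r * Real.exp (-β * (1 - ε/2) * r))) :=
          mul_self_le_mul_self (abs_nonneg _) hb'
      _ = Ca ^ 2 * ((Real.sqrt r * Real.sqrt r)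
            * (Real.exp (-β * (1 - ε/2) * r) * Real.exp (-β * (1 - ε/2) * r))) := by ring
      _ = Ca ^ 2 * (r * Real.exp (-(2 * β * (1 - ε/2)) * r)) := by rw [hss, hexp2]
  have hexple : Real.exp (-(2 * β * (1 - ε/2)) * r) ≤ Real.exp (-c * r) := by
    apply Real.exp_le_exp.2
    rw [hc]
    nlinarith [mul_le_mul_of_nonneg_right
      (mul_le_mul_of_nonneg_right hγβ (by linarith : (0:ℝ) ≤ 1 - ε/2)) hr0.le]
  have hEpos : 0 < Real.exp (-(2 * β * (1 - ε/2)) * r) := Real.exp_pos _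
  rw [div_le_iff₀ (by positivity)]
  have hrr : r ≤ r ^ 2 := by nlinarith
  calc a r ^ 2 ≤ Ca ^ 2 * (r * Real.exp (-(2 * β * (1 - ε/2)) * r)) := hsq
    _ ≤ Ca ^ 2 * (r ^ 2 * Real.exp (-(2 * β * (1 - ε/2)) * r)) := by nlinarith
    _ ≤ Ca ^ 2 * (r ^ 2 * Real.exp (-c * r)) := by
        nlinarith [mul_le_mul_of_nonneg_left hexple (by positivity : (0:ℝ) ≤ Ca^2 * r^2)]
    _ = Ca ^ 2 * Real.exp (-c * r) * r ^ 2 := by ring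

lemma boundG (α γ c ε Cg r : ℝ) (hr1 : 1 ≤ r)
    (hε0 : 0 < ε) (hε1 : ε < 1) (hγα : γ ≤ 2 * α)
    (hc : c = γ * (1 - ε / 2)) (g : ℝ → ℝ)
    (hb : ‖g r‖ ≤ Cg * ‖Real.exp (-α * (1 - ε/2) * r)‖) :
    g r ^ 2 / 2 ≤ Cg ^ 2 * Real.exp (-c * r) := by
  have hr0 : (0:ℝ) < r := by linarith
  have hb' : |g r| ≤ Cg * Real.exp (-α * (1 - ε/2) * r) := by
    rwa [Real.norm_eq_abs, Real.norm_eq_abs,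
      abs_of_nonneg (Real.exp_pos (-α * (1 - ε/2) * r)).le] at hb
  have hexp2 : Real.exp (-α * (1 - ε/2) * r) * Real.exp (-α * (1 - ε/2) * r)
      = Real.exp (-(2 * α * (1 - ε/2)) * r) := by
    rw [← Real.exp_add]; ring_nf
  have hsq : g r ^ 2 ≤ Cg ^ 2 * Real.exp (-(2 * α * (1 - ε/2)) * r) := by
    calc g r ^ 2 = |g r| * |g r| := by rw [← abs_mul, abs_mul_self]; ring
      _ ≤ (Cg * Real.exp (-α * (1 - ε/2) * r)) * (Cg * Real.exp (-α * (1 - ε/2) * r)) :=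
          mul_self_le_mul_self (abs_nonneg _) hb'
      _ = Cg ^ 2 * (Real.exp (-α * (1 - ε/2) * r) * Real.exp (-α * (1 - ε/2) * r)) := by ring
      _ = Cg ^ 2 * Real.exp (-(2 * α * (1 - ε/2)) * r) := by rw [hexp2]
  have hexple : Real.exp (-(2 * α * (1 - ε/2)) * r) ≤ Real.exp (-c * r) := by
    apply Real.exp_le_exp.2
    rw [hc]
    nlinarith [mul_le_mul_of_nonneg_right
      (mul_le_mul_of_nonneg_right hγα (by linarith : (0:ℝ) ≤ 1 - ε/2)) hr0.le]
  nlinarith [mul_le_mul_of_nonneg_left hexple (sq_nonneg Cg),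
    Real.exp_pos (-(2 * α * (1 - ε/2)) * r), Real.exp_pos (-c*r), sq_nonneg (g r)]

set_option maxHeartbeats 1000000 in
lemma keyineq (k C C₁ Ca Cg X E F A G D1 D2 r δ : ℝ)
    (hk0 : 0 < k) (hk1 : k < 1) (hδ : δ = (1 - k^2)/2)
    (hC1 : 1 ≤ C) (hC₁def : C₁ = Ca^2 + Cg^2)
    (hr1 : 1 ≤ r) (hE : 0 < E) (hX : 0 < X)
    (hF0 : 0 < F) (hF1 : F < 1) (hFδ : 1 - δ < F)
    (hA : A^2 / r^2 ≤ Ca^2 * (X * E))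
    (hG : G^2 / 2 ≤ Cg^2 * (X * E))
    (hIV : C₁ * (r * X) ≤ k)
    (hode : D2 + (1/r) * D1 - (A^2 / r^2) * F - (1/2) * (F^2 + G^2 - 1) * F = 0) :
    0 ≤ (-(D2) - k^2 * C * E) + (1/r) * (-(D1) + k * C * E) - k^2 * (1 - F - C * E) := by
  have hr0 : (0:ℝ) < r := by linarith
  have hk2 : k^2 ≤ 1 := by nlinarith
  have ht : (1 + k^2)/2 ≤ F := by rw [hδ] at hFδ; linarith
  have haux : k^2 ≤ (1/2) * (1 + F) * F := by
    nlinarith [mul_le_mul ht ht (by positivity) hF0.le,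
      mul_nonneg (by linarith : (0:ℝ) ≤ 1 - k^2) (by linarith : (0:ℝ) ≤ 3 - k^2)]
  have key3 : 0 ≤ (1/2) * (1 - F^2) * F - k^2 * (1 - F) := by
    have h := mul_nonneg (by linarith : (0:ℝ) ≤ 1 - F)
      (by linarith : 0 ≤ (1/2) * (1 + F) * F - k^2)
    nlinarith [h]
  have hAnn : 0 ≤ A^2 / r^2 := by positivity
  have hGnn : 0 ≤ G^2 := sq_nonneg G
  have key1 : (A^2 / r^2) * F + (1/2) * G^2 * F ≤ C₁ * (X * E) := by
    have h1 : (A^2 / r^2) * F ≤ A^2 / r^2 := by nlinarith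
    have h2 : (1/2) * G^2 * F ≤ G^2 / 2 := by nlinarith
    rw [hC₁def]; nlinarith
  have key2 : C₁ * (X * E) ≤ k * C * E * (1/r) := by
    have hCE : (0:ℝ) < C * E / r := by positivity
    have h3 := mul_le_mul_of_nonneg_right hIV hCE.le
    have h4 : C₁ * (r * X) * (C * E / r) = C₁ * (X * E) * C := by
      field_simp
    rw [h4] at h3
    have hC₁nn : 0 ≤ C₁ * (X * E) := by rw [hC₁def]; positivity
    have h5 : C₁ * (X * E) ≤ C₁ * (X * E) * C := le_mul_of_one_le_right hC₁nn hC1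
    have h6 : k * (C * E / r) = k * C * E * (1/r) := by ring
    rw [h6] at h3
    linarith
  linarith [key1, key2, key3, hode]

set_option maxHeartbeats 1000000 in
/-- Decay of the Higgs profile at infinity: with `a = O(r^{1/2} e^{-β(1-ε)r})`
and `g = O(e^{-α(1-ε)r})` for all `ε ∈ (0,1)`, a C² solution `0 < f < 1` of
`f'' + (1/r) f' - (a²/r²) f - (1/2)(f² + g² - 1) f = 0` with `f → 1` satisfies
`1 - f(r) = O(exp(-γ(1-ε) r))` for every `ε ∈ (0,1)`, where
`γ = min{1, 2α, 2β}`. -/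
theorem stmt13 (α β : ℝ) (hα : α > 0) (hβ : β > 0) (a g f : ℝ → ℝ)
    (ha : ContinuousOn a (Ici 0)) (hg : ContinuousOn g (Ici 0))
    (habd : ∀ r > (0:ℝ), 0 < a r ∧ a r < 1)
    (hadec : ∀ ε ∈ Ioo (0:ℝ) 1,
      a =O[atTop] fun r => Real.sqrt r * Real.exp (-β * (1 - ε) * r))
    (hgdec : ∀ ε ∈ Ioo (0:ℝ) 1,
      g =O[atTop] fun r => Real.exp (-α * (1 - ε) * r))
    (hf2 : ContDiffOn ℝ 2 f (Ioi 0))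
    (hfbd : ∀ r ∈ Ioi (0:ℝ), 0 < f r ∧ f r < 1)
    (hode : ∀ r ∈ Ioi (0:ℝ),
      deriv (deriv f) r + (1 / r) * deriv f r - ((a r) ^ 2 / r ^ 2) * f r
        - (1 / 2) * ((f r) ^ 2 + (g r) ^ 2 - 1) * f r = 0)
    (hflim : Tendsto f atTop (nhds 1)) :
    ∀ ε ∈ Ioo (0:ℝ) 1,
      (fun r => 1 - f r) =O[atTop]
        fun r => Real.exp (-(min 1 (min (2 * α) (2 * β))) * (1 - ε) * r) := by
  intro ε hε
  obtain ⟨hε0, hε1⟩ := hε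
  set γ := min 1 (min (2 * α) (2 * β)) with hγdef
  have hγpos : 0 < γ := lt_min one_pos (lt_min (by linarith) (by linarith))
  have hγ1 : γ ≤ 1 := min_le_left _ _
  have hγα : γ ≤ 2 * α := le_trans (min_le_right _ _) (min_le_left _ _)
  have hγβ : γ ≤ 2 * β := le_trans (min_le_right _ _) (min_le_right _ _)
  set k := γ * (1 - ε) with hkdef
  have hkpos : 0 < k := mul_pos hγpos (by linarith)
  have hk1 : k < 1 := by nlinarith
  set c := γ * (1 - ε / 2) with hcdef
  have hck : k < c := by nlinarith
  set δ := (1 - k ^ 2) / 2 with hδdef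
  have hδpos : 0 < δ := by nlinarith
  -- derivative machinery for f
  have hfd : ∀ r ∈ Ioi (0:ℝ), HasDerivAt f (deriv f r) r := fun r hr =>
    ((hf2.differentiableOn (by norm_num)).differentiableAt
      (isOpen_Ioi.mem_nhds hr)).hasDerivAt
  have hf1 : ContDiffOn ℝ 1 (deriv f) (Ioi 0) :=
    hf2.deriv_of_isOpen isOpen_Ioi (by norm_num)
  have hfd2 : ∀ r ∈ Ioi (0:ℝ), HasDerivAt (deriv f) (deriv (deriv f) r) r := fun r hr =>
    ((hf1.differentiableOn (by norm_num)).differentiableAt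
      (isOpen_Ioi.mem_nhds hr)).hasDerivAt
  have hfc : ContinuousOn f (Ioi 0) := hf2.continuousOn
  -- big-O constants at ε/2
  have hε2 : ε / 2 ∈ Ioo (0:ℝ) 1 := ⟨by linarith, by linarith⟩
  obtain ⟨Ca, hCa0, hCa⟩ := (hadec (ε/2) hε2).exists_pos
  obtain ⟨Cg, hCg0, hCg⟩ := (hgdec (ε/2) hε2).exists_pos
  set C₁ := Ca ^ 2 + Cg ^ 2 with hC₁def
  -- tendsto condition
  have hb : 0 < c - k := by linarith
  have h1 : Tendsto (fun x : ℝ => x * Real.exp (-x)) atTop (nhds 0) := by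
    simpa using Real.tendsto_pow_mul_exp_neg_atTop_nhds_zero 1
  have h2 : Tendsto (fun r : ℝ => (c - k) * r) atTop atTop :=
    tendsto_id.const_mul_atTop hb
  have h4 : Tendsto (fun r : ℝ => C₁ * (r * Real.exp (-(c - k) * r))) atTop (nhds 0) := by
    have heq : (fun r : ℝ => C₁ * (r * Real.exp (-(c - k) * r)))
        = fun r => (C₁ / (c - k)) * (((c - k) * r) * Real.exp (-((c - k) * r))) := by
      funext r
      field_simp
    rw [heq]
    simpa using ((h1.comp h2).const_mul (C₁ / (c - k)))
  have h5 : ∀ᶠ r in atTop, C₁ * (r * Real.exp (-(c - k) * r)) ≤ k :=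
    h4.eventually (eventually_le_nhds hkpos)
  have h6 : ∀ᶠ r in atTop, 1 - δ < f r :=
    hflim.eventually (eventually_gt_nhds (by linarith))
  -- collect eventual conditions and choose R
  obtain ⟨R₀, hR₀⟩ := eventually_atTop.1
    ((h6.and (hCa.bound.and (hCg.bound.and h5))).and (eventually_ge_atTop 1))
  set R := max R₀ 1 with hRdef
  have hR1 : (1:ℝ) ≤ R := le_max_right _ _
  have hR0 : (0:ℝ) < R := by linarith
  have hRcond : ∀ r, R ≤ r → ((1 - δ < f r) ∧
      (‖a r‖ ≤ Ca * ‖Real.sqrt r * Real.exp (-β * (1 - ε/2) * r)‖ ∧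
        (‖g r‖ ≤ Cg * ‖Real.exp (-α * (1 - ε/2) * r)‖ ∧
          C₁ * (r * Real.exp (-(c - k) * r)) ≤ k))) ∧ 1 ≤ r := by
    intro r hr
    exact hR₀ r (le_trans (le_max_left _ _) hr)
  -- the constant C and comparison function
  have hfR := hfbd R hR0
  set C := (1 - f R) * Real.exp (k * R) + 1 with hCdef
  have hC1 : 1 ≤ C := by
    have h := hfR.2
    nlinarith [Real.exp_pos (k * R)]
  set w : ℝ → ℝ := fun r => 1 - f r - C * Real.exp (-k * r) with hw
  -- derivatives of w
  have hexpd : ∀ r : ℝ, HasDerivAt (fun x => Real.exp (-k * x))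
      (Real.exp (-k * r) * (-k)) r := by
    intro r
    have h := ((hasDerivAt_id r).const_mul (-k)).exp
    convert h using 1
    all_goals simp
  have hwd : ∀ r ∈ Ioi (0:ℝ),
      HasDerivAt w (-(deriv f r) + k * C * Real.exp (-k * r)) r := by
    intro r hr
    have h := ((hasDerivAt_const r (1:ℝ)).sub (hfd r hr)).sub ((hexpd r).const_mul C)
    convert h using 1
    · rfl
    · rfl
    · funext x; rfl
    · ring
  have hwderiv : ∀ r ∈ Ioi (0:ℝ),
      deriv w r = -(deriv f r) + k * C * Real.exp (-k * r) := fun r hr =>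
    (hwd r hr).deriv
  have hwd2 : ∀ r ∈ Ioi (0:ℝ),
      HasDerivAt (deriv w)
        (-(deriv (deriv f) r) - k ^ 2 * C * Real.exp (-k * r)) r := by
    intro r hr
    have h := ((hfd2 r hr).neg).add ((hexpd r).const_mul (k * C))
    have h' : HasDerivAt (fun x => -(deriv f x) + k * C * Real.exp (-k * x))
        (-(deriv (deriv f) r) - k ^ 2 * C * Real.exp (-k * r)) r := by
      convert h using 1
      · rfl
      · rfl
      · funext x; rfl
      · ring
    apply h'.congr_of_eventuallyEq
    filter_upwards [isOpen_Ioi.mem_nhds hr] with x hx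
    exact hwderiv x hx
  have hsub : Ici R ⊆ Ioi (0:ℝ) := fun x hx => lt_of_lt_of_le hR0 hx
  -- hypotheses of the maximum principle
  have hcw : ContinuousOn w (Ici R) := by
    rw [hw]
    exact (continuousOn_const.sub (hfc.mono hsub)).sub
      (Continuous.continuousOn (continuous_const.mul
        (Real.continuous_exp.comp (continuous_const.mul continuous_id))))
  have hmp2 : ∀ r ∈ Ioi R, HasDerivAt (deriv w) (deriv (deriv w) r) r := by
    intro r hr
    have hr0 : r ∈ Ioi (0:ℝ) := lt_trans hR0 hr
    have h := hwd2 r hr0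
    rw [h.deriv]
    exact h
  have hL : ∀ r ∈ Ioi R, 0 ≤ deriv (deriv w) r + (1/r) * deriv w r - k^2 * w r := by
    intro r hr
    have hrR : R ≤ r := le_of_lt hr
    have hr0 : r ∈ Ioi (0:ℝ) := lt_trans hR0 hr
    obtain ⟨⟨hfδ, hba, hbg, hIV⟩, hr1⟩ := hRcond r hrR
    have hXE : Real.exp (-c * r)
        = Real.exp (-(c - k) * r) * Real.exp (-k * r) := by
      rw [← Real.exp_add]; ring_nf
    have hA : a r ^ 2 / r ^ 2 ≤ Ca ^ 2 * (Real.exp (-(c - k) * r) * Real.exp (-k * r)) := by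
      rw [← hXE]
      exact boundA β γ c ε Ca r hr1 hε0 hε1 hγβ hcdef a hba
    have hG : g r ^ 2 / 2 ≤ Cg ^ 2 * (Real.exp (-(c - k) * r) * Real.exp (-k * r)) := by
      rw [← hXE]
      exact boundG α γ c ε Cg r hr1 hε0 hε1 hγα hcdef g hbg
    have hfr := hfbd r hr0
    rw [(hwd2 r hr0).deriv, hwderiv r hr0,
      show w r = 1 - f r - C * Real.exp (-k * r) from rfl]
    exact keyineq k C C₁ Ca Cg (Real.exp (-(c - k) * r)) (Real.exp (-k * r))
      (f r) (a r) (g r) (deriv f r) (deriv (deriv f) r) r δ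
      hkpos hk1 hδdef hC1 hC₁def hr1 (Real.exp_pos _) (Real.exp_pos _)
      hfr.1 hfr.2 hfδ hA hG hIV (hode r hr0)
  have hwR : w R ≤ 0 := by
    have hee : Real.exp (k * R) * Real.exp (-k * R) = 1 := by
      rw [← Real.exp_add, show k * R + -k * R = 0 by ring, Real.exp_zero]
    have hexpand : ((1 - f R) * Real.exp (k * R) + 1) * Real.exp (-k * R)
        = (1 - f R) + Real.exp (-k * R) := by
      rw [add_mul, mul_assoc, hee, mul_one, one_mul]
    show 1 - f R - C * Real.exp (-k * R) ≤ 0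
    rw [hCdef, hexpand]
    linarith [Real.exp_pos (-k * R)]
  have hwlim : Tendsto w atTop (nhds 0) := by
    have hkr : Tendsto (fun r : ℝ => -k * r) atTop atBot := by
      have h := tendsto_neg_atTop_atBot.comp (tendsto_id.const_mul_atTop hkpos)
      have heq : (fun r : ℝ => -k * r) = (Neg.neg ∘ fun x : ℝ => k * id x) := by
        funext r; simp [Function.comp, neg_mul]
      rw [heq]; exact h
    have hexplim : Tendsto (fun r : ℝ => C * Real.exp (-k * r)) atTop (nhds 0) := by
      have h := (Real.tendsto_exp_atBot.comp hkr).const_mul C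
      simpa using h
    have h := ((tendsto_const_nhds (x := (1:ℝ))).sub hflim).sub hexplim
    rw [hw]
    simpa using h
  have hfinal := maxprin w k R hkpos hcw hmp2 hL hwR hwlim
  -- conclude the big-O bound
  rw [isBigO_iff]
  refine ⟨C, ?_⟩
  filter_upwards [eventually_ge_atTop R] with r hr
  have hr0 : r ∈ Ioi (0:ℝ) := lt_of_lt_of_le hR0 hr
  have hfr := hfbd r hr0
  have hw0 : 1 - f r - C * Real.exp (-k * r) ≤ 0 := hfinal r hr
  have hexpeq : Real.exp (-γ * (1 - ε) * r) = Real.exp (-k * r) := by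
    rw [hkdef]; ring_nf
  rw [Real.norm_eq_abs, Real.norm_eq_abs, abs_of_nonneg (by linarith [hfr.2]),
    abs_of_nonneg (Real.exp_pos _).le, hexpeq]
  linarith
end
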